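/- arXiv:1712.02891 — 9 statements merged into one kernel-verified Lean document; each statement's English description precedes it below -/
import Mathlib

section
/- Let f be a map from the edge set of a 2-connected graph G onto the edge set of a graph G' (with no isolated vertices) such that the image of every circuit of G is a circuit of G'. Then G' is 2-connected. -/
/-- A *circuit* of a simple graph is the edge set of a cycle. -/
def SimpleGraph.IsCircuit {V : Type*} (G : SimpleGraph V) (C : Set (Sym2 V)) : Prop :=
  ∃ (v : V) (w : G.Walk v v), w.IsCycle ∧ C = {e | e ∈ w.edges}

/-- A graph is 2-connected (in the edge sense) if any two distinct edges lie on a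
common circuit. -/
def TwoConnectedE {V : Type*} (G : SimpleGraph V) : Prop :=
  ∀ e₁ ∈ G.edgeSet, ∀ e₂ ∈ G.edgeSet, e₁ ≠ e₂ →
    ∃ C, G.IsCircuit C ∧ e₁ ∈ C ∧ e₂ ∈ C

/-- If `f` maps the edge set of a 2-connected graph `G` onto the edge
set of a graph `G'` with no isolated vertices, taking circuits of `G` onto circuits of
`G'`, then `G'` is 2-connected. -/
theorem stmt_2 {V V' : Type*} (G : SimpleGraph V) (G' : SimpleGraph V')
    (f : Sym2 V → Sym2 V')
    (hmap : Set.MapsTo f G.edgeSet G'.edgeSet)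
    (hsurj : Set.SurjOn f G.edgeSet G'.edgeSet)
    (hcirc : ∀ C, G.IsCircuit C → G'.IsCircuit (f '' C))
    (hiso : ∀ v : V', ∃ w : V', G'.Adj v w)
    (h2 : TwoConnectedE G) :
    TwoConnectedE G' := by
  intro e₁' he₁' e₂' he₂' hne
  obtain ⟨e₁, he₁, rfl⟩ := hsurj he₁'
  obtain ⟨e₂, he₂, rfl⟩ := hsurj he₂'
  obtain ⟨C, hC, h1, h2⟩ := h2 e₁ he₁ e₂ he₂ (fun h => hne (by rw [h]))
  exact ⟨f '' C, hcirc C hC, ⟨e₁, h1, rfl⟩, ⟨e₂, h2, rfl⟩⟩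
end

section
/- Let f: G → G' be a circuit surjection where G is a finite 3-connected graph. Then G' is not a circuit, i.e., the edge set of G' does not form a single cycle. -/
/-- A graph is 3-connected if it has at least 4 vertices and remains connected
after deleting any two vertices. -/
def ThreeConnected {V : Type*} (G : SimpleGraph V) : Prop :=
  (∃ a b c d : V, a ≠ b ∧ a ≠ c ∧ a ≠ d ∧ b ≠ c ∧ b ≠ d ∧ c ≠ d) ∧
    ∀ u v : V, (G.induce {x : V | x ≠ u ∧ x ≠ v}).Connected

open SimpleGraph Finset

namespace CircuitAux

variable {V : Type*} {G : SimpleGraph V}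


variable {V : Type*} {G : SimpleGraph V}

/-- At the start vertex of a cycle there are exactly two neighbors along the cycle. -/
lemma cycle_start_edges {u : V} {c : G.Walk u u} (hc : c.IsCycle) :
    ∃ x y, x ≠ y ∧ s(u, x) ∈ c.edges ∧ s(u, y) ∈ c.edges ∧
      ∀ z, s(u, z) ∈ c.edges → z = x ∨ z = y := by
  cases c with
  | nil => exact absurd hc SimpleGraph.Walk.IsCycle.not_of_nil
  | @cons _ b _ h q =>
    rw [SimpleGraph.Walk.cons_isCycle_iff] at hc
    obtain ⟨hq, hub⟩ := hc
    have hbu : b ≠ u := fun h' => (G.ne_of_adj h) h'.symm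
    have hqnil : ¬ q.reverse.Nil := SimpleGraph.Walk.not_nil_of_ne (fun h' => hbu h'.symm)
    obtain ⟨x, hux, r, hqr⟩ := SimpleGraph.Walk.not_nil_iff.mp hqnil
    have hxq : s(u, x) ∈ q.edges := by
      rw [← List.mem_reverse, ← SimpleGraph.Walk.edges_reverse, hqr]
      simp
    have hxb : x ≠ b := by
      intro h'
      subst h'
      exact hub hxq
    refine ⟨b, x, fun h' => hxb h'.symm, by simp, by simp [hxq], ?_⟩
    intro z hz
    rw [SimpleGraph.Walk.edges_cons, List.mem_cons] at hz
    rcases hz with hz | hz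
    · left
      exact (Sym2.congr_right.mp hz)
    · right
      have hz' : s(u, z) ∈ q.reverse.edges := by
        rw [SimpleGraph.Walk.edges_reverse, List.mem_reverse]; exact hz
      rw [hqr, SimpleGraph.Walk.edges_cons, List.mem_cons] at hz'
      rcases hz' with hz' | hz'
      · exact Sym2.congr_right.mp hz'
      · exfalso
        have hur : u ∈ r.support := SimpleGraph.Walk.fst_mem_support_of_mem_edges r hz'
        have hp' : q.reverse.IsPath := hq.reverse
        rw [hqr, SimpleGraph.Walk.cons_isPath_iff] at hp'
        exact hp'.2 hur

/-- Every support vertex of a cycle has exactly two neighbors along it. -/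
lemma cycle_two_edges {v u : V} {w : G.Walk v v} (hw : w.IsCycle) (hu : u ∈ w.support) :
    ∃ x y, x ≠ y ∧ s(u, x) ∈ w.edges ∧ s(u, y) ∈ w.edges ∧
      ∀ z, s(u, z) ∈ w.edges → z = x ∨ z = y := by
  classical
  obtain ⟨x, y, hxy, hx, hy, huniq⟩ := cycle_start_edges (hw.rotate hu)
  have he : ∀ {e : Sym2 V}, e ∈ (w.rotate u hu).edges ↔ e ∈ w.edges :=
    fun {e} => (w.rotate_edges u hu).mem_iff
  exact ⟨x, y, hxy, he.mp hx, he.mp hy, fun z hz => huniq z (he.mpr hz)⟩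

/-- If a cycle's edges are contained in another cycle's edges, the edge sets agree. -/
lemma cycle_edges_eq_of_subset {a v : V}
    {wc : G.Walk a a} {w' : G.Walk v v} (hwc : wc.IsCycle) (hw' : w'.IsCycle)
    (hsub : ∀ e ∈ wc.edges, e ∈ w'.edges) : ∀ e ∈ w'.edges, e ∈ wc.edges := by
  classical
  have key : ∀ u, u ∈ wc.support → ∀ z, s(u, z) ∈ w'.edges → s(u, z) ∈ wc.edges := by
    intro u hu z hz
    obtain ⟨x, y, hxy, hx, hy, _⟩ := cycle_two_edges hwc hu
    have hu' : u ∈ w'.support := w'.fst_mem_support_of_mem_edges (hsub _ hx)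
    obtain ⟨X, Y, hXY, hX, hY, hU⟩ := cycle_two_edges hw' hu'
    have hx' := hU x (hsub _ hx)
    have hy' := hU y (hsub _ hy)
    have hz' := hU z hz
    have hzxy : z = x ∨ z = y := by
      rcases hx' with h1 | h1 <;> rcases hy' with h2 | h2 <;>
        rcases hz' with h3 | h3 <;> simp_all
    rcases hzxy with rfl | rfl
    · exact hx
    · exact hy
  have prop : ∀ (b c : V) (p : G.Walk b c), (∀ e ∈ p.edges, e ∈ w'.edges) →
      b ∈ wc.support → ∀ e ∈ p.edges, e ∈ wc.edges := by
    intro b c p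
    induction p with
    | nil => simp
    | @cons b m c h q ih =>
      intro hall hb e he
      have h1 : s(b, m) ∈ wc.edges := key b hb m (hall _ (by simp))
      have hm : m ∈ wc.support := wc.snd_mem_support_of_mem_edges h1
      rw [SimpleGraph.Walk.edges_cons, List.mem_cons] at he
      rcases he with rfl | he
      · exact h1
      · exact ih (fun e' he' => hall _ (by simp [he'])) hm e he
  have hlen := hwc.three_le_length
  have hne : wc.edges ≠ [] := by
    intro h
    have h0 : wc.edges.length = wc.length := SimpleGraph.Walk.length_edges wc
    rw [h] at h0
    simp at h0
    omega
  obtain ⟨e0, he0⟩ := List.exists_mem_of_ne_nil _ hne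
  revert he0
  induction e0 using Sym2.ind with
  | _ p0 q0 =>
    intro he0
    have hp : p0 ∈ wc.support := wc.fst_mem_support_of_mem_edges he0
    have hpw : p0 ∈ w'.support := w'.fst_mem_support_of_mem_edges (hsub _ he0)
    intro e he
    have he2 : e ∈ (w'.rotate p0 hpw).edges := (w'.rotate_edges p0 hpw).mem_iff.mpr he
    exact prop _ _ (w'.rotate p0 hpw) (fun e' he' => (w'.rotate_edges p0 hpw).mem_iff.mp he') hp e he2




lemma sup_edge_sdiff_edge {H : SimpleGraph V} {u v : V} (h : ¬ H.Adj u v) :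
    (H ⊔ edge u v) \ edge u v = H := by
  ext a b
  simp only [sdiff_adj, sup_adj]
  constructor
  · rintro ⟨hab | hab, hne⟩
    · exact hab
    · exact absurd hab hne
  · intro hab
    refine ⟨Or.inl hab, fun he => ?_⟩
    rw [edge_adj] at he
    rcases he.1 with ⟨rfl, rfl⟩ | ⟨rfl, rfl⟩
    · exact h hab
    · exact h hab.symm

lemma acyclic_ncard_lt [Fintype V] [Nonempty V] {H : SimpleGraph V} (hH : H.IsAcyclic) :
    H.edgeSet.ncard + 1 ≤ Fintype.card V := by
  classical
  suffices h : ∀ (k : ℕ) (H : SimpleGraph V), H.IsAcyclic →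
      (Fintype.card V).choose 2 ≤ H.edgeSet.ncard + k → H.edgeSet.ncard + 1 ≤ Fintype.card V by
    exact h ((Fintype.card V).choose 2) H hH (Nat.le_add_left _ _)
  intro k
  induction k with
  | zero =>
    intro H hH hle
    by_cases hconn : H.Connected
    · have ht : H.IsTree := ⟨hconn, hH⟩
      have hc := ht.card_edgeFinset
      have h2 : H.edgeSet.ncard = #H.edgeFinset := Set.ncard_eq_toFinset_card' _
      omega
    · exfalso
      have hne : ¬ H.Preconnected := fun h => hconn ⟨h⟩
      rw [Preconnected] at hne
      push_neg at hne
      obtain ⟨u, v, huv⟩ := hne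
      have hneq : u ≠ v := fun h => huv (h ▸ Reachable.refl u)
      have hnadj : ¬ H.Adj u v := fun h => huv h.reachable
      have hlt : H.edgeSet.ncard < (Fintype.card V).choose 2 := by
        have hsub : H.edgeSet ⊆ (⊤ : SimpleGraph V).edgeSet := edgeSet_mono le_top
        have hne2 : H.edgeSet ≠ (⊤ : SimpleGraph V).edgeSet := by
          intro h
          have : s(u, v) ∈ H.edgeSet := by
            rw [h, mem_edgeSet, top_adj]; exact hneq
          exact hnadj this
        have hssub : H.edgeSet ⊂ (⊤ : SimpleGraph V).edgeSet := ⟨hsub, fun h => hne2 (hsub.antisymm h)⟩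
        have := Set.ncard_lt_ncard hssub ((⊤ : SimpleGraph V).edgeSet.toFinite)
        calc H.edgeSet.ncard < (⊤ : SimpleGraph V).edgeSet.ncard := this
          _ = (Fintype.card V).choose 2 := by
              rw [Set.ncard_eq_toFinset_card' _]
              exact card_edgeFinset_top_eq_card_choose_two
      omega
  | succ k ih =>
    intro H hH hle
    by_cases hconn : H.Connected
    · have ht : H.IsTree := ⟨hconn, hH⟩
      have hc := ht.card_edgeFinset
      have h2 : H.edgeSet.ncard = #H.edgeFinset := Set.ncard_eq_toFinset_card' _
      omega
    · have hne : ¬ H.Preconnected := fun h => hconn ⟨h⟩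
      rw [Preconnected] at hne
      push_neg at hne
      obtain ⟨u, v, huv⟩ := hne
      have hneq : u ≠ v := fun h => huv (h ▸ Reachable.refl u)
      have hnadj : ¬ H.Adj u v := fun h => huv h.reachable
      have hacyc' : (H ⊔ edge u v).IsAcyclic := by
        intro a c hc
        by_cases he : s(u, v) ∈ c.edges
        · have hreach := (adj_and_reachable_delete_edges_iff_exists_cycle.mpr ⟨a, c, hc, he⟩).2
          have heq : (H ⊔ edge u v).deleteEdges {s(u, v)} = H := sup_edge_sdiff_edge hnadj
          rw [heq] at hreach
          exact huv hreach
        · have hsub : ∀ e ∈ c.edges, e ∈ H.edgeSet := by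
            intro e hec
            have := c.edges_subset_edgeSet hec
            rw [edgeSet_sup] at this
            rcases this with h1 | h1
            · exact h1
            · exfalso
              rw [edge] at h1
              rw [edgeSet_fromEdgeSet] at h1
              have : e = s(u, v) := h1.1
              exact he (this ▸ hec)
          exact hH (c.transfer H hsub) (hc.transfer hsub)
      have hcard : (H ⊔ edge u v).edgeSet.ncard = H.edgeSet.ncard + 1 := by
        rw [Set.ncard_eq_toFinset_card' _, Set.ncard_eq_toFinset_card' _]
        exact card_edgeFinset_sup_edge (G := H) hnadj hneq
      have := ih (H ⊔ edge u v) hacyc' (by omega)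
      omega




lemma no_circuit_card_lt [Fintype V] [Nonempty V] {G : SimpleGraph V} (S : Finset (Sym2 V))
    (hS : ↑S ⊆ G.edgeSet) (hno : ∀ C, G.IsCircuit C → ¬ C ⊆ ↑S) :
    S.card + 1 ≤ Fintype.card V := by
  classical
  have hle : fromEdgeSet (↑S : Set (Sym2 V)) ≤ G :=
    (fromEdgeSet_mono hS).trans_eq (fromEdgeSet_edgeSet G)
  have hH : (fromEdgeSet (↑S : Set (Sym2 V))).IsAcyclic := by
    intro a c hc
    have hc' : (c.mapLe hle).IsCycle := hc.mapLe _
    refine hno _ ⟨a, c.mapLe hle, hc', rfl⟩ ?_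
    intro e he
    have he1 : e ∈ c.edges := by
      simp only [Set.mem_setOf_eq, Walk.mapLe, Walk.edges_map, List.mem_map] at he
      obtain ⟨e0, he0, rfl⟩ := he
      simpa using he0
    have he2 := c.edges_subset_edgeSet he1
    rw [edgeSet_fromEdgeSet] at he2
    exact he2.1
  have hb := acyclic_ncard_lt hH
  have heq : (fromEdgeSet (↑S : Set (Sym2 V))).edgeSet = ↑S := by
    rw [edgeSet_fromEdgeSet]
    ext e
    simp only [Set.mem_diff, Set.mem_setOf_eq, Finset.coe_sort_coe, and_iff_left_iff_imp]
    intro he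
    exact G.not_isDiag_of_mem_edgeSet (hS he)
  rw [heq, Set.ncard_coe_finset] at hb
  exact hb

lemma three_nbrs [Fintype V] {G : SimpleGraph V} (h3 : ThreeConnected G) (v : V) :
    ∃ x y z : V, x ≠ y ∧ x ≠ z ∧ y ≠ z ∧ G.Adj v x ∧ G.Adj v y ∧ G.Adj v z := by
  classical
  obtain ⟨⟨a, b, c, d, hab, hac, had, hbc, hbd, hcd⟩, hconn⟩ := h3
  have habcd : ({a, b, c, d} : Finset V).card = 4 := by
    rw [card_insert_of_notMem (by simp [hab, hac, had]),
      card_insert_of_notMem (by simp [hbc, hbd]),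
      card_insert_of_notMem (by simp [hcd]), card_singleton]
  have hcard4 : 4 ≤ Fintype.card V := by
    rw [← habcd, ← Finset.card_univ]
    exact card_le_univ _
  set N := G.neighborFinset v with hN
  by_cases h : 2 < N.card
  · obtain ⟨x, y, z, hx, hy, hz, hxy, hxz, hyz⟩ := Finset.two_lt_card_iff.mp h
    rw [hN, mem_neighborFinset] at hx hy hz
    exact ⟨x, y, z, hxy, hxz, hyz, hx, hy, hz⟩
  · exfalso
    push_neg at h
    have hNsub : N ⊆ Finset.univ.erase v := by
      intro x hx
      rw [hN, mem_neighborFinset] at hx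
      exact mem_erase.mpr ⟨(G.ne_of_adj hx).symm, mem_univ x⟩
    have herase : 2 ≤ (Finset.univ.erase v).card := by
      rw [card_erase_of_mem (mem_univ v), Finset.card_univ]
      omega
    obtain ⟨t, hNt, htsub, ht2⟩ := exists_subsuperset_card_eq hNsub h herase
    obtain ⟨x, y, hxy, rfl⟩ := Finset.card_eq_two.mp ht2
    have hxv : x ≠ v := by
      have := htsub (by simp : x ∈ ({x, y} : Finset V))
      exact (mem_erase.mp this).1
    have hyv : y ≠ v := by
      have := htsub (by simp : y ∈ ({x, y} : Finset V))
      exact (mem_erase.mp this).1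
    have hsd : (({a, b, c, d} : Finset V) \ {x, y, v}).Nonempty := by
      rw [← Finset.card_pos]
      have h1 : ({x, y, v} : Finset V).card ≤ 3 := by
        apply (card_insert_le _ _).trans
        apply Nat.succ_le_succ
        apply (card_insert_le _ _).trans
        simp
      have h2 := Finset.le_card_sdiff ({x, y, v} : Finset V) ({a, b, c, d} : Finset V)
      omega
    obtain ⟨z, hz⟩ := hsd
    rw [mem_sdiff] at hz
    have hzx : z ≠ x := fun h' => hz.2 (by simp [h'])
    have hzy : z ≠ y := fun h' => hz.2 (by simp [h'])
    have hzv : z ≠ v := fun h' => hz.2 (by simp [h'])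
    have hvs : v ∈ {w : V | w ≠ x ∧ w ≠ y} := ⟨fun h' => hxv h'.symm, fun h' => hyv h'.symm⟩
    have hzs : z ∈ {w : V | w ≠ x ∧ w ≠ y} := ⟨hzx, hzy⟩
    obtain ⟨p⟩ := (hconn x y).preconnected ⟨v, hvs⟩ ⟨z, hzs⟩
    have hpnil : ¬ p.Nil := by
      apply Walk.not_nil_of_ne
      intro h'
      exact hzv (congrArg Subtype.val h').symm
    have hadj := Walk.adj_snd hpnil
    have hadj' : G.Adj v ↑(p.getVert 1) := by
      have := hadj
      simp only [comap_adj, Function.Embedding.coe_subtype] at this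
      exact this
    have hmem : (↑(p.getVert 1) : V) ∈ N := by
      rw [hN, mem_neighborFinset]; exact hadj'
    have := hNt hmem
    rcases Finset.mem_insert.mp this with h' | h'
    · exact (p.getVert 1).2.1 h'
    · exact (p.getVert 1).2.2 (Finset.mem_singleton.mp h')

end CircuitAux

open CircuitAux

/-- If `f : G → G'` is a circuit surjection and `G` is a finite
3-connected graph, then the edge set of `G'` is not a single circuit. -/

theorem stmt_4 {V V' : Type*} [Fintype V] (G : SimpleGraph V) (G' : SimpleGraph V')
    (f : Sym2 V → Sym2 V')
    (hmap : Set.MapsTo f G.edgeSet G'.edgeSet)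
    (hsurj : Set.SurjOn f G.edgeSet G'.edgeSet)
    (hcirc : ∀ C, G.IsCircuit C → G'.IsCircuit (f '' C))
    (hiso : ∀ v : V', ∃ w : V', G'.Adj v w)
    (h3 : ThreeConnected G) :
    ¬ G'.IsCircuit G'.edgeSet := by
  classical
  rintro ⟨v, w', hw', hEq⟩
  obtain ⟨a, b, c, d, hab, hac, had, hbc, hbd, hcd⟩ := h3.1
  have hNE : Nonempty V := ⟨a⟩
  have habcd : ({a, b, c, d} : Finset V).card = 4 := by
    rw [card_insert_of_notMem (by simp [hab, hac, had]),
      card_insert_of_notMem (by simp [hbc, hbd]),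
      card_insert_of_notMem (by simp [hcd]), card_singleton]
  have hn4 : 4 ≤ Fintype.card V := by
    rw [← habcd, ← Finset.card_univ]
    exact card_le_univ _
  set n := Fintype.card V with hn
  set L := w'.edges with hL
  have hLnd : L.Nodup := hw'.isCircuit.isTrail.edges_nodup
  have hk3 : 3 ≤ L.length := by
    have := hw'.three_le_length
    rw [hL, SimpleGraph.Walk.length_edges]
    exact this
  set E := G.edgeFinset with hE
  -- per-edge bound
  have key : ∀ e' ∈ L, E.card + 1 ≤ (E.filter (fun e => f e = e')).card + n := by
    intro e' he'
    set B := E.filter (fun e => ¬ f e = e') with hB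
    have hBsub : (↑B : Set (Sym2 V)) ⊆ G.edgeSet := by
      intro e he
      rw [hB] at he
      simp only [coe_filter, Set.mem_setOf_eq, hE, mem_edgeFinset] at he
      exact he.1
    have hBcard : B.card + 1 ≤ n := by
      apply no_circuit_card_lt B hBsub
      intro C hC hCB
      obtain ⟨a', wc, hwc, hCeq⟩ := hcirc C hC
      have hsub : ∀ e ∈ wc.edges, e ∈ w'.edges := by
        intro e he
        have hfC : e ∈ f '' C := by rw [hCeq]; exact he
        obtain ⟨e0, he0C, rfl⟩ := hfC
        have he0 : e0 ∈ G.edgeSet := hBsub (hCB he0C)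
        have := hmap he0
        rw [hEq] at this
        exact this
      have he'wc : e' ∈ wc.edges := cycle_edges_eq_of_subset hwc hw' hsub e' he'
      have : e' ∈ f '' C := by rw [hCeq]; exact he'wc
      obtain ⟨e0, he0C, he0f⟩ := this
      have := hCB he0C
      rw [hB] at this
      simp only [coe_filter, Set.mem_setOf_eq] at this
      exact this.2 he0f
    have hsplit : (E.filter (fun e => f e = e')).card + B.card = E.card := by
      rw [hB]
      exact card_filter_add_card_filter_not _
    omega
  -- the fibers partition E
  have hsum : ∑ e' ∈ L.toFinset, (E.filter (fun e => f e = e')).card = E.card := by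
    rw [← Finset.card_biUnion]
    · congr 1
      ext e
      simp only [mem_biUnion, List.mem_toFinset, mem_filter]
      constructor
      · rintro ⟨e', _, he, _⟩
        exact he
      · intro he
        refine ⟨f e, ?_, he, rfl⟩
        have : f e ∈ G'.edgeSet := hmap (by rwa [hE, mem_edgeFinset] at he)
        rw [hEq] at this
        exact this
    · intro x _ y _ hxy
      rw [Function.onFun, Finset.disjoint_left]
      intro e he1 he2
      rw [mem_filter] at he1 he2
      exact hxy (he1.2 ▸ he2.2)
  -- min degree 3
  have hm3 : 3 * n ≤ 2 * E.card := by
    rw [hE, ← sum_degrees_eq_twice_card_edges]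
    calc 3 * n = ∑ _i : V, 3 := by rw [sum_const, Finset.card_univ, smul_eq_mul, mul_comm]
    _ ≤ ∑ i : V, G.degree i := by
        apply sum_le_sum
        intro i _
        obtain ⟨x, y, z, hxy, hxz, hyz, hx, hy, hz⟩ := three_nbrs h3 i
        have hsub : ({x, y, z} : Finset V) ⊆ G.neighborFinset i := by
          intro w hw
          simp only [mem_insert, mem_singleton] at hw
          rw [mem_neighborFinset]
          rcases hw with rfl | rfl | rfl
          · exact hx
          · exact hy
          · exact hz
        have h3c : ({x, y, z} : Finset V).card = 3 := by
          rw [card_insert_of_notMem (by simp [hxy, hxz]),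
            card_insert_of_notMem (by simp [hyz]), card_singleton]
        rw [← h3c, ← card_neighborFinset_eq_degree]
        exact card_le_card hsub
  -- summation bound
  have hfinal : L.length * (E.card + 1) ≤ E.card + L.length * n := by
    have h1 : L.length * (E.card + 1) = ∑ _e' ∈ L.toFinset, (E.card + 1) := by
      rw [sum_const, List.toFinset_card_of_nodup hLnd, smul_eq_mul]
    have h2 : ∑ e' ∈ L.toFinset, ((E.filter (fun e => f e = e')).card + n)
        = E.card + L.length * n := by
      rw [sum_add_distrib, hsum, sum_const, List.toFinset_card_of_nodup hLnd, smul_eq_mul]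
    rw [h1, ← h2]
    exact sum_le_sum (fun e' he' => key e' (List.mem_toFinset.mp he'))
  -- contradiction
  set m := E.card with hm
  set k := L.length with hk
  have h1 : k * m + k ≤ m + k * n := by
    have : k * (m + 1) = k * m + k := by ring
    omega
  have h2 : 3 * n * k ≤ 2 * m * k := Nat.mul_le_mul_right k hm3
  nlinarith [h1, h2, hk3, hn4, Nat.mul_le_mul_right m hk3]
end

section
/- Let G be a 2-connected graph such that every set of odd-degree vertices of any subgraph of G lies on a common circuit. If C is a circuit of G of even length and there exist two distinct vertices of G not on C, then G has a circuit of length greater than |C|. -/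
/-- A graph is 2-connected if it has at least 3 vertices and remains connected after
deleting any single vertex. -/
def TwoConnected {V : Type*} (G : SimpleGraph V) : Prop :=
  (∃ a b c : V, a ≠ b ∧ a ≠ c ∧ b ≠ c) ∧
    ∀ v : V, (G.induce {x : V | x ≠ v}).Connected

open Set SimpleGraph
open scoped symmDiff

section Aux

variable {V : Type*} {G : SimpleGraph V}

private lemma aux_ncard_symmDiff_odd {α : Type*} {A B : Set α} (hA : A.Finite) (hB : B.Finite) :
    Odd (A ∆ B).ncard ↔ (Odd A.ncard ↔ ¬ Odd B.ncard) := by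
  have h1 : (A ∆ B).ncard = (A \ B).ncard + (B \ A).ncard := by
    rw [Set.symmDiff_def]
    exact Set.ncard_union_eq disjoint_sdiff_sdiff hA.diff hB.diff
  have h2 : A.ncard = (A \ B).ncard + (A ∩ B).ncard := by
    rw [← Set.ncard_union_eq disjoint_sdiff_inter hA.diff (hA.inter_of_left _),
      Set.diff_union_inter]
  have h3 : B.ncard = (B \ A).ncard + (A ∩ B).ncard := by
    rw [Set.inter_comm, ← Set.ncard_union_eq disjoint_sdiff_inter hB.diff
      (hB.inter_of_left _), Set.diff_union_inter]
  simp only [Nat.odd_iff] at *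
  omega

private lemma aux_finite_deg {l : List (Sym2 V)} {v : V} : {e | e ∈ l ∧ v ∈ e}.Finite :=
  l.finite_toSet.subset fun _ he => he.1

private lemma aux_path_deg_parity {a b : V} (p : G.Walk a b) (hp : p.IsPath) (hab : a ≠ b)
    (v : V) : Odd {e | e ∈ p.edges ∧ v ∈ e}.ncard ↔ (v = a ∨ v = b) := by
  induction p with
  | nil => exact absurd rfl hab
  | @cons a c b h p ih =>
    rw [Walk.cons_isPath_iff] at hp
    obtain ⟨hp', hanot⟩ := hp
    by_cases hcb : c = b
    · subst hcb
      have hnil : p = Walk.nil := Walk.isPath_iff_eq_nil.mp hp'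
      subst hnil
      simp only [Walk.edges_cons, Walk.edges_nil, List.mem_singleton]
      by_cases hv : v ∈ s(a, c)
      · have : {e | (e = s(a,c)) ∧ v ∈ e} = {s(a,c)} := by
          ext e; simp (config := {contextual := true}) [hv]
        rw [this]
        simp only [Set.ncard_singleton]
        rw [Sym2.mem_iff] at hv
        simp [hv, Nat.odd_iff]
      · have : {e | (e = s(a,c)) ∧ v ∈ e} = ∅ := by
          ext e; simp (config := {contextual := true}) [hv]
        rw [this]
        simp only [Set.ncard_empty]
        rw [Sym2.mem_iff] at hv
        push_neg at hv
        simp [hv.1, hv.2, Nat.odd_iff]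
    · have ihp := ih hp' hcb
      have hnotedge : s(a, c) ∉ p.edges := fun he =>
        hanot (p.fst_mem_support_of_mem_edges he)
      by_cases hv : v ∈ s(a, c)
      · rw [Sym2.mem_iff] at hv
        have hset : {e | e ∈ (Walk.cons h p).edges ∧ v ∈ e}
            = insert s(a,c) {e | e ∈ p.edges ∧ v ∈ e} := by
          ext e
          simp only [Walk.edges_cons, List.mem_cons, Set.mem_insert_iff, Set.mem_setOf_eq]
          constructor
          · rintro ⟨(rfl | he), hve⟩
            · exact Or.inl rfl
            · exact Or.inr ⟨he, hve⟩
          · rintro (rfl | ⟨he, hve⟩)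
            · exact ⟨Or.inl rfl, by rw [Sym2.mem_iff]; exact hv⟩
            · exact ⟨Or.inr he, hve⟩
        rw [hset, Set.ncard_insert_of_notMem (fun hmem => hnotedge hmem.1) aux_finite_deg]
        rcases hv with rfl | hv2
        · have hempty : {e | e ∈ p.edges ∧ v ∈ e} = ∅ := by
            ext e
            simp only [Set.mem_setOf_eq, Set.mem_empty_iff_false, iff_false, not_and]
            intro he hv'
            induction e with
            | h x y =>
              rw [Sym2.mem_iff] at hv'
              rcases hv' with rfl | rfl
              · exact hanot (p.fst_mem_support_of_mem_edges he)
              · exact hanot (p.snd_mem_support_of_mem_edges he)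
          rw [hempty, Set.ncard_empty]
          exact iff_of_true (by decide) (Or.inl rfl)
        · have hcodd : Odd {e | e ∈ p.edges ∧ v ∈ e}.ncard := ihp.mpr (Or.inl hv2)
          have hL : ¬ Odd ({e | e ∈ p.edges ∧ v ∈ e}.ncard + 1) := by
            rw [Nat.odd_iff] at hcodd ⊢; omega
          simp only [hL, false_iff]
          rintro (rfl | rfl)
          · exact h.ne hv2
          · exact hcb hv2.symm
      · have hset : {e | e ∈ (Walk.cons h p).edges ∧ v ∈ e} = {e | e ∈ p.edges ∧ v ∈ e} := by
          ext e
          simp only [Walk.edges_cons, List.mem_cons, Set.mem_setOf_eq]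
          constructor
          · rintro ⟨(rfl | he), hve⟩
            · exact absurd hve hv
            · exact ⟨he, hve⟩
          · rintro ⟨he, hve⟩; exact ⟨Or.inr he, hve⟩
        rw [Sym2.mem_iff] at hv
        push_neg at hv
        rw [hset, ihp]
        constructor
        · rintro (rfl | rfl)
          · exact absurd rfl hv.2
          · exact Or.inr rfl
        · rintro (rfl | rfl)
          · exact absurd rfl hv.1
          · exact Or.inr rfl

/-- T-join existence: for any even-sized vertex set `D` in a connected graph there is an
edge set whose odd-degree vertices are exactly `D`. -/
private lemma aux_tjoin [Fintype V] (hconn : G.Connected) :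
    ∀ (n : ℕ) (D : Set V), D.ncard = n → Even n →
      ∃ S ⊆ G.edgeSet, ∀ v : V, (Odd {e | e ∈ S ∧ v ∈ e}.ncard ↔ v ∈ D) := by
  intro n
  induction n using Nat.strong_induction_on with
  | _ n ih =>
    intro D hcard heven
    rcases Nat.eq_zero_or_pos n with rfl | hpos
    · have hD : D = ∅ := (Set.ncard_eq_zero (Set.toFinite D)).mp hcard
      refine ⟨∅, Set.empty_subset _, fun v => ?_⟩
      have : {e : Sym2 V | e ∈ (∅ : Set (Sym2 V)) ∧ v ∈ e} = ∅ := by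
        ext e; simp
      rw [this, hD]
      simp [Nat.odd_iff]
    · obtain ⟨a, ha⟩ := Set.nonempty_of_ncard_ne_zero (by omega : D.ncard ≠ 0)
      have h2n : 2 ≤ n := by
        rcases heven with ⟨k, rfl⟩; omega
      have hbne : (D \ {a}).Nonempty := by
        apply Set.nonempty_of_ncard_ne_zero
        rw [Set.ncard_diff_singleton_of_mem ha, hcard]
        omega
      obtain ⟨b, hbD, hba⟩ := hbne
      have hab : a ≠ b := fun h => hba (by simp [h.symm])
      have hsub : ({a, b} : Set V) ⊆ D := by
        rintro x (rfl | rfl); exact ha; exact hbD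
      have hD' : (D \ {a, b}).ncard = n - 2 := by
        rw [Set.ncard_diff hsub (Set.toFinite _), Set.ncard_pair hab, hcard]
      have heven' : Even (n - 2) := by
        rcases heven with ⟨k, rfl⟩; exact ⟨k - 1, by omega⟩
      obtain ⟨S', hS'sub, hS'⟩ := ih (n - 2) (by omega) (D \ {a, b}) hD' heven'
      haveI := Classical.decEq V
      obtain ⟨w⟩ := hconn.preconnected a b
      let p := w.toPath
      have hp : (p : G.Walk a b).IsPath := p.2
      refine ⟨S' ∆ {e | e ∈ (p : G.Walk a b).edges}, ?_, ?_⟩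
      · intro e he
        rcases Set.mem_symmDiff.mp he with ⟨h1, _⟩ | ⟨h1, _⟩
        · exact hS'sub h1
        · exact (p : G.Walk a b).edges_subset_edgeSet h1
      · intro v
        have hset : {e | e ∈ S' ∆ {e | e ∈ (p : G.Walk a b).edges} ∧ v ∈ e}
            = {e | e ∈ S' ∧ v ∈ e} ∆ {e | e ∈ (p : G.Walk a b).edges ∧ v ∈ e} := by
          ext e
          simp only [Set.mem_setOf_eq, Set.mem_symmDiff]
          tauto
        rw [hset, aux_ncard_symmDiff_odd (Set.toFinite _) (Set.toFinite _), hS' v,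
          aux_path_deg_parity (p : G.Walk a b) hp hab v]
        have hvmem : v ∈ D \ {a, b} ↔ v ∈ D ∧ ¬(v = a ∨ v = b) := by
          simp [Set.mem_diff]
        rw [hvmem]
        by_cases hva : v = a
        · subst hva; simp [ha]
        · by_cases hvb : v = b
          · subst hvb; simp [hbD]
          · simp [hva, hvb]

private lemma aux_tail_support_mem_edge {a b : V} (p : G.Walk a b) (x : V)
    (hx : x ∈ p.support.tail) : ∃ e ∈ p.edges, x ∈ e := by
  induction p with
  | nil => simp at hx
  | @cons a c b h p ih =>
    rw [Walk.support_cons] at hx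
    simp only [List.tail_cons] at hx
    rw [p.support_eq_cons, List.mem_cons] at hx
    rcases hx with rfl | hx
    · exact ⟨s(a, x), by simp, by simp⟩
    · obtain ⟨e, he, hxe⟩ := ih hx
      exact ⟨e, by simp [he], hxe⟩

private lemma aux_end_mem_tail_support {a b : V} (p : G.Walk a b) (h : p.length ≠ 0) :
    b ∈ p.support.tail := by
  cases p with
  | nil => simp at h
  | cons h' q =>
    simp only [Walk.support_cons, List.tail_cons]
    exact q.end_mem_support

private lemma aux_cycle_verts_eq {v : V} (w : G.Walk v v) (hw : w.IsCycle) :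
    {x | ∃ e ∈ w.edges, x ∈ e} = {x | x ∈ w.support.tail} := by
  have hlen := hw.three_le_length
  have hvtail : v ∈ w.support.tail := aux_end_mem_tail_support w (by omega)
  ext x
  simp only [Set.mem_setOf_eq]
  constructor
  · rintro ⟨e, he, hxe⟩
    induction e with
    | h y z =>
      have hsupp : x ∈ w.support := by
        rw [Sym2.mem_iff] at hxe
        rcases hxe with rfl | rfl
        · exact w.fst_mem_support_of_mem_edges he
        · exact w.snd_mem_support_of_mem_edges he
      rw [w.support_eq_cons, List.mem_cons] at hsupp
      rcases hsupp with rfl | hsupp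
      · exact hvtail
      · exact hsupp
  · exact fun hx => aux_tail_support_mem_edge w x hx

private lemma aux_cycle_verts_ncard {v : V} (w : G.Walk v v) (hw : w.IsCycle) :
    {x | ∃ e ∈ w.edges, x ∈ e}.ncard = w.length := by
  classical
  rw [aux_cycle_verts_eq w hw]
  have h1 : {x | x ∈ w.support.tail} = ↑w.support.tail.toFinset := by
    ext x; simp
  rw [h1, Set.ncard_coe_finset, List.toFinset_card_of_nodup hw.support_nodup,
    List.length_tail, w.length_support]
  omega

private lemma aux_cycle_edges_ncard {v : V} (w : G.Walk v v) (hw : w.IsCycle) :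
    {e | e ∈ w.edges}.ncard = w.length := by
  classical
  have h1 : {e | e ∈ w.edges} = ↑w.edges.toFinset := by ext e; simp
  rw [h1, Set.ncard_coe_finset, List.toFinset_card_of_nodup hw.edges_nodup,
    w.length_edges]

private lemma aux_twoConnected_connected (h2 : TwoConnected G) : G.Connected := by
  obtain ⟨⟨a, b, c, hab, hac, hbc⟩, hind⟩ := h2
  rw [connected_iff]
  refine ⟨fun x y => ?_, ⟨a⟩⟩
  obtain ⟨z, hzx, hzy⟩ : ∃ z : V, z ≠ x ∧ z ≠ y := by
    by_contra hno
    push_neg at hno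
    by_cases hax : a = x
    · by_cases hbx : b = x
      · exact hab (hax.trans hbx.symm)
      · by_cases hcx : c = x
        · exact hac (hax.trans hcx.symm)
        · exact hbc ((hno b hbx).trans (hno c hcx).symm)
    · by_cases hbx : b = x
      · by_cases hcx : c = x
        · exact hbc (hbx.trans hcx.symm)
        · exact hac ((hno a hax).trans (hno c hcx).symm)
      · exact hab ((hno a hax).trans (hno b hbx).symm)
  have hc := hind z
  have hx : x ∈ {t : V | t ≠ z} := fun h => hzx h.symm
  have hy : y ∈ {t : V | t ≠ z} := fun h => hzy h.symm
  have hreach := hc.preconnected ⟨x, hx⟩ ⟨y, hy⟩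
  let f : G.induce {t : V | t ≠ z} →g G := ⟨Subtype.val, fun h => h⟩
  exact hreach.map f

end Aux

/-- Let `G` be a finite 2-connected graph in which, for every edge
subset `S`, some circuit contains all vertices of odd degree in `S`.  If `C` is a
circuit of even length and two distinct vertices of `G` lie off `C`, then `G` has a
circuit longer than `C`. -/
theorem stmt_12 {V : Type*} [Fintype V] (G : SimpleGraph V)
    (h2 : TwoConnected G)
    (hodd : ∀ S ⊆ G.edgeSet, ∃ C, G.IsCircuit C ∧
      ∀ v : V, Odd {e ∈ S | v ∈ e}.ncard → ∃ e ∈ C, v ∈ e)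
    (C : Set (Sym2 V)) (hC : G.IsCircuit C) (heven : Even C.ncard)
    (v₁ v₂ : V) (hne : v₁ ≠ v₂)
    (hv₁ : ¬ ∃ e ∈ C, v₁ ∈ e) (hv₂ : ¬ ∃ e ∈ C, v₂ ∈ e) :
    ∃ C', G.IsCircuit C' ∧ C.ncard < C'.ncard := by
  classical
  obtain ⟨v0, w, hw, hCeq⟩ := hC
  have hconn := aux_twoConnected_connected h2
  set VC : Set V := {x : V | ∃ e ∈ C, x ∈ e} with hVCdef
  have hClen : C.ncard = w.length := by
    rw [hCeq]; exact aux_cycle_edges_ncard w hw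
  have hVC : VC.ncard = w.length := by
    have hh : VC = {x | ∃ e ∈ w.edges, x ∈ e} := by rw [hVCdef, hCeq]; rfl
    rw [hh]; exact aux_cycle_verts_ncard w hw
  have hv1VC : v₁ ∉ VC := hv₁
  have hv2VC : v₂ ∉ VC := hv₂
  set D : Set V := insert v₁ (insert v₂ VC) with hDdef
  have hD : D.ncard = C.ncard + 2 := by
    rw [hDdef, Set.ncard_insert_of_notMem (by simp [hne, hv1VC]) (Set.toFinite _),
      Set.ncard_insert_of_notMem hv2VC (Set.toFinite _), hVC, hClen]
  have hDeven : Even D.ncard := by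
    rw [hD]; exact heven.add even_two
  obtain ⟨S, hSsub, hSpar⟩ := aux_tjoin hconn D.ncard D rfl hDeven
  obtain ⟨C', hC'circ, hcov⟩ := hodd S hSsub
  refine ⟨C', hC'circ, ?_⟩
  obtain ⟨v0', w', hw', hC'eq⟩ := hC'circ
  have hC'len : C'.ncard = w'.length := by
    rw [hC'eq]; exact aux_cycle_edges_ncard w' hw'
  have hsub : D ⊆ {x : V | ∃ e ∈ C', x ∈ e} := by
    intro x hx
    exact hcov x ((hSpar x).mpr hx)
  have hver : {x : V | ∃ e ∈ C', x ∈ e}.ncard = w'.length := by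
    have hh : {x : V | ∃ e ∈ C', x ∈ e} = {x | ∃ e ∈ w'.edges, x ∈ e} := by rw [hC'eq]; rfl
    rw [hh]; exact aux_cycle_verts_ncard w' hw'
  have hle := Set.ncard_le_ncard hsub (Set.toFinite _)
  omega
end

section
/- Let G be a 2-connected graph such that every set of odd-degree vertices of any subgraph of G lies on a common circuit. If C is a circuit of odd length and some vertex of G is not on C, then G has a circuit of length greater than |C|. -/
open SimpleGraph Walk List

namespace SimpleGraph.Walk

variable {V : Type*} {G : SimpleGraph V}

lemma getVert_eq_getD {a b : V} (p : G.Walk a b) :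
    ∀ i, i ≤ p.length → p.getVert i = p.support.getD i b := by
  induction p with
  | nil =>
    intro i hi
    simp only [length_nil, Nat.le_zero] at hi
    subst hi
    simp [getVert]
  | cons h q ih =>
    intro i hi
    cases i with
    | zero => simp [getVert]
    | succ n =>
      rw [getVert_cons_succ, support_cons, List.getD_cons_succ]
      exact ih n (by simpa using hi)

lemma length_support_tail {a b : V} (p : G.Walk a b) :
    p.support.tail.length = p.length := by
  have := p.length_support
  rw [p.support_eq_cons] at this
  simpa using this

lemma getVert_eq_tail_getD {a b : V} (p : G.Walk a b) {m : ℕ} (hm1 : 1 ≤ m)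
    (hm2 : m ≤ p.length) : p.getVert m = p.support.tail.getD (m - 1) b := by
  rw [p.getVert_eq_getD m hm2, p.support_eq_cons]
  obtain ⟨m', rfl⟩ : ∃ m', m = m' + 1 := ⟨m - 1, by omega⟩
  simp

lemma IsCycle.getVert_inj {a : V} {p : G.Walk a a} (hp : p.IsCycle) {i j : ℕ}
    (hi1 : 1 ≤ i) (hi2 : i ≤ p.length) (hj1 : 1 ≤ j) (hj2 : j ≤ p.length)
    (h : p.getVert i = p.getVert j) : i = j := by
  have hnd : p.support.tail.Nodup := hp.2
  have hlt : p.support.tail.length = p.length := p.length_support_tail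
  rw [p.getVert_eq_tail_getD hi1 hi2, p.getVert_eq_tail_getD hj1 hj2] at h
  rw [List.getD_eq_getElem _ _ (by omega), List.getD_eq_getElem _ _ (by omega)] at h
  have := (List.Nodup.getElem_inj_iff hnd).mp h
  omega

lemma mem_edges_getVert {a b : V} (p : G.Walk a b) :
    ∀ i, i < p.length → s(p.getVert i, p.getVert (i + 1)) ∈ p.edges := by
  induction p with
  | nil => intro i hi; simp at hi
  | cons h q ih =>
    intro i hi
    cases i with
    | zero =>
      rw [getVert_zero, getVert_cons_succ, getVert_zero]
      simp
    | succ n =>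
      rw [getVert_cons_succ, getVert_cons_succ, edges_cons]
      exact List.mem_cons_of_mem _ (ih n (by simpa using hi))

lemma getVert_mem_support' {a b : V} (p : G.Walk a b) (i : ℕ) : p.getVert i ∈ p.support := by
  rcases le_or_gt i p.length with h | h
  · exact mem_support_iff_exists_getVert.mpr ⟨i, rfl, h⟩
  · rw [p.getVert_of_length_le h.le]; exact p.end_mem_support

lemma exists_edge_of_mem_support' {x : V} :
    ∀ {a b : V} (p : G.Walk a b), x ∈ p.support → (∃ e ∈ p.edges, x ∈ e) ∨ x = b := by
  intro a b p
  induction p with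
  | nil => intro hx; right; simpa using hx
  | @cons a c b h q ih =>
    intro hx
    rw [support_cons, List.mem_cons] at hx
    rcases hx with rfl | hx
    · exact Or.inl ⟨s(x, c), by simp, by simp⟩
    · rcases ih hx with ⟨e, he, hxe⟩ | rfl
      · exact Or.inl ⟨e, by simp [he], hxe⟩
      · right; rfl

lemma exists_edge_of_mem_support {a : V} {p : G.Walk a a} (hp : ¬ p.Nil) {x : V}
    (hx : x ∈ p.support) : ∃ e ∈ p.edges, x ∈ e := by
  rcases exists_edge_of_mem_support' p hx with h | rfl
  · exact h
  · refine ⟨s(p.getVert 0, p.getVert 1), p.mem_edges_getVert 0 ?_, by simp⟩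
    rwa [← not_nil_iff_lt_length]

lemma getVert_mem_support_tail {a b : V} (p : G.Walk a b) {m : ℕ} (hm1 : 1 ≤ m)
    (hm2 : m ≤ p.length) : p.getVert m ∈ p.support.tail := by
  rw [p.getVert_eq_tail_getD hm1 hm2,
    List.getD_eq_getElem _ _ (by rw [p.length_support_tail]; omega)]
  exact List.getElem_mem _

lemma mem_support_tail_of_closed {a : V} {p : G.Walk a a} (hp : ¬ p.Nil) {x : V}
    (hx : x ∈ p.support) : x ∈ p.support.tail := by
  obtain ⟨m, rfl, hm⟩ := mem_support_iff_exists_getVert.mp hx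
  rcases Nat.eq_zero_or_pos m with rfl | hm1
  · have : p.getVert 0 = p.getVert p.length := by rw [getVert_zero, getVert_length]
    rw [this]
    exact p.getVert_mem_support_tail (SimpleGraph.Walk.not_nil_iff_lt_length.mp hp) le_rfl
  · exact p.getVert_mem_support_tail hm1 hm

lemma exists_boundary {s : Set V} :
    ∀ {a b : V} (p : G.Walk a b), a ∉ s → b ∈ s → ∃ x u, x ∉ s ∧ u ∈ s ∧ G.Adj x u := by
  intro a b p
  induction p with
  | nil => intro ha hb; exact absurd hb ha
  | @cons a c b h q ih =>
    intro ha hb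
    by_cases hc : c ∈ s
    · exact ⟨a, c, ha, hc, h⟩
    · exact ih hc hb

end SimpleGraph.Walk

lemma TwoConnected.connected {V : Type*} {G : SimpleGraph V} (h2 : TwoConnected G) :
    G.Connected := by
  obtain ⟨⟨a, b, c, hab, hac, hbc⟩, hconn⟩ := h2
  have : Nonempty V := ⟨a⟩
  refine ⟨fun x y => ?_⟩
  obtain ⟨z, hzx, hzy⟩ : ∃ z, z ≠ x ∧ z ≠ y := by
    by_cases h1 : a ≠ x ∧ a ≠ y
    · exact ⟨a, h1⟩
    by_cases h2 : b ≠ x ∧ b ≠ y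
    · exact ⟨b, h2⟩
    simp only [not_and_or, not_ne_iff] at h1 h2
    refine ⟨c, fun h => ?_, fun h => ?_⟩ <;> subst h <;>
      rcases h1 with rfl | rfl <;> rcases h2 with rfl | rfl <;> simp_all
  have hx : x ∈ {w : V | w ≠ z} := fun h => hzx h.symm
  have hy : y ∈ {w : V | w ≠ z} := fun h => hzy h.symm
  have := (hconn z).preconnected ⟨x, hx⟩ ⟨y, hy⟩
  exact this.map (SimpleGraph.Embedding.induce {w : V | w ≠ z}).toHom

/-- Let `G` be a finite 2-connected graph in which, for every edge
subset `S`, some circuit contains all vertices of odd degree in `S`.  If `C` is a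
circuit of odd length and some vertex of `G` lies off `C`, then `G` has a circuit
longer than `C`. -/
theorem stmt_13 {V : Type*} [Fintype V] (G : SimpleGraph V)
    (h2 : TwoConnected G)
    (hodd : ∀ S ⊆ G.edgeSet, ∃ C, G.IsCircuit C ∧
      ∀ v : V, Odd {e ∈ S | v ∈ e}.ncard → ∃ e ∈ C, v ∈ e)
    (C : Set (Sym2 V)) (hC : G.IsCircuit C) (hoddC : Odd C.ncard)
    (v₁ : V) (hv₁ : ¬ ∃ e ∈ C, v₁ ∈ e) :
    ∃ C', G.IsCircuit C' ∧ C.ncard < C'.ncard := by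
  classical
  obtain ⟨v₀, w, hw, hCe⟩ := hC
  subst hCe
  have hwnil : ¬ w.Nil := by
    rw [SimpleGraph.Walk.not_nil_iff_lt_length]
    have := hw.three_le_length; omega
  have hv₁s : v₁ ∉ w.support := by
    intro h
    obtain ⟨e, he, hve⟩ := Walk.exists_edge_of_mem_support hwnil h
    exact hv₁ ⟨e, he, hve⟩
  obtain ⟨p⟩ := h2.connected.preconnected v₁ v₀
  obtain ⟨v, u, hv, hu, hadj⟩ :=
    Walk.exists_boundary (s := {x | x ∈ w.support}) p hv₁s w.end_mem_support
  have hu' : u ∈ w.support := hu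
  set wr := w.rotate u hu' with hwrdef
  have hwr : wr.IsCycle := hw.rotate hu'
  have hrot : wr.edges ~r w.edges := w.rotate_edges u hu'
  have hedges : ∀ e, e ∈ wr.edges ↔ e ∈ w.edges := fun e => hrot.mem_iff
  -- basic numerology
  have hCn : ({e | e ∈ w.edges} : Set (Sym2 V)).ncard = w.length := by
    have h1 : {e | e ∈ w.edges} = ↑w.edges.toFinset := by ext e; simp
    rw [h1, Set.ncard_coe_finset, List.toFinset_card_of_nodup hw.edges_nodup,
      Walk.length_edges]
  obtain ⟨k, hk⟩ : ∃ k, w.length = 2 * k + 1 := by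
    rw [hCn] at hoddC; exact hoddC
  have hk1 : 1 ≤ k := by have := hw.three_le_length; omega
  have hlwr : wr.length = 2 * k + 1 := by
    have h1 := hrot.perm.length_eq
    rw [Walk.length_edges, Walk.length_edges] at h1
    rw [h1, hk]
  -- v is off the cycle
  have hsupp : ∀ x, x ∈ wr.support → x ∈ w.support := by
    intro x hx
    rw [wr.support_eq_cons, List.mem_cons] at hx
    rcases hx with rfl | hx
    · exact hu
    · exact List.mem_of_mem_tail ((w.support_rotate u hu').mem_iff.mp hx)
  have hvgv : ∀ i, v ≠ wr.getVert i := fun i h =>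
    hv (hsupp _ (h ▸ wr.getVert_mem_support' i))
  have hvu : v ≠ u := fun h => hv (h ▸ hu)
  -- injectivity of getVert on [1, 2k+1]
  have hinj : ∀ {i j : ℕ}, 1 ≤ i → i ≤ 2 * k + 1 → 1 ≤ j → j ≤ 2 * k + 1 →
      wr.getVert i = wr.getVert j → i = j := by
    intro i j hi1 hi2 hj1 hj2 h
    exact hwr.getVert_inj hi1 (by omega) hj1 (by omega) h
  have hun : wr.getVert (2 * k + 1) = u := by
    have := wr.getVert_length
    rwa [hlwr] at this
  -- the edge subset S : matching on the cycle plus the pendant edge s(u, v)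
  set m : ℕ → Sym2 V := fun j => s(wr.getVert (2 * j + 1), wr.getVert (2 * j + 2)) with hm
  set S : Set (Sym2 V) := (m '' {j | j < k}) ∪ {s(u, v)} with hSdef
  have hS : S ⊆ G.edgeSet := by
    rintro e (⟨j, hj, rfl⟩ | he)
    · exact wr.adj_getVert_succ (by simp only [Set.mem_setOf_eq] at hj; omega)
    · rw [Set.mem_singleton_iff] at he
      rw [he, SimpleGraph.mem_edgeSet]
      exact hadj.symm
  -- matching edges are edges of the rotated cycle and hence contain only cycle vertices
  -- every vertex of the cycle, and v, sees exactly one edge of S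
  have hsingle : ∀ x ∈ insert v (wr.getVert '' Set.Icc 1 (2 * k + 1)),
      ∃ e₀, {e ∈ S | x ∈ e} = {e₀} := by
    intro x hx
    rcases Set.mem_insert_iff.mp hx with hxv | ⟨i, hi, rfl⟩
    · -- x = v
      rw [hxv]
      refine ⟨s(u, v), ?_⟩
      ext e
      simp only [Set.mem_setOf_eq, Set.mem_singleton_iff]
      constructor
      · rintro ⟨⟨j, hj, rfl⟩ | he, hxe⟩
        · exfalso
          rcases Sym2.mem_iff.mp hxe with h | h
          · exact hvgv _ h
          · exact hvgv _ h
        · exact he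
      · rintro rfl
        exact ⟨Or.inr rfl, by simp⟩
    · rw [Set.mem_Icc] at hi
      by_cases hitop : i = 2 * k + 1
      · -- x = u, the vertex missed by the matching
        subst hitop
        refine ⟨s(u, v), ?_⟩
        ext e
        simp only [Set.mem_setOf_eq, Set.mem_singleton_iff]
        constructor
        · rintro ⟨⟨j, hj, rfl⟩ | he, hxe⟩
          · exfalso
            simp only [Set.mem_setOf_eq] at hj
            rcases Sym2.mem_iff.mp hxe with h | h
            · have := hinj (by omega) (by omega) (by omega) (by omega) h
              omega
            · have := hinj (by omega) (by omega) (by omega) (by omega) h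
              omega
          · exact he
        · rintro rfl
          exact ⟨Or.inr rfl, by rw [hun]; simp⟩
      · -- 1 ≤ i ≤ 2k : the unique matching edge through `x`
        set j0 := (i - 1) / 2 with hj0
        refine ⟨m j0, ?_⟩
        have hio : i = 2 * j0 + 1 ∨ i = 2 * j0 + 2 := by omega
        ext e
        simp only [Set.mem_setOf_eq, Set.mem_singleton_iff]
        constructor
        · rintro ⟨⟨j, hj, rfl⟩ | he, hxe⟩
          · simp only [Set.mem_setOf_eq] at hj
            have : i = 2 * j + 1 ∨ i = 2 * j + 2 := by
              rcases Sym2.mem_iff.mp hxe with h | h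
              · exact Or.inl (hinj (by omega) (by omega) (by omega) (by omega) h)
              · exact Or.inr (hinj (by omega) (by omega) (by omega) (by omega) h)
            have : j = j0 := by omega
            rw [this]
          · exfalso
            rw [Set.mem_singleton_iff] at he
            subst he
            rcases Sym2.mem_iff.mp hxe with h | h
            · have h' : wr.getVert i = wr.getVert (2 * k + 1) := by rw [hun]; exact h
              have := hinj (by omega) (by omega) (by omega) (by omega) h'
              omega
            · exact hvgv i h.symm
        · rintro rfl
          refine ⟨Or.inl ⟨j0, by simp only [Set.mem_setOf_eq]; omega, rfl⟩, ?_⟩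
          rcases hio with h | h
          · rw [h]; exact Sym2.mem_mk_left _ _
          · rw [h]; exact Sym2.mem_mk_right _ _
  -- apply the hypothesis to S
  obtain ⟨C', hC', hkey⟩ := hodd S hS
  refine ⟨C', hC', ?_⟩
  obtain ⟨v₀', w', hw', hC'e⟩ := hC'
  have hC'n : C'.ncard = w'.length := by
    have h1 : C' = ↑w'.edges.toFinset := by rw [hC'e]; ext e; simp
    rw [h1, Set.ncard_coe_finset, List.toFinset_card_of_nodup hw'.edges_nodup,
      Walk.length_edges]
  have hw'nil : ¬ w'.Nil := by
    rw [SimpleGraph.Walk.not_nil_iff_lt_length]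
    have := hw'.three_le_length; omega
  set T : Set V := insert v (wr.getVert '' Set.Icc 1 (2 * k + 1)) with hT
  have hTsub : ∀ x ∈ T, x ∈ w'.support.tail := by
    intro x hx
    obtain ⟨e₀, he₀⟩ := hsingle x hx
    have hoddx : Odd {e ∈ S | x ∈ e}.ncard := by
      rw [he₀, Set.ncard_singleton]; exact odd_one
    obtain ⟨e, he, hxe⟩ := hkey x hoddx
    rw [hC'e] at he
    have hxs : x ∈ w'.support := by
      induction e with
      | h a b =>
        rcases Sym2.mem_iff.mp hxe with rfl | rfl
        · exact w'.fst_mem_support_of_mem_edges he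
        · exact w'.snd_mem_support_of_mem_edges he
    exact Walk.mem_support_tail_of_closed hw'nil hxs
  have hTcard : T.ncard = 2 * k + 2 := by
    rw [hT, Set.ncard_insert_of_notMem (by rintro ⟨i, hi, h⟩; exact hvgv i h.symm),
      Set.ncard_image_of_injOn (fun i hi j hj h => by
        rw [Set.mem_Icc] at hi hj
        exact hinj hi.1 hi.2 hj.1 hj.2 h),
      ← Finset.coe_Icc, Set.ncard_coe_finset, Nat.card_Icc]
    omega
  have hfin : (2 : ℕ) * k + 2 ≤ w'.length := by
    calc 2 * k + 2 = T.ncard := hTcard.symm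
      _ ≤ (w'.support.tail.toFinset).card := by
          rw [← Set.ncard_coe_finset]
          exact Set.ncard_le_ncard (fun x hx => by simpa using hTsub x hx)
            (Finset.finite_toSet _)
      _ ≤ w'.support.tail.length := List.toFinset_card_le _
      _ = w'.length := w'.length_support_tail
  rw [hCn, hC'n, hk]
  omega
end

section
/- Let G be a graph of odd order n with no nontrivial circuit injection into a binary matroid. Then G is almost Hamiltonian: every set of n−1 vertices of G is contained in some circuit of G. -/
/-- A *circuit* of a matroid: a minimal dependent set. -/
def Matroid.IsCircuitM {α : Type*} (M : Matroid α) (C : Set α) : Prop :=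
  M.Dep C ∧ ∀ D, D ⊂ C → M.Indep D

/-- A matroid is *binary* if the symmetric difference of any two circuits is a disjoint
union of circuits. -/
def Matroid.IsBinaryM {α : Type*} (M : Matroid α) : Prop :=
  ∀ C₁ C₂, M.IsCircuitM C₁ → M.IsCircuitM C₂ →
    ∃ 𝒟 : Set (Set α), (∀ D ∈ 𝒟, M.IsCircuitM D) ∧ 𝒟.PairwiseDisjoint id ∧
      ⋃₀ 𝒟 = symmDiff C₁ C₂

/-- A *circuit injection* from (the cycle matroid of) a graph `G` to a matroid `M`:
a bijection from the edge set of `G` onto the ground set of `M` carrying circuits of `G`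
to circuits of `M`. -/
def IsCircuitInjection {V α : Type*} (G : SimpleGraph V) (M : Matroid α)
    (f : Sym2 V → α) : Prop :=
  Set.BijOn f G.edgeSet M.E ∧ ∀ C, G.IsCircuit C → M.IsCircuitM (f '' C)

/-- A circuit injection is *nontrivial* if some circuit of the target is not the image
of a circuit of the source. -/
def IsNontrivialCI {V α : Type*} (G : SimpleGraph V) (M : Matroid α)
    (f : Sym2 V → α) : Prop :=
  ∃ D, M.IsCircuitM D ∧ ¬ ∃ C, G.IsCircuit C ∧ f '' C = D

/-- `G` admits no nontrivial circuit injection into a binary matroid. -/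
def NoNontrivialBinaryMap {V : Type*} (G : SimpleGraph V) : Prop :=
  ¬ ∃ (B : Matroid (Sym2 V)) (f : Sym2 V → Sym2 V),
      B.IsBinaryM ∧ IsCircuitInjection G B f ∧ IsNontrivialCI G B f


namespace Stmt15Aux
open SimpleGraph Finset
variable {V : Type*} [Fintype V] [DecidableEq V]
set_option linter.unusedSectionVars false

def Bd (c : Sym2 V → ZMod 2) (v : V) : ZMod 2 := ∑ e : Sym2 V, if v ∈ e then c e else 0
def dvec (e : Sym2 V) : Sym2 V → ZMod 2 := fun e' => if e' = e then 1 else 0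
def vvec (u : V) : V → ZMod 2 := fun v => if v = u then 1 else 0

lemma Bd_add (c c' : Sym2 V → ZMod 2) : Bd (c + c') = Bd c + Bd c' := by
  funext v
  simp only [Bd, Pi.add_apply, ← Finset.sum_add_distrib]
  apply Finset.sum_congr rfl
  intro e _
  split <;> simp

lemma exists_of_Bd_ne_zero {c : Sym2 V → ZMod 2} {v : V} (h : Bd c v ≠ 0) :
    ∃ e, c e ≠ 0 ∧ v ∈ e := by
  obtain ⟨e, _, he⟩ := Finset.exists_ne_zero_of_sum_ne_zero h
  by_cases hv : v ∈ e
  · exact ⟨e, by simpa [hv] using he, hv⟩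
  · simp [hv] at he

lemma Bd_dvec (e : Sym2 V) (v : V) : Bd (dvec e) v = if v ∈ e then 1 else 0 := by
  classical
  simp only [Bd, dvec]
  rw [Finset.sum_eq_single e]
  · simp
  · intro b _ hb; simp [hb]
  · simp

lemma Bd_dvec_eq (u w : V) (h : u ≠ w) : Bd (dvec (s(u, w))) = vvec u + vvec w := by
  funext v
  rw [Bd_dvec]
  simp only [vvec, Pi.add_apply, Sym2.mem_iff]
  by_cases h1 : v = u <;> by_cases h2 : v = w
  · exact absurd (h1.symm.trans h2) h
  all_goals simp_all

variable {G : SimpleGraph V}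

def wvec : ∀ {u w : V}, G.Walk u w → (Sym2 V → ZMod 2)
  | _, _, SimpleGraph.Walk.nil => 0
  | _, _, SimpleGraph.Walk.cons (u := u) (v := x) _ p => dvec s(u, x) + wvec p

@[simp] lemma wvec_nil {u : V} : wvec (SimpleGraph.Walk.nil : G.Walk u u) = 0 := rfl
@[simp] lemma wvec_cons {u x w : V} (h : G.Adj u x) (p : G.Walk x w) :
    wvec (SimpleGraph.Walk.cons h p) = dvec s(u, x) + wvec p := rfl

lemma wvec_supp {u w : V} (p : G.Walk u w) : ∀ e, wvec p e ≠ 0 → e ∈ G.edgeSet := by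
  induction p with
  | nil => intro e he; simp at he
  | @cons u' x' w' h p ih =>
    intro e he
    rw [wvec_cons, Pi.add_apply] at he
    by_cases h1 : dvec s(u', x') e = 0
    · exact ih e (by simpa [h1] using he)
    · have : e = s(u', x') := by by_contra hne; exact h1 (if_neg hne)
      rw [this]; exact h

lemma zmod2_add_self : ∀ x : ZMod 2, x + x = 0 := by decide
lemma zmod2_cases : ∀ x : ZMod 2, x = 0 ∨ x = 1 := by decide
lemma zmod2_ne : ∀ x : ZMod 2, x ≠ 0 → x = 1 := by decide

lemma Bd_wvec {u w : V} (p : G.Walk u w) : Bd (wvec p) = vvec u + vvec w := by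
  induction p with
  | nil =>
    funext v; simp [Bd, vvec]
    split <;> simp [zmod2_add_self]
  | @cons u' x' w' h p ih =>
    rw [wvec_cons, Bd_add, Bd_dvec_eq _ _ h.ne, ih]
    funext v
    simp only [Pi.add_apply]
    have : vvec u' v + vvec x' v + (vvec x' v + vvec w' v) = vvec u' v + (vvec x' v + vvec x' v) + vvec w' v := by ring
    rw [this, zmod2_add_self, add_zero]

/-- indicator vector of a list of edges -/
def chiL (l : List (Sym2 V)) : Sym2 V → ZMod 2 := fun e => if e ∈ l then 1 else 0

lemma wvec_eq_chiL {u w : V} (p : G.Walk u w) (hp : p.IsTrail) : wvec p = chiL p.edges := by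
  induction p with
  | nil => funext e; simp [chiL]
  | @cons u' x' w' h p ih =>
    rw [SimpleGraph.Walk.isTrail_cons] at hp
    rw [wvec_cons, ih hp.1]
    funext e
    simp only [Pi.add_apply, chiL, dvec, SimpleGraph.Walk.edges_cons, List.mem_cons]
    by_cases h1 : e = s(u', x')
    · subst h1
      simp [hp.2]
    · simp [h1]

lemma Bd_chiL_cycle {v : V} (w : G.Walk v v) (hw : w.IsCycle) : Bd (chiL w.edges) = 0 := by
  rw [← wvec_eq_chiL w hw.isTrail, Bd_wvec]
  funext x
  simp [zmod2_add_self]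


lemma mem_support_of_mem_edges' {u w : V} (p : G.Walk u w) {e : Sym2 V} {x : V}
    (he : e ∈ p.edges) (hx : x ∈ e) : x ∈ p.support := by
  induction e with
  | h a b =>
    rw [Sym2.mem_iff] at hx
    rcases hx with rfl | rfl
    · exact p.fst_mem_support_of_mem_edges he
    · exact p.snd_mem_support_of_mem_edges he

/-- An "even" vector supported in the edges of a path is zero. -/
lemma even_on_path : ∀ {u w : V} (p : G.Walk u w), p.IsPath →
    ∀ c : Sym2 V → ZMod 2, (∀ x, Bd c x = 0) → (∀ e, c e ≠ 0 → e ∈ p.edges) → c = 0 := by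
  intro u w p
  induction p with
  | nil =>
    intro _ c _ hsupp
    funext e
    by_contra hne
    exact absurd (hsupp e hne) (by simp)
  | @cons u' x' w' h p ih =>
    intro hp c hB hsupp
    rw [SimpleGraph.Walk.cons_isPath_iff] at hp
    have hfirst : c s(u', x') = 0 := by
      have hb := hB u'
      rw [Bd] at hb
      rw [Finset.sum_eq_single s(u', x')] at hb
      · simpa using hb
      · intro e _ hne
        by_cases hu : u' ∈ e
        · rw [if_pos hu]
          by_contra hc
          have := hsupp e hc
          rw [SimpleGraph.Walk.edges_cons, List.mem_cons] at this
          rcases this with h1 | h1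
          · exact hne h1
          · exact hp.2 (mem_support_of_mem_edges' p h1 hu)
        · rw [if_neg hu]
      · simp
    apply ih hp.1 c hB
    intro e he
    have := hsupp e he
    rw [SimpleGraph.Walk.edges_cons, List.mem_cons] at this
    rcases this with h1 | h1
    · exact absurd (h1 ▸ he) (by simp [hfirst])
    · exact h1

/-- an edge of a path containing the path's first vertex is the first edge -/
lemma head_edge : ∀ {u w : V} (p : G.Walk u w), p.IsPath → ∀ {e : Sym2 V}, e ∈ p.edges → u ∈ e →
    ∃ (z : V) (h' : G.Adj u z) (q : G.Walk z w), p = SimpleGraph.Walk.cons h' q ∧ e = s(u, z) := by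
  intro u w p
  induction p with
  | nil => intro _ e he _; simp at he
  | @cons u' x' w' h p _ =>
    intro hp e he hu
    rw [SimpleGraph.Walk.cons_isPath_iff] at hp
    rw [SimpleGraph.Walk.edges_cons, List.mem_cons] at he
    rcases he with h1 | h1
    · exact ⟨x', h, p, rfl, h1⟩
    · exact absurd (mem_support_of_mem_edges' p h1 hu) hp.2

/-- An "even" vector supported in a proper subset of the edges of a cycle is zero. -/
lemma even_ssubset_cycle {v : V} (w : G.Walk v v) (hw : w.IsCycle)
    (c : Sym2 V → ZMod 2) (hB : ∀ x, Bd c x = 0) (hsupp : ∀ e, c e ≠ 0 → e ∈ w.edges)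
    (e₀ : Sym2 V) (he₀ : e₀ ∈ w.edges) (hc0 : c e₀ = 0) : c = 0 := by
  induction e₀ with
  | h x y =>
    have hx : x ∈ w.support := w.fst_mem_support_of_mem_edges he₀
    set w' := w.rotate x hx with hw'def
    have hw' : w'.IsCycle := hw.rotate hx
    have hedges : ∀ e, e ∈ w'.edges ↔ e ∈ w.edges := fun e =>
      (w.rotate_edges x hx).mem_iff
    have hsupp' : ∀ e, c e ≠ 0 → e ∈ w'.edges := fun e he => (hedges e).2 (hsupp e he)
    have he₀' : s(x, y) ∈ w'.edges := (hedges _).2 he₀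
    clear_value w'
    cases w' with
    | nil => exact absurd rfl hw'.ne_nil
    | @cons _ z _ h q =>
      rw [SimpleGraph.Walk.cons_isCycle_iff] at hw'
      rw [SimpleGraph.Walk.edges_cons, List.mem_cons] at he₀'
      rcases he₀' with h1 | h1
      · -- e₀ is the first edge; c is supported in the (path) q
        apply even_on_path q hw'.1 c hB
        intro e he
        have := hsupp' e he
        rw [SimpleGraph.Walk.edges_cons, List.mem_cons] at this
        rcases this with h2 | h2
        · exfalso; rw [h2, ← h1] at he; exact he hc0
        · exact h2
      · -- e₀ is an edge of q containing its last vertex x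
        have hqr : q.reverse.IsPath := hw'.1.reverse
        have he₀r : s(x, y) ∈ q.reverse.edges := by
          rw [SimpleGraph.Walk.edges_reverse, List.mem_reverse]; exact h1
        obtain ⟨z', h', q₂, hq, he⟩ := head_edge q.reverse hqr he₀r (by simp)
        -- now c is supported in {s(x,z)} ∪ q₂.edges ; build the path cons (h.symm??)
        -- path P := q₂.concat (edge z -- x)?? we need edges s(x,z) and q₂.edges : Walk z' z
        have hq2path : q₂.IsPath ∧ x ∉ q₂.support := by
          have := hqr
          rw [hq, SimpleGraph.Walk.cons_isPath_iff] at this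
          exact this
        -- P := cons h q₂.reverse : Walk x z' is a path whose edges are s(x,z) and q₂.edges
        have hP : (SimpleGraph.Walk.cons h q₂.reverse).IsPath := by
          rw [SimpleGraph.Walk.cons_isPath_iff]
          refine ⟨hq2path.1.reverse, ?_⟩
          rw [SimpleGraph.Walk.support_reverse, List.mem_reverse]
          exact hq2path.2
        apply even_on_path (SimpleGraph.Walk.cons h q₂.reverse) hP c hB
        intro e he2
        have hmem := hsupp' e he2
        rw [SimpleGraph.Walk.edges_cons, List.mem_cons] at hmem
        rw [SimpleGraph.Walk.edges_cons, List.mem_cons, SimpleGraph.Walk.edges_reverse,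
          List.mem_reverse]
        rcases hmem with h2 | h2
        · left; exact h2
        · -- e ∈ q.edges = {s(x,z')} ∪ q₂.edges
          have : e ∈ q.reverse.edges := by
            rw [SimpleGraph.Walk.edges_reverse, List.mem_reverse]; exact h2
          rw [hq, SimpleGraph.Walk.edges_cons, List.mem_cons] at this
          rcases this with h3 | h3
          · exfalso
            rw [h3, ← he] at he2
            exact he2 hc0
          · right; exact h3


/-- the set of indicator vectors of cycles of `G` -/
def cycVecs (G : SimpleGraph V) : Set (Sym2 V → ZMod 2) :=
  {f | ∃ (v : V) (w : G.Walk v v), w.IsCycle ∧ f = chiL w.edges}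

lemma chiL_mem {l : List (Sym2 V)} {e : Sym2 V} (h : chiL l e ≠ 0) : e ∈ l := by
  by_contra hne; exact h (if_neg hne)

lemma spanCyc_props {G : SimpleGraph V} {c : Sym2 V → ZMod 2}
    (hc : c ∈ Submodule.span (ZMod 2) (cycVecs G)) :
    (∀ v, Bd c v = 0) ∧ (∀ e, c e ≠ 0 → e ∈ G.edgeSet) := by
  induction hc using Submodule.span_induction with
  | mem x hx =>
    obtain ⟨v, w, hw, rfl⟩ := hx
    constructor
    · intro v'; rw [Bd_chiL_cycle w hw]; rfl
    · intro e he
      exact w.edges_subset_edgeSet (chiL_mem he)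
  | zero =>
    constructor
    · intro v; simp [Bd]
    · intro e he; simp at he
  | add x y hx hy ihx ihy =>
    constructor
    · intro v; rw [Bd_add]; simp [ihx.1 v, ihy.1 v]
    · intro e he
      rw [Pi.add_apply] at he
      by_cases h1 : x e = 0
      · exact ihy.2 e (by simpa [h1] using he)
      · exact ihx.2 e h1
  | smul r x hx ihx =>
    rcases zmod2_cases r with rfl | rfl
    · constructor
      · intro v; simp [Bd]
      · intro e he; simp at he
    · simpa using ihx

section Matroid
variable (G : SimpleGraph V) (a : Sym2 V → ZMod 2)

/-- the binary code spanned by the cycle space of `G` together with `a` -/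
def Code : Submodule (ZMod 2) (Sym2 V → ZMod 2) :=
  Submodule.span (ZMod 2) (insert a (cycVecs G))

variable {G a}

lemma code_supp (ha : ∀ e, a e ≠ 0 → e ∈ G.edgeSet) {c : Sym2 V → ZMod 2} (hc : c ∈ Code G a) :
    ∀ e, c e ≠ 0 → e ∈ G.edgeSet := by
  rw [Code, Submodule.mem_span_insert] at hc
  obtain ⟨r, z, hz, rfl⟩ := hc
  intro e he
  rw [Pi.add_apply] at he
  by_cases h1 : (r • a) e = 0
  · exact (spanCyc_props hz).2 e (by simpa [h1] using he)
  · rcases zmod2_cases r with rfl | rfl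
    · simp at h1
    · exact ha e (by simpa using h1)

variable (G a) in
/-- independence: no nonzero codeword supported inside -/
def Ind (I : Set (Sym2 V)) : Prop :=
  I ⊆ G.edgeSet ∧ ∀ c ∈ Code G a, (∀ e, c e ≠ 0 → e ∈ I) → c = 0

lemma ind_empty : Ind G a ∅ := by
  refine ⟨Set.empty_subset _, fun c _ hc => ?_⟩
  funext e
  by_contra hne
  exact absurd (hc e hne) (by simp)

lemma ind_subset {I J : Set (Sym2 V)} (hJ : Ind G a J) (hIJ : I ⊆ J) : Ind G a I :=
  ⟨hIJ.trans hJ.1, fun c hc hsupp => hJ.2 c hc (fun e he => hIJ (hsupp e he))⟩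

lemma ind_aug {I J : Set (Sym2 V)} (hI : Ind G a I) (hJ : Ind G a J)
    (hcard : I.ncard < J.ncard) : ∃ e ∈ J, e ∉ I ∧ Ind G a (insert e I) := by
  classical
  by_contra hcon
  push_neg at hcon
  -- for each e ∈ J \ I, a nonzero codeword c_e supported in insert e I with c_e e = 1
  have hch : ∀ e : Sym2 V, ∃ c : Sym2 V → ZMod 2, e ∈ J \ I →
      c ∈ Code G a ∧ c e = 1 ∧ ∀ e', c e' ≠ 0 → e' ∈ insert e I := by
    intro e
    by_cases he : e ∈ J \ I
    · have hni := hcon e he.1 he.2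
      rw [Ind, not_and] at hni
      have hsub : insert e I ⊆ G.edgeSet := by
        rw [Set.insert_subset_iff]; exact ⟨hJ.1 he.1, hI.1⟩
      push_neg at hni
      obtain ⟨c, hc, hcsupp, hcne⟩ := hni hsub
      refine ⟨c, fun _ => ⟨hc, ?_, hcsupp⟩⟩
      apply zmod2_ne
      intro hce
      -- then c is supported in I, contradicting independence of I
      apply hcne
      apply hI.2 c hc
      intro e' he'
      rcases hcsupp e' he' with rfl | h2
      · exact absurd hce he'
      · exact h2
    · exact ⟨0, fun h => absurd h he⟩
  choose f hf using hch
  set sJI : Finset (Sym2 V) := (J \ I).toFinite.toFinset with hsJI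
  set tIJ : Finset (Sym2 V) := (I \ J).toFinite.toFinset with htIJ
  have hmemJI : ∀ e, e ∈ sJI ↔ e ∈ J \ I := fun e => Set.Finite.mem_toFinset _
  have hmemIJ : ∀ e, e ∈ tIJ ↔ e ∈ I \ J := fun e => Set.Finite.mem_toFinset _
  -- the combination map
  set cvec : (Sym2 V → ZMod 2) → (Sym2 V → ZMod 2) :=
    fun g => ∑ e ∈ sJI, g e • f e with hcvec
  have hcvec_code : ∀ g, cvec g ∈ Code G a := by
    intro g
    apply Submodule.sum_mem
    intro e he
    apply Submodule.smul_mem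
    exact (hf e ((hmemJI e).1 he)).1
  have hcvec_eval : ∀ g e₀, e₀ ∈ sJI → cvec g e₀ = g e₀ := by
    intro g e₀ he₀
    rw [hcvec]
    simp only [Finset.sum_apply, Pi.smul_apply, smul_eq_mul]
    rw [Finset.sum_eq_single e₀]
    · rw [(hf e₀ ((hmemJI e₀).1 he₀)).2.1, mul_one]
    · intro b hb hbne
      have : f b e₀ = 0 := by
        by_contra hne
        rcases (hf b ((hmemJI b).1 hb)).2.2 e₀ hne with h1 | h1
        · exact hbne h1.symm
        · exact ((hmemJI e₀).1 he₀).2 h1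
      rw [this, mul_zero]
    · intro h; exact absurd he₀ h
  have hcvec_supp : ∀ g e, cvec g e ≠ 0 → e ∈ I ∪ (J \ I) := by
    intro g e he
    rw [hcvec] at he
    simp only [Finset.sum_apply, Pi.smul_apply, smul_eq_mul] at he
    obtain ⟨b, hb, hbne⟩ := Finset.exists_ne_zero_of_sum_ne_zero he
    have : f b e ≠ 0 := by
      intro h0; rw [h0, mul_zero] at hbne; exact hbne rfl
    rcases (hf b ((hmemJI b).1 hb)).2.2 e this with rfl | h2
    · exact Or.inr ((hmemJI _).1 hb)
    · exact Or.inl h2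
  -- injectivity of restriction to I \ J
  set Φ : (↥sJI → ZMod 2) → (↥tIJ → ZMod 2) :=
    fun g i => cvec (fun e => if h : e ∈ sJI then g ⟨e, h⟩ else 0) i.1 with hΦ
  have hΦinj : Function.Injective Φ := by
    intro g₁ g₂ hg
    by_contra hne
    have : ∃ e₀ : ↥sJI, g₁ e₀ ≠ g₂ e₀ := by
      by_contra hc; push_neg at hc; exact hne (funext hc)
    obtain ⟨⟨e₀, he₀⟩, hne₀⟩ := this
    set g₁' : Sym2 V → ZMod 2 := fun e => if h : e ∈ sJI then g₁ ⟨e, h⟩ else 0 with hg₁'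
    set g₂' : Sym2 V → ZMod 2 := fun e => if h : e ∈ sJI then g₂ ⟨e, h⟩ else 0 with hg₂'
    set c := cvec g₁' + cvec g₂' with hc
    have hcc : c ∈ Code G a := Submodule.add_mem _ (hcvec_code _) (hcvec_code _)
    have hcsupp : ∀ e, c e ≠ 0 → e ∈ J := by
      intro e he
      rw [hc, Pi.add_apply] at he
      have hmem : e ∈ I ∪ (J \ I) := by
        by_cases h1 : cvec g₁' e = 0
        · exact hcvec_supp g₂' e (by simpa [h1] using he)
        · exact hcvec_supp g₁' e h1
      rcases hmem with h1 | h1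
      · -- e ∈ I; if e ∉ J then e ∈ I \ J and c e = 0 by hg
        by_contra heJ
        have : (⟨e, (hmemIJ e).2 ⟨h1, heJ⟩⟩ : ↥tIJ) ∈ Set.univ := Set.mem_univ _
        have := congrFun hg ⟨e, (hmemIJ e).2 ⟨h1, heJ⟩⟩
        rw [hΦ] at this
        simp only at this
        apply he
        have this2 : cvec g₁' e = cvec g₂' e := this
        rw [this2]
        exact zmod2_add_self _
      · exact h1.1
    have := hJ.2 c hcc hcsupp
    have heval := congrFun this e₀
    rw [hc, Pi.add_apply, hcvec_eval g₁' e₀ he₀, hcvec_eval g₂' e₀ he₀] at heval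
    rw [hg₁', hg₂'] at heval
    simp only [dif_pos he₀] at heval
    -- g₁ e₀ + g₂ e₀ = 0 in ZMod 2 means equal
    apply hne₀
    have : ∀ x y : ZMod 2, x + y = 0 → x = y := by decide
    exact this _ _ heval
  -- cardinality contradiction
  have hcard2 : Fintype.card (↥sJI → ZMod 2) ≤ Fintype.card (↥tIJ → ZMod 2) :=
    Fintype.card_le_of_injective Φ hΦinj
  rw [Fintype.card_fun, Fintype.card_fun] at hcard2
  simp only [Fintype.card_coe, ZMod.card] at hcard2
  have hle : sJI.card ≤ tIJ.card := by
    by_contra hlt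
    push_neg at hlt
    exact absurd hcard2 (by
      apply not_le_of_gt
      exact Nat.pow_lt_pow_right (by norm_num) hlt)
  -- |J| ≤ |I|
  have h1 : (J \ I).ncard = sJI.card := Set.ncard_eq_toFinset_card _ _
  have h2 : (I \ J).ncard = tIJ.card := Set.ncard_eq_toFinset_card _ _
  have e1 : (J ∩ I).ncard + (J \ I).ncard = J.ncard :=
    Set.ncard_inter_add_ncard_diff_eq_ncard J I
  have e2 : (I ∩ J).ncard + (I \ J).ncard = I.ncard :=
    Set.ncard_inter_add_ncard_diff_eq_ncard I J
  rw [Set.inter_comm] at e2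
  omega

variable (G a) in
/-- the binary matroid on the edge set of `G` given by the code -/
noncomputable def CodeM : Matroid (Sym2 V) :=
  (IndepMatroid.ofFinite (Set.toFinite G.edgeSet) (Ind G a) ind_empty
    (fun _ _ hJ hIJ => ind_subset hJ hIJ)
    (fun _ _ hI hJ hcard => ind_aug hI hJ hcard)
    (fun _ hI => hI.1)).matroid

lemma codeM_E : (CodeM G a).E = G.edgeSet := rfl

lemma codeM_indep (I : Set (Sym2 V)) : (CodeM G a).Indep I ↔ Ind G a I := by
  rw [CodeM, IndepMatroid.matroid_indep_iff, IndepMatroid.ofFinite_indep]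


lemma supp_zero_iff {c : Sym2 V → ZMod 2} : {e | c e ≠ 0} = ∅ ↔ c = 0 := by
  constructor
  · intro h; funext e
    by_contra hne
    exact absurd (h ▸ hne : e ∈ ({} : Set (Sym2 V))) (by simp)
  · intro h; subst h; simp

/-- Every circuit of the graph is a circuit of the code matroid, provided no cycle of `G`
covers all the "odd" vertices of `a`. -/
lemma circuit_graph (ha : ∀ e, a e ≠ 0 → e ∈ G.edgeSet)
    (hA : ∀ (v : V) (w : G.Walk v v), w.IsCycle → ∃ x, Bd a x ≠ 0 ∧ ∀ e ∈ w.edges, x ∉ e)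
    {C : Set (Sym2 V)} (hC : G.IsCircuit C) : (CodeM G a).IsCircuitM C := by
  obtain ⟨v, w, hw, rfl⟩ := hC
  have hKE : {e | e ∈ w.edges} ⊆ G.edgeSet := fun e he => w.edges_subset_edgeSet he
  have hKne : w.edges ≠ [] := by
    have := hw.three_le_length
    intro hnil
    rw [← SimpleGraph.Walk.length_edges, hnil] at this
    simp at this
  have hchi : chiL w.edges ∈ Code G a :=
    Submodule.subset_span (Set.mem_insert_of_mem _ ⟨v, w, hw, rfl⟩)
  constructor
  · rw [Matroid.dep_iff, codeM_indep]
    refine ⟨fun hInd => ?_, hKE⟩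
    have := hInd.2 (chiL w.edges) hchi (fun e he => chiL_mem he)
    have hhead := congrFun this (w.edges.head hKne)
    rw [chiL, if_pos (List.head_mem hKne)] at hhead
    exact one_ne_zero hhead
  · intro D hD
    rw [codeM_indep]
    refine ⟨hD.subset.trans hKE, ?_⟩
    intro c hc hsupp
    rw [Code, Submodule.mem_span_insert] at hc
    obtain ⟨r, z, hz, rfl⟩ := hc
    rcases zmod2_cases r with rfl | rfl
    · rw [zero_smul, zero_add] at hsupp ⊢
      obtain ⟨e₀, he₀K, he₀D⟩ := Set.exists_of_ssubset hD
      refine even_ssubset_cycle w hw z (spanCyc_props hz).1 ?_ e₀ he₀K ?_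
      · intro e he; exact hD.subset (hsupp e he)
      · by_contra hne
        exact he₀D (hsupp e₀ hne)
    · exfalso
      rw [one_smul] at hsupp
      obtain ⟨x, hBx, hxe⟩ := hA v w hw
      have hBc : Bd (a + z) x ≠ 0 := by
        rw [Bd_add, Pi.add_apply, (spanCyc_props hz).1 x, add_zero]
        exact hBx
      obtain ⟨e, hce, hxe'⟩ := exists_of_Bd_ne_zero hBc
      exact hxe e (hD.subset (hsupp e hce)) hxe'

/-- every circuit of the code matroid is the support of a codeword -/
lemma circuitM_vec {D : Set (Sym2 V)} (hD : (CodeM G a).IsCircuitM D) :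
    ∃ c ∈ Code G a, c ≠ 0 ∧ {e | c e ≠ 0} = D := by
  obtain ⟨⟨hdep, hDE⟩, hmin⟩ := hD
  rw [codeM_indep, Ind, not_and] at hdep
  have := hdep hDE
  push_neg at this
  obtain ⟨c, hc, hsupp, hcne⟩ := this
  refine ⟨c, hc, hcne, ?_⟩
  have hsupp' : {e | c e ≠ 0} ⊆ D := fun e he => hsupp e he
  by_contra hne
  have hss : {e | c e ≠ 0} ⊂ D := ⟨hsupp', fun hsub => hne (hsupp'.antisymm hsub)⟩
  have := (hmin _ hss)
  rw [codeM_indep] at this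
  exact hcne (this.2 c hc (fun e he => he))

/-- a nonzero codeword of minimal support inside a given codeword; its support is
a circuit of the code matroid -/
lemma exists_min (ha : ∀ e, a e ≠ 0 → e ∈ G.edgeSet) {c : Sym2 V → ZMod 2}
    (hc : c ∈ Code G a) (hcne : c ≠ 0) :
    ∃ c', c' ∈ Code G a ∧ c' ≠ 0 ∧ {e | c' e ≠ 0} ⊆ {e | c e ≠ 0} ∧
      (CodeM G a).IsCircuitM {e | c' e ≠ 0} := by
  classical
  set S : Set ℕ := {n | ∃ c', c' ∈ Code G a ∧ c' ≠ 0 ∧ {e | c' e ≠ 0} ⊆ {e | c e ≠ 0} ∧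
    ({e | c' e ≠ 0}).ncard = n} with hS
  have hSne : ({e | c e ≠ 0}).ncard ∈ S := ⟨c, hc, hcne, le_refl _, rfl⟩
  have hex : ∃ n, n ∈ S := ⟨_, hSne⟩
  obtain ⟨c', hc', hc'ne, hc'sub, hc'card⟩ := Nat.find_spec hex
  refine ⟨c', hc', hc'ne, hc'sub, ?_⟩
  constructor
  · rw [Matroid.dep_iff, codeM_indep]
    refine ⟨fun hInd => hc'ne (hInd.2 c' hc' (fun e he => he)), fun e he => code_supp ha hc' e he⟩
  · intro D hD
    rw [codeM_indep]
    refine ⟨fun e he => code_supp ha hc' e (hD.subset he), ?_⟩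
    intro c'' hc'' hsupp
    by_contra hc''ne
    have hsupp' : {e | c'' e ≠ 0} ⊆ D := fun e he => hsupp e he
    have hss : {e | c'' e ≠ 0} ⊂ {e | c' e ≠ 0} :=
      Set.ssubset_of_subset_of_ssubset hsupp' hD
    have hlt : ({e | c'' e ≠ 0}).ncard < ({e | c' e ≠ 0}).ncard :=
      Set.ncard_lt_ncard hss (Set.toFinite _)
    exact Nat.find_min hex (hc'card ▸ hlt)
      ⟨c'', hc'', hc''ne, hsupp'.trans (hD.subset.trans hc'sub), rfl⟩


lemma zmod2_add_ne {x y : ZMod 2} (hxy : y ≠ 0 → x ≠ 0) :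
    (x + y ≠ 0 ↔ x ≠ 0 ∧ y = 0) := by
  revert hxy; revert x y; decide

lemma supp_add_of_subset {c c' : Sym2 V → ZMod 2}
    (h : {e | c' e ≠ 0} ⊆ {e | c e ≠ 0}) :
    {e | (c + c') e ≠ 0} = {e | c e ≠ 0} \ {e | c' e ≠ 0} := by
  ext e
  simp only [Set.mem_setOf_eq, Set.mem_diff, Pi.add_apply]
  rw [zmod2_add_ne (fun hy => h hy)]
  tauto

lemma eq_add_add (c c' : Sym2 V → ZMod 2) : c = c + c' + c' := by
  funext e
  simp only [Pi.add_apply]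
  rw [add_assoc, zmod2_add_self, add_zero]

/-- every codeword decomposes as a disjoint union of circuits of the code matroid -/
lemma decomp (ha : ∀ e, a e ≠ 0 → e ∈ G.edgeSet) :
    ∀ (n : ℕ) (c : Sym2 V → ZMod 2), c ∈ Code G a → ({e | c e ≠ 0}).ncard ≤ n →
    ∃ 𝒟 : Set (Set (Sym2 V)), (∀ D ∈ 𝒟, (CodeM G a).IsCircuitM D) ∧
      𝒟.PairwiseDisjoint id ∧ ⋃₀ 𝒟 = {e | c e ≠ 0} := by
  intro n
  induction n using Nat.strong_induction_on with
  | _ n ih =>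
    intro c hc hcard
    by_cases hc0 : c = 0
    · refine ⟨∅, by simp, by simp [Set.PairwiseDisjoint, Set.Pairwise], ?_⟩
      rw [Set.sUnion_empty, eq_comm, supp_zero_iff]
      exact hc0
    · obtain ⟨c', hc', hc'ne, hc'sub, hc'circ⟩ := exists_min ha hc hc0
      set c₂ := c + c' with hc₂
      have hsupp₂ : {e | c₂ e ≠ 0} = {e | c e ≠ 0} \ {e | c' e ≠ 0} :=
        supp_add_of_subset hc'sub
      have hc₂mem : c₂ ∈ Code G a := Submodule.add_mem _ hc hc'
      have hc'nonempty : ({e | c' e ≠ 0}).Nonempty := by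
        by_contra hne
        rw [Set.not_nonempty_iff_eq_empty, supp_zero_iff] at hne
        exact hc'ne hne
      have hss : {e | c₂ e ≠ 0} ⊂ {e | c e ≠ 0} := by
        rw [hsupp₂]
        constructor
        · exact Set.diff_subset
        · intro hsub
          obtain ⟨e, he⟩ := hc'nonempty
          exact (hsub (hc'sub he)).2 he
      have hlt : ({e | c₂ e ≠ 0}).ncard < n :=
        lt_of_lt_of_le (Set.ncard_lt_ncard hss (Set.toFinite _)) hcard
      obtain ⟨𝒟', h𝒟circ, h𝒟disj, h𝒟union⟩ := ih _ hlt c₂ hc₂mem (le_refl _)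
      refine ⟨insert {e | c' e ≠ 0} 𝒟', ?_, ?_, ?_⟩
      · intro D hD
        rcases hD with rfl | hD
        · exact hc'circ
        · exact h𝒟circ D hD
      · apply Set.PairwiseDisjoint.insert h𝒟disj
        intro D hD _
        have hDsub : D ⊆ {e | c₂ e ≠ 0} := h𝒟union ▸ Set.subset_sUnion_of_mem hD
        rw [Set.disjoint_left]
        intro e he heD
        exact ((hsupp₂ ▸ hDsub) heD).2 he
      · rw [Set.sUnion_insert, h𝒟union, hsupp₂, Set.union_diff_cancel hc'sub]

/-- the code matroid is binary -/
lemma codeM_binary (ha : ∀ e, a e ≠ 0 → e ∈ G.edgeSet) : (CodeM G a).IsBinaryM := by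
  intro C₁ C₂ h₁ h₂
  obtain ⟨c₁, hc₁, hc₁ne, hc₁supp⟩ := circuitM_vec h₁
  obtain ⟨c₂, hc₂, hc₂ne, hc₂supp⟩ := circuitM_vec h₂
  obtain ⟨𝒟, hcirc, hdisj, hunion⟩ :=
    decomp ha _ (c₁ + c₂) (Submodule.add_mem _ hc₁ hc₂) (le_refl _)
  refine ⟨𝒟, hcirc, hdisj, ?_⟩
  rw [hunion]
  ext e
  rw [Set.mem_symmDiff, ← hc₁supp, ← hc₂supp]
  simp only [Set.mem_setOf_eq, Pi.add_apply]
  have : ∀ x y : ZMod 2, (x + y ≠ 0 ↔ (x ≠ 0 ∧ ¬ y ≠ 0) ∨ (y ≠ 0 ∧ ¬ x ≠ 0)) := by decide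
  exact this _ _

/-- if every circuit of the code matroid were a graph circuit, every codeword
would have zero boundary -/
lemma bd_zero_of_allGraph (ha : ∀ e, a e ≠ 0 → e ∈ G.edgeSet)
    (hall : ∀ D, (CodeM G a).IsCircuitM D → G.IsCircuit D) :
    ∀ (n : ℕ) (c : Sym2 V → ZMod 2), c ∈ Code G a → ({e | c e ≠ 0}).ncard ≤ n →
      ∀ v, Bd c v = 0 := by
  intro n
  induction n using Nat.strong_induction_on with
  | _ n ih =>
    intro c hc hcard v
    by_cases hc0 : c = 0
    · subst hc0; simp [Bd]
    · obtain ⟨c', hc', hc'ne, hc'sub, hc'circ⟩ := exists_min ha hc hc0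
      obtain ⟨v', w, hw, heq⟩ := hall _ hc'circ
      have hc'chi : c' = chiL w.edges := by
        funext e
        by_cases he : c' e ≠ 0
        · rw [zmod2_ne _ he, chiL, if_pos]
          have : e ∈ {e | e ∈ w.edges} := heq ▸ he
          exact this
        · push_neg at he
          rw [he, chiL, eq_comm, ite_eq_right_iff]
          intro hmem
          exfalso
          have hmem' : e ∈ {e | e ∈ w.edges} := hmem
          rw [← heq] at hmem'
          exact hmem' he
      have hBc' : Bd c' = 0 := hc'chi ▸ Bd_chiL_cycle w hw
      set c₂ := c + c' with hc₂
      have hsupp₂ : {e | c₂ e ≠ 0} = {e | c e ≠ 0} \ {e | c' e ≠ 0} :=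
        supp_add_of_subset hc'sub
      have hc'nonempty : ({e | c' e ≠ 0}).Nonempty := by
        by_contra hne
        rw [Set.not_nonempty_iff_eq_empty, supp_zero_iff] at hne
        exact hc'ne hne
      have hss : {e | c₂ e ≠ 0} ⊂ {e | c e ≠ 0} := by
        rw [hsupp₂]
        refine ⟨Set.diff_subset, fun hsub => ?_⟩
        obtain ⟨e, he⟩ := hc'nonempty
        exact (hsub (hc'sub he)).2 he
      have hlt : ({e | c₂ e ≠ 0}).ncard < n :=
        lt_of_lt_of_le (Set.ncard_lt_ncard hss (Set.toFinite _)) hcard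
      have hBc₂ := ih _ hlt c₂ (Submodule.add_mem _ hc hc') (le_refl _) v
      have : Bd c v = Bd c₂ v + Bd c' v := by
        rw [← Pi.add_apply (Bd c₂) (Bd c'), ← Bd_add]
        congr 1
        exact eq_add_add c c'
      rw [this, hBc₂, congrFun hBc' v]
      simp


/-- If some "boundary vector" `a` supported on the edges of `G` has nonzero boundary
avoiding every cycle, then `G` admits a nontrivial circuit injection into a binary
matroid. -/
lemma main_lemma (ha : ∀ e, a e ≠ 0 → e ∈ G.edgeSet)
    (hane : ∃ x, Bd a x ≠ 0)
    (hA : ∀ (v : V) (w : G.Walk v v), w.IsCycle → ∃ x, Bd a x ≠ 0 ∧ ∀ e ∈ w.edges, x ∉ e) :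
    ∃ (B : Matroid (Sym2 V)) (f : Sym2 V → Sym2 V),
      B.IsBinaryM ∧ IsCircuitInjection G B f ∧ IsNontrivialCI G B f := by
  refine ⟨CodeM G a, id, codeM_binary ha, ⟨?_, ?_⟩, ?_⟩
  · exact ⟨fun x h => h, fun x _ y _ h => h, fun x hx => ⟨x, hx, rfl⟩⟩
  · intro C hC
    rw [Set.image_id]
    exact circuit_graph ha hA hC
  · by_contra hcon
    rw [IsNontrivialCI] at hcon
    push_neg at hcon
    have hall : ∀ D, (CodeM G a).IsCircuitM D → G.IsCircuit D := by
      intro D hD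
      obtain ⟨C, hC, hCD⟩ := hcon D hD
      rw [Set.image_id] at hCD
      exact hCD ▸ hC
    have hamem : a ∈ Code G a := Submodule.subset_span (Set.mem_insert _ _)
    obtain ⟨x, hx⟩ := hane
    exact hx (bd_zero_of_allGraph ha hall _ a hamem (le_refl _) x)

lemma Bd_sum {ι : Type*} (s : Finset ι) (f : ι → (Sym2 V → ZMod 2)) :
    Bd (∑ i ∈ s, f i) = ∑ i ∈ s, Bd (f i) := by
  induction s using Finset.cons_induction with
  | empty => simp; funext v; simp [Bd]
  | cons i s hi ih => rw [Finset.sum_cons, Finset.sum_cons, Bd_add, ih]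

end Matroid

end Stmt15Aux

open Stmt15Aux

/-- A graph of odd order `n`, with no isolated vertices, admitting no
nontrivial circuit injection into a binary matroid, is almost Hamiltonian: every set of
`n - 1` vertices lies on a common circuit. -/
theorem stmt_15 {V : Type*} [Fintype V] (G : SimpleGraph V)
    (hoddn : Odd (Fintype.card V))
    (hiso : ∀ v : V, ∃ w : V, G.Adj v w)
    (h : NoNontrivialBinaryMap G) :
    ∀ T : Set V, T.ncard = Fintype.card V - 1 →
      ∃ C, G.IsCircuit C ∧ ∀ v ∈ T, ∃ e ∈ C, v ∈ e := by
  classical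
  by_contra hcon
  push_neg at hcon
  obtain ⟨T, hT, hnc⟩ := hcon
  -- no circuit covers all of T
  have hnc' : ∀ C, G.IsCircuit C → ∃ v ∈ T, ∀ e ∈ C, v ∉ e := by
    intro C hC
    obtain ⟨v, hvT, hv⟩ := hnc C hC
    exact ⟨v, hvT, fun e he hve => hv e he hve⟩
  apply h
  by_cases hreach : ∀ u v : V, G.Reachable u v
  · -- connected case
    have hn1 : Fintype.card V ≠ 1 := by
      intro h1
      have hpos : 0 < Fintype.card V := by omega
      obtain ⟨v⟩ := Fintype.card_pos_iff.1 hpos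
      obtain ⟨w', hw'⟩ := hiso v
      exact G.ne_of_adj hw' (Fintype.card_le_one_iff.1 (le_of_eq h1) v w')
    have hge3 : 3 ≤ Fintype.card V := by
      rcases hoddn with ⟨k, hk⟩
      omega
    have hcompl : T.ncard + Tᶜ.ncard = Fintype.card V := (Set.ncard_add_ncard_compl T).trans Nat.card_eq_fintype_card
    have hTc1 : Tᶜ.ncard = 1 := by omega
    obtain ⟨x, hx⟩ := Set.ncard_eq_one.1 hTc1
    have hmemT : ∀ v, v ∈ T ↔ v ≠ x := by
      intro v
      rw [← Set.notMem_compl_iff, hx, Set.mem_singleton_iff]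
    set Tf : Finset V := (Set.toFinite T).toFinset with hTf
    have hTfmem : ∀ v, v ∈ Tf ↔ v ∈ T := fun v => Set.Finite.mem_toFinset _
    set a : Sym2 V → ZMod 2 := ∑ v ∈ Tf, wvec (hreach x v).some with ha_def
    have ha : ∀ e, a e ≠ 0 → e ∈ G.edgeSet := by
      intro e he
      rw [ha_def, Finset.sum_apply] at he
      obtain ⟨v, _, hne⟩ := Finset.exists_ne_zero_of_sum_ne_zero he
      exact wvec_supp _ e hne
    have hBd : ∀ t ∈ T, Bd a t = 1 := by
      intro t ht
      rw [ha_def, Bd_sum, Finset.sum_apply]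
      have hterm : ∀ v ∈ Tf, Bd (wvec (hreach x v).some) t = vvec x t + vvec v t := by
        intro v _
        rw [Bd_wvec]
        rfl
      rw [Finset.sum_congr rfl hterm, Finset.sum_add_distrib]
      have h1 : ∑ _v ∈ Tf, vvec x t = 0 := by
        apply Finset.sum_eq_zero
        intro v _
        rw [vvec, if_neg ((hmemT t).1 ht)]
      have h2 : ∑ v ∈ Tf, vvec v t = 1 := by
        have hsum := Finset.sum_ite_eq Tf t (fun _ => (1 : ZMod 2))
        simpa [vvec, (hTfmem t).2 ht] using hsum
      rw [h1, h2, zero_add]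
    have hTne : T.Nonempty := by
      apply Set.nonempty_of_ncard_ne_zero
      omega
    obtain ⟨t₀, ht₀⟩ := hTne
    apply main_lemma ha ⟨t₀, by rw [hBd t₀ ht₀]; exact one_ne_zero⟩
    intro v w hw
    obtain ⟨t, htT, hte⟩ := hnc' {e | e ∈ w.edges} ⟨v, w, hw, rfl⟩
    exact ⟨t, by rw [hBd t htT]; exact one_ne_zero, fun e he => hte e he⟩
  · -- disconnected case
    push_neg at hreach
    obtain ⟨u₀, v₀, hnr⟩ := hreach
    obtain ⟨u₁, hu₁⟩ := hiso u₀
    obtain ⟨v₁, hv₁⟩ := hiso v₀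
    set a : Sym2 V → ZMod 2 := dvec s(u₀, u₁) + dvec s(v₀, v₁) with ha_def
    have hu₀v : u₀ ∉ s(v₀, v₁) := by
      rw [Sym2.mem_iff]
      rintro (rfl | rfl)
      · exact hnr (SimpleGraph.Reachable.refl _)
      · exact hnr hv₁.symm.reachable
    have hv₀u : v₀ ∉ s(u₀, u₁) := by
      rw [Sym2.mem_iff]
      rintro (rfl | rfl)
      · exact hnr (SimpleGraph.Reachable.refl _)
      · exact hnr hu₁.reachable
    have hBu₀ : Bd a u₀ = 1 := by
      rw [ha_def, Bd_add, Pi.add_apply, Bd_dvec, Bd_dvec,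
        if_pos (Sym2.mem_mk_left u₀ u₁), if_neg hu₀v, add_zero]
    have hBv₀ : Bd a v₀ = 1 := by
      rw [ha_def, Bd_add, Pi.add_apply, Bd_dvec, Bd_dvec,
        if_neg hv₀u, if_pos (Sym2.mem_mk_left v₀ v₁), zero_add]
    have ha : ∀ e, a e ≠ 0 → e ∈ G.edgeSet := by
      intro e he
      rw [ha_def, Pi.add_apply] at he
      by_cases h1 : dvec s(u₀, u₁) e = 0
      · have h2 : dvec s(v₀, v₁) e ≠ 0 := by simpa [h1] using he
        have : e = s(v₀, v₁) := by by_contra hne; exact h2 (if_neg hne)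
        rw [this]; exact hv₁
      · have : e = s(u₀, u₁) := by by_contra hne; exact h1 (if_neg hne)
        rw [this]; exact hu₁
    apply main_lemma ha ⟨u₀, by rw [hBu₀]; exact one_ne_zero⟩
    intro v w hw
    by_cases hu : ∃ e ∈ w.edges, u₀ ∈ e
    · refine ⟨v₀, by rw [hBv₀]; exact one_ne_zero, ?_⟩
      intro e he hv₀e
      obtain ⟨e', he', hu₀e⟩ := hu
      have hsup1 : u₀ ∈ w.support := mem_support_of_mem_edges' w he' hu₀e
      have hsup2 : v₀ ∈ w.support := mem_support_of_mem_edges' w he hv₀e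
      exact hnr (((w.takeUntil u₀ hsup1).reverse.append (w.takeUntil v₀ hsup2)).reachable)
    · push_neg at hu
      exact ⟨u₀, by rw [hBu₀]; exact one_ne_zero, hu⟩
end

section
/- Let G be a Hamiltonian graph. Then every circuit injection from the cycle matroid of G into any matroid is trivial. -/
section helpers_stmt16

open Set

variable {V : Type*} {α : Type*} {G : SimpleGraph V}

lemma circuitM_mem_closure {M : Matroid α} {K : Set α} (hK : M.IsCircuitM K) {x : α}
    (hx : x ∈ K) : x ∈ M.closure (K \ {x}) := by
  have hI : M.Indep (K \ {x}) := hK.2 _ (Set.sdiff_singleton_ssubset.2 hx)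
  have hdep : M.Dep (insert x (K \ {x})) := by
    rw [Set.insert_diff_singleton, Set.insert_eq_of_mem hx]
    exact hK.1
  exact (hI.insert_dep_iff.mp hdep).1

lemma fromEdgeSet_le_of_subset {S : Set (Sym2 V)} (hS : S ⊆ G.edgeSet) :
    SimpleGraph.fromEdgeSet S ≤ G := by
  intro a b hab
  rw [SimpleGraph.fromEdgeSet_adj] at hab
  exact (G.mem_edgeSet).mp (hS hab.1)

lemma edges_mapLe {G' : SimpleGraph V} (h : G ≤ G') {u v : V} (p : G.Walk u v) :
    (p.mapLe h).edges = p.edges := by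
  exact SimpleGraph.Walk.edges_mapLe_eq_edges h p

lemma exists_circuit_of_not_isAcyclic {S : Set (Sym2 V)}
    (hS : S ⊆ G.edgeSet) (h : ¬ (SimpleGraph.fromEdgeSet S).IsAcyclic) :
    ∃ C, G.IsCircuit C ∧ C ⊆ S := by
  simp only [SimpleGraph.IsAcyclic, not_forall, not_not] at h
  obtain ⟨v, c, hc⟩ := h
  have hle := fromEdgeSet_le_of_subset hS
  refine ⟨{e | e ∈ (c.mapLe hle).edges}, ⟨v, c.mapLe hle, hc.mapLe hle, rfl⟩, ?_⟩
  intro e he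
  rw [Set.mem_setOf_eq, edges_mapLe] at he
  have h2 := c.edges_subset_edgeSet he
  rw [SimpleGraph.edgeSet_fromEdgeSet] at h2
  exact h2.1

lemma exists_fund_circuit {S : Set (Sym2 V)} (hS : S ⊆ G.edgeSet) {x y : V}
    (hadj : G.Adj x y) (he : s(x, y) ∉ S)
    (hr : (SimpleGraph.fromEdgeSet S).Reachable x y) :
    ∃ C, G.IsCircuit C ∧ C ⊆ insert s(x, y) S ∧ s(x, y) ∈ C := by
  classical
  have hle := fromEdgeSet_le_of_subset hS
  obtain ⟨q0⟩ := hr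
  have hq1 : ∀ e ∈ (q0.mapLe hle).edges, e ∈ S := by
    intro e hee
    rw [edges_mapLe] at hee
    have h2 := q0.edges_subset_edgeSet hee
    rw [SimpleGraph.edgeSet_fromEdgeSet] at h2
    exact h2.1
  set p := (q0.mapLe hle).toPath with hp
  have hpe : ∀ e ∈ (p : G.Walk x y).edges, e ∈ S := fun e hee =>
    hq1 e (SimpleGraph.Walk.edges_toPath_subset _ hee)
  have hnotin : s(y, x) ∉ (p : G.Walk x y).edges := by
    intro hmem
    exact he (by rw [Sym2.eq_swap]; exact hpe _ hmem)
  have hcyc : (SimpleGraph.Walk.cons hadj.symm ↑p).IsCycle :=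
    SimpleGraph.Path.cons_isCycle p hadj.symm hnotin
  set w0 : G.Walk y y := SimpleGraph.Walk.cons hadj.symm ↑p with hw0
  refine ⟨{e | e ∈ w0.edges}, ⟨y, w0, hcyc, rfl⟩, ?_, ?_⟩
  · intro e hee
    rw [Set.mem_setOf_eq, hw0, SimpleGraph.Walk.edges_cons] at hee
    rcases List.mem_cons.mp hee with h2 | h2
    · rw [h2, Sym2.eq_swap]; exact Set.mem_insert _ _
    · exact Set.mem_insert_of_mem _ (hpe _ h2)
  · rw [Set.mem_setOf_eq, hw0, SimpleGraph.Walk.edges_cons, Sym2.eq_swap]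
    exact List.mem_cons_self

lemma reachable_along {R : SimpleGraph V} {H : Set (Sym2 V)}
    (hrel : ∀ a b : V, G.Adj a b → s(a, b) ∈ H → R.Reachable a b) :
    ∀ {x y : V} (p : G.Walk x y), (∀ e ∈ p.edges, e ∈ H) → R.Reachable x y := by
  intro x y p
  induction p with
  | nil => exact fun _ => SimpleGraph.Reachable.refl _
  | cons h q ih =>
    intro hsub
    have h1 : R.Reachable _ _ := hrel _ _ h (hsub _ (by simp))
    exact h1.trans (ih (fun e hee => hsub e (by simp [hee])))

end helpers_stmt16

/-- If `G` is a Hamiltonian graph, then every circuit injection from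
the cycle matroid of `G` into any matroid is trivial. -/
theorem stmt_16 {V α : Type*} [Fintype V] (G : SimpleGraph V)
    (hham : ∃ C, G.IsCircuit C ∧ ∀ v : V, ∃ e ∈ C, v ∈ e)
    (M : Matroid α) (f : Sym2 V → α)
    (hf : IsCircuitInjection G M f) :
    ∀ D, M.IsCircuitM D → ∃ C, G.IsCircuit C ∧ f '' C = D := by
  classical
  obtain ⟨C, hC, hcov⟩ := hham
  obtain ⟨hbij, hcirc⟩ := hf
  obtain ⟨v₀, w, hw, hCeq⟩ := hC
  intro D hD
  have hCsub : C ⊆ G.edgeSet := by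
    rw [hCeq]; intro e he; exact w.edges_subset_edgeSet he
  have hDE : D ⊆ M.E := hD.1.subset_ground
  set F : Set (Sym2 V) := f ⁻¹' D ∩ G.edgeSet with hF
  have hFsub : F ⊆ G.edgeSet := Set.inter_subset_right
  have hFD : f '' F = D := by
    apply Set.Subset.antisymm
    · rintro z ⟨e, ⟨he1, _⟩, rfl⟩; exact he1
    · intro z hz
      obtain ⟨e, heE, rfl⟩ := hbij.surjOn (hDE hz)
      exact ⟨e, ⟨hz, heE⟩, rfl⟩
  by_cases hacyc : (SimpleGraph.fromEdgeSet F).IsAcyclic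
  case neg =>
    obtain ⟨C', hC', hC'F⟩ := exists_circuit_of_not_isAcyclic hFsub hacyc
    refine ⟨C', hC', ?_⟩
    have hsub : f '' C' ⊆ D := by
      rintro z ⟨e, he, rfl⟩; exact (hC'F he).1
    by_contra hne
    exact (hcirc C' hC').1.not_indep (hD.2 _ (hsub.ssubset_of_ne hne))
  case pos =>
  exfalso
  -- all the machinery
  have hmemsupp : ∀ v : V, v ∈ w.support := by
    intro v
    obtain ⟨e, heC, hve⟩ := hcov v
    have hew : e ∈ w.edges := by rw [hCeq] at heC; exact heC
    clear heC
    revert hve hew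
    induction e using Sym2.ind with
    | _ a b =>
      intro hve hew
      rcases Sym2.mem_iff.mp hve with rfl | rfl
      · exact w.fst_mem_support_of_mem_edges hew
      · exact w.snd_mem_support_of_mem_edges hew
  -- generic preconnectedness transfer
  have key : ∀ (R : SimpleGraph V),
      (∀ a b : V, G.Adj a b → s(a, b) ∈ C → R.Reachable a b) →
      ∀ a b : V, R.Reachable a b := by
    intro R hrel
    have hv0 : ∀ v : V, R.Reachable v₀ v := by
      intro v
      refine reachable_along hrel (w.takeUntil v (hmemsupp v)) ?_
      intro e he
      rw [hCeq]
      exact w.edges_takeUntil_subset (hmemsupp v) he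
    intro a b; exact (hv0 a).symm.trans (hv0 b)
  -- spanning lemma
  have hspan : ∀ S : Set (Sym2 V), S ⊆ G.edgeSet →
      (∀ a b : V, (SimpleGraph.fromEdgeSet S).Reachable a b) →
      M.E ⊆ M.closure (f '' S) := by
    intro S hSE hreach z hz
    have hfS_E : f '' S ⊆ M.E := by rintro _ ⟨e', he', rfl⟩; exact hbij.mapsTo (hSE he')
    obtain ⟨e, heE, rfl⟩ := hbij.surjOn hz
    by_cases heS : e ∈ S
    · exact M.subset_closure (f '' S) hfS_E ⟨e, heS, rfl⟩
    revert heE heS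
    induction e using Sym2.ind with
    | _ x y =>
      intro heE heS
      have hadj : G.Adj x y := (G.mem_edgeSet).mp heE
      obtain ⟨C', hC', hC'sub, heC'⟩ := exists_fund_circuit hSE hadj heS (hreach x y)
      have hcm := hcirc C' hC'
      have hmem := circuitM_mem_closure hcm (⟨s(x, y), heC', rfl⟩ : f s(x, y) ∈ f '' C')
      refine M.closure_subset_closure ?_ hmem
      rintro z ⟨⟨e', he', rfl⟩, hz2⟩
      rcases hC'sub he' with h | h
      · exact absurd (by rw [h] : f e' = f s(x, y)) (by simpa using hz2)
      · exact ⟨e', h, rfl⟩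
  -- cardinality of the Hamiltonian circuit
  have htail_len : w.support.tail.length = w.length := by
    have h1 := w.length_support
    have h2 : w.support.tail.length = w.support.length - 1 := by
      simp [List.length_tail]
    omega
  have htailne : w.support.tail ≠ [] := by
    intro h0
    have h3 := hw.three_le_length
    rw [← htail_len, h0] at h3
    simp at h3
  have hv0tail : v₀ ∈ w.support.tail := by
    have h6 : w.support.getLast? = some v₀ := by
      rw [List.getLast?_eq_getLast w.support_ne_nil, w.getLast_support]
    rcases hlsplit : w.support.tail with _ | ⟨b, l⟩
    · exact absurd hlsplit htailne
    · have h8 : w.support = v₀ :: b :: l := by rw [w.support_eq_cons, hlsplit]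
      rw [h8, List.getLast?_cons_cons,
        List.getLast?_eq_getLast (List.cons_ne_nil b l)] at h6
      have h10 := Option.some_injective _ h6
      exact h10 ▸ List.getLast_mem (List.cons_ne_nil b l)
  have halltail : ∀ v : V, v ∈ w.support.tail := by
    intro v
    have := hmemsupp v
    rw [w.support_eq_cons] at this
    rcases List.mem_cons.mp this with h | h
    · exact h ▸ hv0tail
    · exact h
  have hlen : w.edges.length = Fintype.card V := by
    have h4 : w.support.tail.toFinset = Finset.univ :=
      Finset.eq_univ_iff_forall.mpr (fun v => List.mem_toFinset.mpr (halltail v))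
    have h5 := List.toFinset_card_of_nodup hw.support_nodup
    rw [h4, Finset.card_univ] at h5
    rw [w.length_edges, ← htail_len, ← h5]
  have hencC : C.encard = (Fintype.card V : ℕ∞) := by
    have h1 : C = ↑w.edges.toFinset := by rw [hCeq]; ext e; simp
    rw [h1, Set.encard_coe_eq_coe_finsetCard,
      List.toFinset_card_of_nodup hw.isTrail.edges_nodup, hlen]
  -- the collection of acyclic edge sets between F and F ∪ C
  set 𝒜 : Set (Set (Sym2 V)) :=
    {X | F ⊆ X ∧ X ⊆ F ∪ C ∧ (SimpleGraph.fromEdgeSet X).IsAcyclic} with h𝒜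
  have h𝒜fin : 𝒜.Finite := Set.toFinite _
  have h𝒜ne : 𝒜.Nonempty := ⟨F, Set.Subset.rfl, Set.subset_union_left, hacyc⟩
  obtain ⟨T, hT𝒜, hTmax⟩ := Set.Finite.exists_maximalFor id 𝒜 h𝒜fin h𝒜ne
  obtain ⟨hFT, hTFC, hTacyc⟩ := hT𝒜
  have hTE : T ⊆ G.edgeSet := hTFC.trans (Set.union_subset hFsub hCsub)
  -- the maximal acyclic set is spanning-connected
  have hTreach : ∀ a b : V, (SimpleGraph.fromEdgeSet T).Reachable a b := by
    apply key (SimpleGraph.fromEdgeSet T)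
    intro x y hadj hxyC
    by_contra hnr
    have heT : s(x, y) ∉ T := fun hmem =>
      hnr (((SimpleGraph.fromEdgeSet_adj _).mpr ⟨hmem, hadj.ne⟩).reachable)
    set X' : Set (Sym2 V) := insert s(x, y) T with hX'
    have hX'acyc : (SimpleGraph.fromEdgeSet X').IsAcyclic := by
      intro v c hc
      by_cases hec : s(x, y) ∈ c.edges
      · have hiff := (SimpleGraph.adj_and_reachable_delete_edges_iff_exists_cycle
          (G := SimpleGraph.fromEdgeSet X') (v := x) (w := y)).mpr ⟨v, c, hc, hec⟩
        apply hnr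
        refine hiff.2.mono ?_
        intro a b hab
        rw [SimpleGraph.deleteEdges_adj, SimpleGraph.fromEdgeSet_adj] at hab
        obtain ⟨⟨habX, habne⟩, hab2⟩ := hab
        rw [SimpleGraph.fromEdgeSet_adj]
        refine ⟨?_, habne⟩
        rcases (Set.mem_insert_iff.mp habX) with h | h
        · exact absurd h hab2
        · exact h
      · have hce : ∀ e ∈ c.edges, e ∈ (SimpleGraph.fromEdgeSet T).edgeSet := by
          intro e hee
          have h2 := c.edges_subset_edgeSet hee
          rw [SimpleGraph.edgeSet_fromEdgeSet] at h2 ⊢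
          rcases Set.mem_insert_iff.mp h2.1 with h | h
          · exact absurd (h ▸ hee) hec
          · exact ⟨h, h2.2⟩
        exact hTacyc (c.transfer _ hce) (hc.transfer hce)
    have hX'𝒜 : X' ∈ 𝒜 :=
      ⟨hFT.trans (Set.subset_insert _ _),
        Set.insert_subset (Set.mem_union_right _ hxyC) hTFC, hX'acyc⟩
    have hTX' := hTmax hX'𝒜 (Set.subset_insert _ _)
    simp only [id] at hTX'
    exact heT (hTX' (Set.mem_insert _ _))
  haveI : Nonempty V := ⟨v₀⟩
  have hconn : (SimpleGraph.fromEdgeSet T).Connected := by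
    rw [SimpleGraph.connected_iff]; exact ⟨hTreach, ⟨v₀⟩⟩
  have htree : (SimpleGraph.fromEdgeSet T).IsTree := ⟨hconn, hTacyc⟩
  haveI : Fintype ((SimpleGraph.fromEdgeSet T).edgeSet) := Set.Finite.fintype (Set.toFinite _)
  have hcount := htree.card_edgeFinset
  have hTeq : (SimpleGraph.fromEdgeSet T).edgeSet = T := by
    rw [SimpleGraph.edgeSet_fromEdgeSet]
    apply Set.Subset.antisymm Set.diff_subset
    rw [Set.subset_diff]
    exact ⟨Set.Subset.rfl, Set.disjoint_left.mpr
      (fun e he hdiag => G.not_isDiag_of_mem_edgeSet (hTE he) hdiag)⟩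
  have hencT : T.encard = ((Fintype.card V - 1 : ℕ) : ℕ∞) := by
    rw [← hTeq, Set.encard_eq_coe_toFinset_card]
    congr 1
    have : ((SimpleGraph.fromEdgeSet T).edgeSet).toFinset
        = (SimpleGraph.fromEdgeSet T).edgeFinset := rfl
    rw [this]
    omega
  -- matroid endgame
  have hCM : M.IsCircuitM (f '' C) := hcirc C ⟨v₀, w, hw, hCeq⟩
  have hinjC : Set.InjOn f C := hbij.injOn.mono hCsub
  have hencfC : (f '' C).encard = (Fintype.card V : ℕ∞) := by
    rw [hinjC.encard_image, hencC]
  obtain ⟨e₀, he₀, _⟩ := hcov v₀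
  have hfe₀ : f e₀ ∈ f '' C := ⟨e₀, he₀, rfl⟩
  set B0 : Set α := f '' C \ {f e₀} with hB0
  have hB0i : M.Indep B0 := hCM.2 _ (Set.sdiff_singleton_ssubset.2 hfe₀)
  have hB0E : B0 ⊆ M.E := hB0i.subset_ground
  have hfCE : f '' C ⊆ M.E := hCM.1.subset_ground
  have hCreach : ∀ a b : V, (SimpleGraph.fromEdgeSet C).Reachable a b :=
    key (SimpleGraph.fromEdgeSet C)
      (fun a b hadj hab => ((SimpleGraph.fromEdgeSet_adj _).mpr ⟨hab, hadj.ne⟩).reachable)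
  have hspanC : M.E ⊆ M.closure (f '' C) := hspan C hCsub hCreach
  have hclB0 : M.E ⊆ M.closure B0 := by
    have h1 : f '' C ⊆ M.closure B0 := by
      intro z hz
      by_cases hze : z = f e₀
      · subst hze; exact circuitM_mem_closure hCM hfe₀
      · exact M.subset_closure B0 hB0E ⟨hz, hze⟩
    exact hspanC.trans (M.closure_subset_closure_of_subset_closure h1)
  have hB0base : M.IsBase B0 := hB0i.isBase_of_ground_subset_closure hclB0
  have hfTE : f '' T ⊆ M.E := by rintro _ ⟨e', he', rfl⟩; exact hbij.mapsTo (hTE he')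
  have hspanT : M.E ⊆ M.closure (f '' T) := hspan T hTE hTreach
  obtain ⟨I, hI⟩ := M.exists_isBasis (f '' T) hfTE
  have hIbase : M.IsBase I := hI.indep.isBase_of_ground_subset_closure
    (by rw [hI.closure_eq_closure]; exact hspanT)
  have hencI : I.encard = B0.encard := hIbase.encard_eq_encard_of_isBase hB0base
  have hencB0 : B0.encard = (Fintype.card V : ℕ∞) - 1 := by
    rw [hB0, Set.encard_diff_singleton_of_mem hfe₀, hencfC]
  have hencfT : (f '' T).encard = ((Fintype.card V - 1 : ℕ) : ℕ∞) := by
    rw [(hbij.injOn.mono hTE).encard_image, hencT]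
  have hcast : ((Fintype.card V - 1 : ℕ) : ℕ∞) = (Fintype.card V : ℕ∞) - 1 := by
    exact ENat.coe_sub _ _
  have hle : (f '' T).encard ≤ I.encard := by
    rw [hencfT, hencI, hencB0, hcast]
  have hIT : I = f '' T :=
    ((Set.toFinite T).image f).eq_of_subset_of_encard_le' hI.subset hle
  have hfTi : M.Indep (f '' T) := hIT ▸ hI.indep
  have hDsub : D ⊆ f '' T := by rw [← hFD]; exact Set.image_mono hFT
  exact hD.1.not_indep (hfTi.subset hDsub)
end

section
/- Let G be an almost Hamiltonian graph of odd order 2N+1. Then every circuit injection from the cycle matroid of G into a binary matroid is trivial. -/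
open scoped symmDiff



namespace Stmt17
variable {V : Type*}

/-- Degree of a vertex in a set of edges. -/
noncomputable def edeg (S : Set (Sym2 V)) (v : V) : ℕ := {e ∈ S | v ∈ e}.ncard

/-- The set of vertices of odd degree ("odd boundary"). -/
def obd (S : Set (Sym2 V)) : Set V := {v | Odd (edeg S v)}

lemma ncard_symmDiff_add {α : Type*} (A B : Set α) (hA : A.Finite) (hB : B.Finite) :
    (A ∆ B).ncard + 2 * (A ∩ B).ncard = A.ncard + B.ncard := by
  have h1 : A ∆ B = (A ∪ B) \ (A ∩ B) := by
    ext x; simp only [Set.mem_symmDiff, Set.mem_diff, Set.mem_union, Set.mem_inter_iff]; tauto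
  have h2 := Set.ncard_union_add_ncard_inter A B hA hB
  have h3 : (A ∩ B) ⊆ (A ∪ B) := (Set.inter_subset_left).trans Set.subset_union_left
  have h4 : ((A ∪ B) \ (A ∩ B)).ncard = (A ∪ B).ncard - (A ∩ B).ncard :=
    Set.ncard_diff h3 (hA.subset Set.inter_subset_left)
  have h5 : (A ∩ B).ncard ≤ (A ∪ B).ncard := Set.ncard_le_ncard h3 (hA.union hB)
  rw [h1, h4]
  omega

lemma odd_ncard_symmDiff {α : Type*} (A B : Set α) (hA : A.Finite) (hB : B.Finite) :
    Odd ((A ∆ B).ncard) ↔ ¬ (Odd A.ncard ↔ Odd B.ncard) := by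
  have := ncard_symmDiff_add A B hA hB
  simp only [Nat.odd_iff] at *
  omega

lemma sep_symmDiff (A B : Set (Sym2 V)) (v : V) :
    {e ∈ A ∆ B | v ∈ e} = {e ∈ A | v ∈ e} ∆ {e ∈ B | v ∈ e} := by
  ext e
  simp only [Set.mem_setOf_eq, Set.mem_symmDiff]
  tauto

lemma obd_symmDiff [Finite V] (A B : Set (Sym2 V)) : obd (A ∆ B) = obd A ∆ obd B := by
  ext v
  have hfin : ∀ S : Set (Sym2 V), S.Finite := fun S => S.toFinite
  have h1 : v ∈ obd (A ∆ B) ↔ ¬ (Odd (edeg A v) ↔ Odd (edeg B v)) := by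
    rw [obd, Set.mem_setOf_eq, edeg, sep_symmDiff]
    exact odd_ncard_symmDiff _ _ (hfin _) (hfin _)
  rw [h1]
  simp only [Set.mem_symmDiff, obd, Set.mem_setOf_eq]
  tauto

lemma edeg_insert_mem (S : Set (Sym2 V)) (e : Sym2 V) (he : e ∉ S) (hfin : S.Finite)
    {v : V} (hv : v ∈ e) : edeg (insert e S) v = edeg S v + 1 := by
  unfold edeg
  have : {x ∈ insert e S | v ∈ x} = insert e {x ∈ S | v ∈ x} := by
    ext x; simp only [Set.mem_insert_iff, Set.mem_setOf_eq]
    constructor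
    · rintro ⟨(rfl | hx), hvx⟩ <;> tauto
    · rintro (rfl | ⟨hx, hvx⟩) <;> tauto
  rw [this, Set.ncard_insert_of_notMem (fun h => he h.1) (hfin.subset (Set.sep_subset _ _))]

lemma edeg_insert_not_mem (S : Set (Sym2 V)) (e : Sym2 V)
    {v : V} (hv : v ∉ e) : edeg (insert e S) v = edeg S v := by
  unfold edeg
  congr 1
  ext x; simp only [Set.mem_insert_iff, Set.mem_setOf_eq]
  constructor
  · rintro ⟨(rfl | hx), hvx⟩
    · exact absurd hvx hv
    · tauto
  · tauto

lemma obd_empty : obd (∅ : Set (Sym2 V)) = ∅ := by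
  ext v; simp [obd, edeg]

lemma obd_single {a b : V} (hab : a ≠ b) : obd ({s(a,b)} : Set (Sym2 V)) = {a, b} := by
  ext v
  simp only [obd, edeg, Set.mem_setOf_eq]
  by_cases hv : v ∈ s(a,b)
  · have h1 : {e ∈ ({s(a,b)} : Set (Sym2 V)) | v ∈ e} = {s(a,b)} := by
      ext e; simp only [Set.mem_setOf_eq, Set.mem_singleton_iff]
      exact ⟨fun h => h.1, fun h => ⟨h, h ▸ hv⟩⟩
    rw [h1, Set.ncard_singleton]
    simp only [Sym2.mem_iff] at hv
    simpa using hv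
  · have h1 : {e ∈ ({s(a,b)} : Set (Sym2 V)) | v ∈ e} = ∅ := by
      ext e; simp only [Set.mem_setOf_eq, Set.mem_singleton_iff, Set.mem_empty_iff_false,
        iff_false, not_and]
      rintro rfl; exact hv
    rw [h1]
    simp only [Sym2.mem_iff] at hv
    push_neg at hv
    simp only [Set.ncard_empty, Set.mem_insert_iff, Set.mem_singleton_iff]
    constructor
    · intro h; exact absurd h (by simp [Nat.odd_iff])
    · rintro (rfl | rfl)
      · exact absurd rfl hv.1
      · exact absurd rfl hv.2

open SimpleGraph

variable {G : SimpleGraph V}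

/-- The edge set of a walk. -/
def ES {u v : V} (p : G.Walk u v) : Set (Sym2 V) := {e | e ∈ p.edges}

lemma ES_subset_edgeSet {u v : V} (p : G.Walk u v) : ES p ⊆ G.edgeSet :=
  fun _ he => p.edges_subset_edgeSet he

lemma mem_support_of_mem_ES {u v x : V} {p : G.Walk u v} {e : Sym2 V}
    (he : e ∈ p.edges) (hx : x ∈ e) : x ∈ p.support := by
  induction e using Sym2.ind with
  | _ a b =>
    rcases Sym2.mem_iff.1 hx with rfl | rfl
    · exact p.fst_mem_support_of_mem_edges he
    · exact p.snd_mem_support_of_mem_edges he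

lemma insert_eq_symmDiff {α : Type*} (e : α) (S : Set α) (he : e ∉ S) :
    insert e S = {e} ∆ S := by
  ext x
  simp only [Set.mem_insert_iff, Set.mem_symmDiff, Set.mem_singleton_iff]
  constructor
  · rintro (rfl | hx)
    · exact Or.inl ⟨rfl, he⟩
    · exact Or.inr ⟨hx, fun h => he (h ▸ hx)⟩
  · rintro (⟨rfl, _⟩ | ⟨hx, _⟩)
    · exact Or.inl rfl
    · exact Or.inr hx

lemma isPath_ne {u v : V} {q : G.Walk u v} (hq : q.IsPath) (hne : ¬ q.Nil) : u ≠ v := by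
  cases q with
  | nil => exact absurd Walk.nil_nil hne
  | cons h' q' =>
    rintro rfl
    rw [Walk.cons_isPath_iff] at hq
    exact hq.2 (q'.end_mem_support)

lemma obd_path [Finite V] : ∀ {u v : V} (p : G.Walk u v), p.IsPath → u ≠ v →
    obd (ES p) = {u, v} := by
  intro u v p
  induction p with
  | nil => intro _ h; exact absurd rfl h
  | @cons u w v h q ih =>
    intro hp hne
    rw [Walk.cons_isPath_iff] at hp
    have hq := hp.1
    have hu : u ∉ q.support := hp.2
    have hES : ES (Walk.cons h q) = insert s(u, w) (ES q) := by
      ext e; simp [ES, Walk.edges_cons]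
    have hnm : s(u, w) ∉ ES q := fun hmem => hu (mem_support_of_mem_ES hmem (by simp))
    rw [hES, insert_eq_symmDiff _ _ hnm, obd_symmDiff, obd_single h.ne]
    by_cases hnil : q.Nil
    · have : w = v := Walk.Nil.eq hnil  -- q : Walk w v nil means w = v??
      subst this
      have : ES q = ∅ := by
        cases q with
        | nil => ext e; simp [ES]
        | cons h' q' => exact absurd hnil Walk.not_nil_cons
      rw [this, obd_empty]
      ext x; simp [Set.mem_symmDiff]
    · have hwv : w ≠ v := isPath_ne hq hnil
      rw [ih hq hwv]
      ext x
      simp only [Set.mem_symmDiff, Set.mem_insert_iff, Set.mem_singleton_iff]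
      constructor
      · rintro (⟨h1, h2⟩ | ⟨h1, h2⟩)
        · rcases h1 with rfl | rfl
          · exact Or.inl rfl
          · exact absurd (Or.inl rfl) h2
        · rcases h1 with rfl | rfl
          · exact absurd (Or.inr rfl) h2
          · exact Or.inr rfl
      · have huv : u ≠ v := hne
        have huw : u ≠ w := h.ne
        have hwu : ¬ (u = w ∨ u = v) := by rintro (rfl | rfl) <;> simp_all
        have hvv : ¬ (v = u ∨ v = w) := by
          rintro (rfl | rfl)
          · exact huv rfl
          · exact hwv rfl
        rintro (rfl | rfl)
        · exact Or.inl ⟨Or.inl rfl, hwu⟩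
        · exact Or.inr ⟨Or.inr rfl, hvv⟩

lemma obd_cycle [Finite V] {a : V} (w : G.Walk a a) (hw : w.IsCycle) :
    obd (ES w) = ∅ := by
  cases w with
  | nil => exact absurd hw (by simp [Walk.isCycle_def])
  | @cons a u _ h q =>
    rw [Walk.cons_isCycle_iff] at hw
    have hq := hw.1
    have hnm : s(a, u) ∉ q.edges := hw.2
    have hES : ES (Walk.cons h q) = insert s(a, u) (ES q) := by
      ext e; simp [ES, Walk.edges_cons]
    have hnm' : s(a, u) ∉ ES q := hnm
    have hua : u ≠ a := h.ne'
    rw [hES, insert_eq_symmDiff _ _ hnm', obd_symmDiff, obd_single h.ne,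
      obd_path q hq hua]
    ext x
    simp only [Set.mem_symmDiff, Set.mem_insert_iff, Set.mem_singleton_iff,
      Set.mem_empty_iff_false, iff_false]
    rintro (⟨h1, h2⟩ | ⟨h1, h2⟩) <;> tauto

lemma even_ncard_symmDiff_iff {α : Type*} (A B : Set α) (hA : A.Finite) (hB : B.Finite) :
    Even ((A ∆ B).ncard) ↔ (Even A.ncard ↔ Even B.ncard) := by
  have := ncard_symmDiff_add A B hA hB
  simp only [Nat.even_iff] at *
  omega

/-- Handshake: the set of odd-degree vertices of a finite set of honest edges is even. -/
lemma even_obd [Finite V] (S : Set (Sym2 V)) (hS : S ⊆ G.edgeSet) :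
    Even ((obd S).ncard) := by
  have hfin : S.Finite := S.toFinite
  revert hS
  refine Set.Finite.induction_on (motive := fun S _ => S ⊆ G.edgeSet → Even ((obd S).ncard))
    S hfin (by simp [obd_empty]) ?_
  intro e S he hSfin ih hS
  · have hsub : S ⊆ G.edgeSet := fun x hx => hS (Set.mem_insert_of_mem _ hx)
    have hein : e ∈ G.edgeSet := hS (Set.mem_insert _ _)
    induction e using Sym2.ind with
    | _ a b =>
      have hab : a ≠ b := (G.mem_edgeSet.1 hein).ne
      rw [insert_eq_symmDiff _ _ he, obd_symmDiff, obd_single hab]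
      rw [even_ncard_symmDiff_iff _ _ (Set.toFinite _) (Set.toFinite _)]
      have h2 : ({a, b} : Set V).ncard = 2 := by
        rw [Set.ncard_insert_of_notMem (by simpa using hab), Set.ncard_singleton]
      simp [h2, ih hsub]


lemma circuit_nonempty {C : Set (Sym2 V)} (hC : G.IsCircuit C) :
    C.Nonempty ∧ C ⊆ G.edgeSet := by
  obtain ⟨a, w, hw, rfl⟩ := hC
  constructor
  · cases w with
    | nil => exact absurd hw (by simp [Walk.isCycle_def])
    | cons h q => exact ⟨_, by simp only [Walk.edges_cons, Set.mem_setOf_eq, List.mem_cons]; exact Or.inl rfl⟩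
  · exact fun e he => w.edges_subset_edgeSet he

lemma diff_eq_symmDiff {α : Type*} {A B : Set α} (h : B ⊆ A) : A \ B = A ∆ B := by
  ext x
  simp only [Set.mem_diff, Set.mem_symmDiff]
  exact ⟨fun ⟨h1, h2⟩ => Or.inl ⟨h1, h2⟩, by rintro (⟨h1, h2⟩ | ⟨h1, h2⟩) <;> tauto⟩

/-- A nonempty set of edges in which every vertex has even degree contains a circuit. -/
lemma exists_circuit_subset [Fintype V] (S : Set (Sym2 V)) (hS : S ⊆ G.edgeSet)
    (heven : obd S = ∅) (hne : S.Nonempty) : ∃ C, G.IsCircuit C ∧ C ⊆ S := by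
  classical
  by_contra hno
  push_neg at hno
  have claim : ∀ n : ℕ, ∃ (u v : V) (P : G.Walk u v), P.IsPath ∧ ES P ⊆ S ∧ P.length = n + 1 := by
    intro n
    induction n with
    | zero =>
      obtain ⟨e, heS⟩ := hne
      induction e using Sym2.ind with
      | _ a b =>
        have hadj : G.Adj a b := G.mem_edgeSet.1 (hS heS)
        refine ⟨a, b, Walk.cons hadj Walk.nil, by simp [Walk.cons_isPath_iff, hadj.ne], ?_, by simp⟩
        intro e' he'
        simp only [ES, Walk.edges_cons, Walk.edges_nil, List.mem_cons, Set.mem_setOf_eq,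
          List.not_mem_nil, or_false] at he'
        rwa [he']
    | succ n ih =>
      obtain ⟨u, v, P, hP, hPS, hlen⟩ := ih
      -- P has positive length, so it is a cons
      cases P with
      | nil => simp at hlen
      | @cons _ w _ h' q' =>
        have hq' : q'.IsPath ∧ u ∉ q'.support := by rwa [Walk.cons_isPath_iff] at hP
        have he₁ : s(u, w) ∈ S := hPS (by simp [ES, Walk.edges_cons])
        have hdeg1 : s(u, w) ∈ {e ∈ S | u ∈ e} := ⟨he₁, by simp⟩
        have hdeg_even : ¬ Odd (edeg S u) := by
          intro hodd
          have : u ∈ obd S := hodd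
          rw [heven] at this
          exact this
        have hone : 1 ≤ edeg S u := by
          rw [edeg]
          have h0 := (Set.ncard_pos (s := {e ∈ S | u ∈ e}) (Set.toFinite _)).2 ⟨_, hdeg1⟩
          omega

        have htwo : 1 < edeg S u := by
          rcases Nat.even_or_odd (edeg S u) with he | ho
          · rcases he with ⟨k, hk⟩; omega
          · exact absurd ho hdeg_even
        obtain ⟨e₂, he₂mem, he₂ne⟩ := Set.exists_ne_of_one_lt_ncard htwo s(u, w)
        obtain ⟨he₂S, hue₂⟩ := he₂mem
        obtain ⟨z, rfl⟩ := Sym2.mem_iff_exists.1 hue₂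
        have hadj : G.Adj u z := G.mem_edgeSet.1 (hS he₂S)
        have hzu : z ≠ u := hadj.ne'
        have he₂notP : s(u, z) ∉ (Walk.cons h' q').edges := by
          intro hmem
          rcases List.mem_cons.1 hmem with heq | hmem'
          · exact he₂ne heq
          · exact hq'.2 (mem_support_of_mem_ES hmem' (by simp))
        by_cases hzsup : z ∈ (Walk.cons h' q').support
        · -- produce a circuit inside S : contradiction
          set P : G.Walk u v := Walk.cons h' q' with hPdef
          have hQ : (P.takeUntil z hzsup).IsPath := hP.takeUntil hzsup
          have hQedges : ∀ e ∈ (P.takeUntil z hzsup).edges, e ∈ P.edges :=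
            fun e he => Walk.edges_takeUntil_subset P hzsup he
          have hcyc : (Walk.cons hadj.symm (P.takeUntil z hzsup)).IsCycle := by
            rw [Walk.cons_isCycle_iff]
            refine ⟨hQ, fun hmem => ?_⟩
            rw [Sym2.eq_swap] at hmem
            exact he₂notP (hQedges _ hmem)
          refine absurd ?_ (hno (ES (Walk.cons hadj.symm (P.takeUntil z hzsup)))
            ⟨z, _, hcyc, rfl⟩)
          intro e he
          simp only [ES, Walk.edges_cons, List.mem_cons, Set.mem_setOf_eq] at he
          rcases he with heq | hmem
          · rw [heq, Sym2.eq_swap]; exact he₂S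
          · exact hPS (hQedges _ hmem)
        · -- extend the path
          refine ⟨z, v, Walk.cons hadj.symm (Walk.cons h' q'),
            by rw [Walk.cons_isPath_iff]; exact ⟨hP, hzsup⟩, ?_, by simp [Walk.length_cons] at hlen ⊢; omega⟩
          intro e he
          simp only [ES, Walk.edges_cons, List.mem_cons, Set.mem_setOf_eq] at he
          rcases he with heq | he
          · rw [heq, Sym2.eq_swap]; exact he₂S
          · exact hPS (by simp [ES, Walk.edges_cons]; tauto)
  obtain ⟨u, v, P, hP, _, hlen⟩ := claim (Fintype.card V)
  have := hP.length_lt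
  omega

/-- Decomposition of an even set of edges into edge-disjoint circuits. -/
lemma decomp [Fintype V] : ∀ (n : ℕ) (S : Set (Sym2 V)), S.ncard ≤ n → S ⊆ G.edgeSet →
    obd S = ∅ →
    ∃ 𝒟 : Set (Set (Sym2 V)), (∀ C ∈ 𝒟, G.IsCircuit C) ∧ 𝒟.PairwiseDisjoint id ∧ ⋃₀ 𝒟 = S := by
  intro n
  induction n with
  | zero =>
    intro S hcard _ _
    have : S = ∅ := by
      rw [← Set.ncard_eq_zero (Set.toFinite _)]; omega
    exact ⟨∅, by simp, by simp [Set.pairwiseDisjoint_empty], by simp [this]⟩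
  | succ n ih =>
    intro S hcard hsub heven
    rcases Set.eq_empty_or_nonempty S with rfl | hne
    · exact ⟨∅, by simp, by simp [Set.pairwiseDisjoint_empty], by simp⟩
    obtain ⟨C, hC, hCS⟩ := exists_circuit_subset S hsub heven hne
    obtain ⟨hCne, hCedge⟩ := circuit_nonempty hC
    have hobdC : obd C = ∅ := by
      obtain ⟨a, w, hw, rfl⟩ := hC
      exact obd_cycle w hw
    have hS' : obd (S \ C) = ∅ := by
      rw [diff_eq_symmDiff hCS, obd_symmDiff, heven, hobdC]
      simp
    have hcard' : (S \ C).ncard ≤ n := by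
      have h1 : (S \ C).ncard = S.ncard - C.ncard := Set.ncard_diff hCS (Set.toFinite _)
      have h2 : 1 ≤ C.ncard := by
        have := (Set.ncard_pos (s := C) (Set.toFinite _)).2 hCne
        omega
      omega
    obtain ⟨𝒟', h𝒟'circ, h𝒟'pd, h𝒟'union⟩ :=
      ih (S \ C) hcard' (fun x hx => hsub hx.1) hS'
    refine ⟨insert C 𝒟', ?_, ?_, ?_⟩
    · rintro D (rfl | hD)
      · exact hC
      · exact h𝒟'circ D hD
    · rw [Set.pairwiseDisjoint_insert]
      refine ⟨h𝒟'pd, fun D hD _ => ?_⟩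
      have hDsub : D ⊆ S \ C := h𝒟'union ▸ Set.subset_sUnion_of_mem hD
      exact Set.disjoint_of_subset le_rfl hDsub (Set.disjoint_sdiff_right)
    · rw [Set.sUnion_insert, h𝒟'union, Set.union_diff_cancel hCS]


/-- Between any two distinct vertices on a closed walk there is a set of edges of the
walk whose odd-degree vertices are exactly the two. -/
lemma exists_path_obd [Finite V] {a : V} (w : G.Walk a a) {u v : V}
    (hu : u ∈ w.support) (hv : v ∈ w.support) (hne : u ≠ v) :
    ∃ J, J ⊆ ES w ∧ obd J = {u, v} := by
  classical
  -- find a walk from u to v whose edges lie in those of w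
  have hq : ∃ q : G.Walk u v, ∀ e ∈ q.edges, e ∈ w.edges := by
    have hv' : v ∈ ((w.takeUntil u hu).append (w.dropUntil u hu)).support := by
      rw [w.take_spec hu]; exact hv
    rw [Walk.mem_support_append_iff] at hv'
    rcases hv' with hv1 | hv2
    · refine ⟨((w.takeUntil u hu).dropUntil v hv1).reverse, fun e he => ?_⟩
      rw [Walk.edges_reverse, List.mem_reverse] at he
      exact Walk.edges_takeUntil_subset _ _ (Walk.edges_dropUntil_subset _ _ he)
    · refine ⟨(w.dropUntil u hu).takeUntil v hv2, fun e he => ?_⟩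
      exact Walk.edges_dropUntil_subset _ _ (Walk.edges_takeUntil_subset _ _ he)
  obtain ⟨q, hq⟩ := hq
  refine ⟨ES q.bypass, fun e he => hq _ (q.edges_bypass_subset he), ?_⟩
  exact obd_path q.bypass q.bypass_isPath hne

/-- Any even subset of the vertices of a closed walk is the odd boundary of a subset
of its edges. -/
lemma exists_J [Finite V] {a : V} (w : G.Walk a a) :
    ∀ (n : ℕ) (W : Set V), W.ncard ≤ n → Even W.ncard → (∀ x ∈ W, x ∈ w.support) →
    ∃ J, J ⊆ ES w ∧ obd J = W := by
  intro n
  induction n using Nat.strong_induction_on with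
  | _ n ih =>
    intro W hWn hWeven hWsup
    rcases Set.eq_empty_or_nonempty W with rfl | hne
    · exact ⟨∅, by simp, obd_empty⟩
    obtain ⟨u, hu⟩ := hne
    have hW1 : 1 < W.ncard := by
      have h0 := (Set.ncard_pos (s := W) (Set.toFinite _)).2 ⟨u, hu⟩
      rcases hWeven with ⟨k, hk⟩
      omega
    obtain ⟨v, hv, hvu⟩ := Set.exists_ne_of_one_lt_ncard hW1 u
    have hn2 : 2 ≤ n := by omega
    set W' := W \ {u, v} with hW'def
    have hW'card : W'.ncard = W.ncard - 2 := by
      rw [hW'def, Set.ncard_diff (by simp [Set.insert_subset_iff, hu, hv]) (Set.toFinite _)]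
      congr 1
      rw [Set.ncard_insert_of_notMem (by simpa using (Ne.symm hvu)), Set.ncard_singleton]
    have hW'even : Even W'.ncard := by
      rcases hWeven with ⟨k, hk⟩
      rw [hW'card]
      exact ⟨k - 1, by omega⟩
    obtain ⟨J', hJ'sub, hJ'obd⟩ := ih (n - 2) (by omega) W' (by omega)
      hW'even (fun x hx => hWsup x hx.1)
    obtain ⟨P, hPsub, hPobd⟩ := exists_path_obd w (hWsup u hu) (hWsup v hv) (Ne.symm hvu)
    refine ⟨J' ∆ P, fun e he => ?_, ?_⟩
    · rcases Set.mem_symmDiff.1 he with ⟨h1, _⟩ | ⟨h1, _⟩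
      · exact hJ'sub h1
      · exact hPsub h1
    · rw [obd_symmDiff, hJ'obd, hPobd]
      ext x
      simp only [Set.mem_symmDiff, hW'def, Set.mem_diff, Set.mem_insert_iff,
        Set.mem_singleton_iff]
      constructor
      · rintro (⟨⟨h1, h2⟩, h3⟩ | ⟨h1, h2⟩)
        · exact h1
        · rcases h1 with rfl | rfl
          · exact hu
          · exact hv
      · intro hx
        by_cases hxuv : x = u ∨ x = v
        · exact Or.inr ⟨hxuv, fun h => h.2 hxuv⟩
        · exact Or.inl ⟨⟨hx, hxuv⟩, hxuv⟩

/-- Disjoint unions of circuits of a matroid. -/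
def IsCycleM {α : Type*} (M : Matroid α) (X : Set α) : Prop :=
  ∃ 𝒟 : Set (Set α), (∀ D ∈ 𝒟, M.IsCircuitM D) ∧ 𝒟.PairwiseDisjoint id ∧ ⋃₀ 𝒟 = X

lemma circuitM_nonempty {α : Type*} {M : Matroid α} {C : Set α} (hC : M.IsCircuitM C) :
    C.Nonempty := by
  rcases Set.eq_empty_or_nonempty C with rfl | h
  · exact absurd M.empty_indep hC.1.1
  · exact h

lemma IsCycleM.subset_ground {α : Type*} {M : Matroid α} {X : Set α} (hX : IsCycleM M X) :
    X ⊆ M.E := by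
  obtain ⟨𝒟, hcirc, _, rfl⟩ := hX
  exact fun x ⟨D, hD, hxD⟩ => (hcirc D hD).1.subset_ground hxD

lemma IsCircuitM.isCycleM {α : Type*} {M : Matroid α} {C : Set α} (hC : M.IsCircuitM C) :
    IsCycleM M C :=
  ⟨{C}, by simpa using hC, Set.pairwiseDisjoint_singleton _ _, by simp⟩

lemma symmDiff_algebra {α : Type*} (A B C D : Set α) :
    ((A ∆ B) ∆ (B ∆ C)) ∆ (D ∆ C) = A ∆ D := by
  ext x
  simp only [Set.mem_symmDiff]
  tauto

/-- In a binary matroid, the symmetric difference of two disjoint unions of circuits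
is again a disjoint union of circuits. -/
lemma cycleM_symmDiff {α : Type*} {M : Matroid α} (hB : M.IsBinaryM) (hE : M.E.Finite) :
    ∀ (n : ℕ) (X Y : Set α), IsCycleM M X → IsCycleM M Y → X.ncard + Y.ncard ≤ n →
    IsCycleM M (X ∆ Y) := by
  intro n
  induction n using Nat.strong_induction_on with
  | _ n ih =>
    intro X Y hX hY hn
    have hXfin : X.Finite := hE.subset hX.subset_ground
    have hYfin : Y.Finite := hE.subset hY.subset_ground
    obtain ⟨𝒟x, hxc, hxd, hxu⟩ := hX
    obtain ⟨𝒟y, hyc, hyd, hyu⟩ := hY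
    by_cases hdisj : Disjoint X Y
    · refine ⟨𝒟x ∪ 𝒟y, ?_, ?_, ?_⟩
      · rintro D (hD | hD)
        · exact hxc D hD
        · exact hyc D hD
      · apply Set.pairwiseDisjoint_union.2
        refine ⟨hxd, hyd, fun D₁ h₁ D₂ h₂ _ => ?_⟩
        have hs₁ : D₁ ⊆ X := hxu ▸ Set.subset_sUnion_of_mem h₁
        have hs₂ : D₂ ⊆ Y := hyu ▸ Set.subset_sUnion_of_mem h₂
        exact Set.disjoint_of_subset hs₁ hs₂ hdisj
      · rw [Set.sUnion_union, hxu, hyu]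
        ext x
        simp only [Set.mem_union, Set.mem_symmDiff]
        constructor
        · rintro (hx | hx)
          · exact Or.inl ⟨hx, fun hy => hdisj.ne_of_mem hx hy rfl⟩
          · exact Or.inr ⟨hx, fun hy => hdisj.ne_of_mem hy hx rfl⟩
        · tauto
    · -- there is a common point
      rw [Set.not_disjoint_iff] at hdisj
      obtain ⟨p, hpX, hpY⟩ := hdisj
      obtain ⟨C₁, hC₁mem, hpC₁⟩ : ∃ C₁ ∈ 𝒟x, p ∈ C₁ := by
        rw [← hxu] at hpX; exact hpX
      obtain ⟨C₂, hC₂mem, hpC₂⟩ : ∃ C₂ ∈ 𝒟y, p ∈ C₂ := by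
        rw [← hyu] at hpY; exact hpY
      have hC₁ := hxc _ hC₁mem
      have hC₂ := hyc _ hC₂mem
      have hC₁X : C₁ ⊆ X := hxu ▸ Set.subset_sUnion_of_mem hC₁mem
      have hC₂Y : C₂ ⊆ Y := hyu ▸ Set.subset_sUnion_of_mem hC₂mem
      have hC₁fin : C₁.Finite := hXfin.subset hC₁X
      have hC₂fin : C₂.Finite := hYfin.subset hC₂Y
      -- Z = C₁ ∆ C₂ is a cycle
      obtain ⟨𝒟z, hzc, hzd, hzu⟩ := hB C₁ C₂ hC₁ hC₂
      have hZ : IsCycleM M (C₁ ∆ C₂) := ⟨𝒟z, hzc, hzd, hzu⟩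
      -- X' = X \ C₁ and Y' = Y \ C₂ are cycles
      have hX' : IsCycleM M (X \ C₁) := by
        refine ⟨𝒟x \ {C₁}, fun D hD => hxc D hD.1,
          hxd.subset (Set.diff_subset), ?_⟩
        ext x
        constructor
        · rintro ⟨D, ⟨hD, hDne⟩, hxD⟩
          refine ⟨hxu ▸ Set.subset_sUnion_of_mem hD hxD, fun hxC₁ => ?_⟩
          have : D ≠ C₁ := by simpa using hDne
          exact (hxd hD hC₁mem this).ne_of_mem hxD hxC₁ rfl
        · rintro ⟨hxX, hxC₁⟩
          rw [← hxu] at hxX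
          obtain ⟨D, hD, hxD⟩ := hxX
          exact ⟨D, ⟨hD, by simp; rintro rfl; exact hxC₁ hxD⟩, hxD⟩
      have hY' : IsCycleM M (Y \ C₂) := by
        refine ⟨𝒟y \ {C₂}, fun D hD => hyc D hD.1,
          hyd.subset (Set.diff_subset), ?_⟩
        ext x
        constructor
        · rintro ⟨D, ⟨hD, hDne⟩, hxD⟩
          refine ⟨hyu ▸ Set.subset_sUnion_of_mem hD hxD, fun hxC₂ => ?_⟩
          have : D ≠ C₂ := by simpa using hDne
          exact (hyd hD hC₂mem this).ne_of_mem hxD hxC₂ rfl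
        · rintro ⟨hxY, hxC₂⟩
          rw [← hyu] at hxY
          obtain ⟨D, hD, hxD⟩ := hxY
          exact ⟨D, ⟨hD, by simp; rintro rfl; exact hxC₂ hxD⟩, hxD⟩
      -- size bookkeeping
      have hc₁pos : 1 ≤ C₁.ncard := by
        have := (Set.ncard_pos (s := C₁) hC₁fin).2 (circuitM_nonempty hC₁); omega
      have hc₂pos : 1 ≤ C₂.ncard := by
        have := (Set.ncard_pos (s := C₂) hC₂fin).2 (circuitM_nonempty hC₂); omega
      have hX'card : (X \ C₁).ncard = X.ncard - C₁.ncard := Set.ncard_diff hC₁X hC₁fin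
      have hY'card : (Y \ C₂).ncard = Y.ncard - C₂.ncard := Set.ncard_diff hC₂Y hC₂fin
      have hC₁le : C₁.ncard ≤ X.ncard := Set.ncard_le_ncard hC₁X hXfin
      have hC₂le : C₂.ncard ≤ Y.ncard := Set.ncard_le_ncard hC₂Y hYfin
      have hZsub : (C₁ ∆ C₂) ⊆ (C₁ ∪ C₂) \ {p} := by
        intro x hx
        rcases Set.mem_symmDiff.1 hx with ⟨h1, h2⟩ | ⟨h1, h2⟩
        · exact ⟨Or.inl h1, by rintro rfl; exact h2 hpC₂⟩
        · exact ⟨Or.inr h1, by rintro rfl; exact h2 hpC₁⟩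
      have hZcard : (C₁ ∆ C₂).ncard ≤ C₁.ncard + C₂.ncard - 1 := by
        have h1 : ((C₁ ∪ C₂) \ {p}).ncard = (C₁ ∪ C₂).ncard - 1 := by
          rw [Set.ncard_diff (by simp [Set.singleton_subset_iff]; exact Or.inl hpC₁)
            (Set.toFinite _)]
          simp
        have h2 : (C₁ ∆ C₂).ncard ≤ ((C₁ ∪ C₂) \ {p}).ncard :=
          Set.ncard_le_ncard hZsub ((hC₁fin.union hC₂fin).subset Set.diff_subset)
        have h3 : (C₁ ∪ C₂).ncard ≤ C₁.ncard + C₂.ncard := Set.ncard_union_le _ _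
        have h4 : 1 ≤ (C₁ ∪ C₂).ncard := by
          have := (Set.ncard_pos (s := C₁ ∪ C₂) (hC₁fin.union hC₂fin)).2
            ⟨p, Or.inl hpC₁⟩
          omega
        omega
      -- apply induction twice
      have hnpos : 1 ≤ n := by omega
      have hstep1 : IsCycleM M ((X \ C₁) ∆ (C₁ ∆ C₂)) := by
        refine ih (n - 1) (by omega) _ _ hX' hZ ?_
        have := Set.ncard_le_ncard (show (C₁ ∆ C₂) ⊆ C₁ ∪ C₂ from symmDiff_le_sup)
          (hC₁fin.union hC₂fin)
        omega
      have hW₁card : ((X \ C₁) ∆ (C₁ ∆ C₂)).ncard ≤ X.ncard + C₂.ncard - 1 := by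
        have h1 : ((X \ C₁) ∆ (C₁ ∆ C₂)) ⊆ (X \ C₁) ∪ (C₁ ∆ C₂) := symmDiff_le_sup
        have h2 := Set.ncard_le_ncard h1
          ((hXfin.subset Set.diff_subset).union (hE.subset hZ.subset_ground))
        have h3 := Set.ncard_union_le (X \ C₁) (C₁ ∆ C₂)
        omega
      have hstep2 : IsCycleM M (((X \ C₁) ∆ (C₁ ∆ C₂)) ∆ (Y \ C₂)) := by
        refine ih (n - 1) (by omega) _ _ hstep1 hY' ?_
        omega
      have hfinal : ((X \ C₁) ∆ (C₁ ∆ C₂)) ∆ (Y \ C₂) = X ∆ Y := by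
        rw [diff_eq_symmDiff hC₁X, diff_eq_symmDiff hC₂Y]
        exact symmDiff_algebra X C₁ C₂ Y
      rwa [hfinal] at hstep2


end Stmt17

open Stmt17

/-- If `G` is an almost Hamiltonian graph of odd order `2N + 1`, then
every circuit injection from the cycle matroid of `G` into a binary matroid is
trivial. -/
theorem stmt_17 {V α : Type*} [Fintype V] (G : SimpleGraph V) (N : ℕ)
    (hcard : Fintype.card V = 2 * N + 1)
    (halmost : ∀ T : Set V, T.ncard = 2 * N →
      ∃ C, G.IsCircuit C ∧ ∀ v ∈ T, ∃ e ∈ C, v ∈ e)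
    (B : Matroid α) (hB : B.IsBinaryM) (f : Sym2 V → α)
    (hf : IsCircuitInjection G B f) :
    ∀ D, B.IsCircuitM D → ∃ C, G.IsCircuit C ∧ f '' C = D := by
  classical
  intro D hD
  obtain ⟨hbij, hcircmap⟩ := hf
  have hinj : Set.InjOn f G.edgeSet := hbij.2.1
  have hDE : D ⊆ B.E := hD.1.subset_ground
  have hEeq : f '' G.edgeSet = B.E := hbij.image_eq
  have hEfin : B.E.Finite := hEeq ▸ (Set.toFinite G.edgeSet).image f
  -- the preimage of D
  set S : Set (Sym2 V) := f ⁻¹' D ∩ G.edgeSet with hSdef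
  have hSsub : S ⊆ G.edgeSet := Set.inter_subset_right
  have hfS : f '' S = D := by
    apply Set.Subset.antisymm
    · rintro y ⟨e, ⟨heD, _⟩, rfl⟩; exact heD
    · intro d hd
      obtain ⟨e, heE, rfl⟩ := hbij.2.2 (hDE hd)
      exact ⟨e, ⟨hd, heE⟩, rfl⟩
  -- image of symmetric differences
  have himg : ∀ A A' : Set (Sym2 V), A ⊆ G.edgeSet → A' ⊆ G.edgeSet →
      f '' (A ∆ A') = (f '' A) ∆ (f '' A') := by
    intro A A' hA hA'
    ext y
    constructor
    · rintro ⟨e, he, rfl⟩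
      rcases Set.mem_symmDiff.1 he with ⟨h1, h2⟩ | ⟨h1, h2⟩
      · refine Set.mem_symmDiff.2 (Or.inl ⟨⟨e, h1, rfl⟩, ?_⟩)
        rintro ⟨e', he', heq⟩
        rw [hinj (hA' he') (hA h1) heq] at he'
        exact h2 he'
      · refine Set.mem_symmDiff.2 (Or.inr ⟨⟨e, h1, rfl⟩, ?_⟩)
        rintro ⟨e', he', heq⟩
        rw [hinj (hA he') (hA' h1) heq] at he'
        exact h2 he'
    · intro hy
      rcases Set.mem_symmDiff.1 hy with ⟨⟨e, he, rfl⟩, h2⟩ | ⟨⟨e, he, rfl⟩, h2⟩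
      · exact ⟨e, Set.mem_symmDiff.2 (Or.inl ⟨he, fun h => h2 ⟨e, h, rfl⟩⟩), rfl⟩
      · exact ⟨e, Set.mem_symmDiff.2 (Or.inr ⟨he, fun h => h2 ⟨e, h, rfl⟩⟩), rfl⟩
  by_cases hobd : obd S = ∅
  · -- S is even: it decomposes into circuits, one of which must map onto D
    rcases Set.eq_empty_or_nonempty S with hSempty | hSne
    · exfalso
      rw [hSempty, Set.image_empty] at hfS
      exact hD.1.1 (hfS ▸ B.empty_indep)
    obtain ⟨𝒟, h𝒟circ, _, h𝒟union⟩ := decomp S.ncard S le_rfl hSsub hobd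
    obtain ⟨x, hxS⟩ := hSne
    rw [← h𝒟union] at hxS
    obtain ⟨C₁, hC₁mem, hxC₁⟩ := hxS
    have hC₁circ := h𝒟circ C₁ hC₁mem
    have hC₁S : C₁ ⊆ S := h𝒟union ▸ Set.subset_sUnion_of_mem hC₁mem
    have hBC₁ := hcircmap C₁ hC₁circ
    have himgsub : f '' C₁ ⊆ D := hfS ▸ Set.image_mono hC₁S
    by_cases heq : f '' C₁ = D
    · exact ⟨C₁, hC₁circ, heq⟩
    · exact absurd (hD.2 _ (Set.ssubset_iff_subset_ne.2 ⟨himgsub, heq⟩)) hBC₁.1.1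
  · -- S has odd vertices: contradiction
    exfalso
    set W : Set V := obd S with hWdef
    have hWne : W.Nonempty := Set.nonempty_iff_ne_empty.2 hobd
    have hWeven : Even W.ncard := even_obd S hSsub
    have hWle' : W.ncard ≤ 2 * N + 1 := by
      have := Set.ncard_le_ncard (Set.subset_univ W) (Set.toFinite _)
      rwa [Set.ncard_univ, Nat.card_eq_fintype_card, hcard] at this
    have hWle : W.ncard ≤ 2 * N := by
      rcases hWeven with ⟨k, hk⟩; omega
    -- extend W to a set of exactly 2N vertices
    have hcompl : W.ncard + Wᶜ.ncard = 2 * N + 1 := by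
      have := Set.ncard_add_ncard_compl W (Set.toFinite _) (Set.toFinite _)
      rwa [Nat.card_eq_fintype_card, hcard] at this
    obtain ⟨A, hAsub, hAcard⟩ := Set.exists_subset_card_eq
      (show 2 * N - W.ncard ≤ Wᶜ.ncard by omega)
    have hdisj : Disjoint W A := by
      rw [Set.disjoint_left]
      intro x hxW hxA
      exact (hAsub hxA) hxW
    have hT'card : (W ∪ A).ncard = 2 * N := by
      rw [Set.ncard_union_eq hdisj (Set.toFinite _) (Set.toFinite _), hAcard]
      omega
    obtain ⟨C', hC'circ, hC'cover⟩ := halmost (W ∪ A) hT'card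
    obtain ⟨a, w', hcyc, hCeq⟩ := hC'circ
    have hC'sub : C' ⊆ G.edgeSet := by
      rw [hCeq]; exact ES_subset_edgeSet w'
    have hWsup : ∀ x ∈ W, x ∈ w'.support := by
      intro x hx
      obtain ⟨e, heC, hxe⟩ := hC'cover x (Or.inl hx)
      rw [hCeq] at heC
      exact mem_support_of_mem_ES heC hxe
    obtain ⟨J, hJsub, hJobd⟩ := exists_J w' W.ncard W le_rfl hWeven hWsup
    have hJC' : J ⊆ C' := by rw [hCeq]; exact hJsub
    have hJne : J.Nonempty := by
      rcases Set.eq_empty_or_nonempty J with rfl | h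
      · rw [obd_empty] at hJobd
        exact absurd hJobd.symm hobd
      · exact h
    have hJneC : J ≠ C' := by
      intro h
      have : obd C' = ∅ := by rw [hCeq]; exact obd_cycle w' hcyc
      rw [h, this] at hJobd
      exact hobd hJobd.symm
    -- X = S ∆ J is even, so it decomposes into circuits of G
    have hXsub : (S ∆ J) ⊆ G.edgeSet := by
      intro e he
      rcases Set.mem_symmDiff.1 he with ⟨h1, _⟩ | ⟨h1, _⟩
      · exact hSsub h1
      · exact hC'sub (hJC' h1)
    have hXobd : obd (S ∆ J) = ∅ := by
      rw [obd_symmDiff, ← hWdef, hJobd, symmDiff_self]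
      rfl
    obtain ⟨𝒟g, h𝒟gcirc, h𝒟gpd, h𝒟gunion⟩ := decomp (S ∆ J).ncard _ le_rfl hXsub hXobd
    -- f '' (S ∆ J) is a disjoint union of circuits of B
    have hXcyc : IsCycleM B (f '' (S ∆ J)) := by
      refine ⟨(fun C => f '' C) '' 𝒟g, ?_, ?_, ?_⟩
      · rintro _ ⟨C, hC, rfl⟩
        exact hcircmap C (h𝒟gcirc C hC)
      · rintro y₁ ⟨C₁, hC₁, rfl⟩ y₂ ⟨C₂, hC₂, rfl⟩ hne
        have hC₁sub : C₁ ⊆ G.edgeSet :=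
          fun x hx => hXsub (h𝒟gunion ▸ Set.subset_sUnion_of_mem hC₁ hx)
        have hC₂sub : C₂ ⊆ G.edgeSet :=
          fun x hx => hXsub (h𝒟gunion ▸ Set.subset_sUnion_of_mem hC₂ hx)
        have hCne : C₁ ≠ C₂ := by rintro rfl; exact hne rfl
        have hCdisj : Disjoint C₁ C₂ := h𝒟gpd hC₁ hC₂ hCne
        simp only [Function.onFun, id_eq]
        rw [Set.disjoint_left]
        rintro y ⟨e₁, he₁, rfl⟩ ⟨e₂, he₂, heq⟩
        rw [hinj (hC₂sub he₂) (hC₁sub he₁) heq] at he₂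
        exact (hCdisj.ne_of_mem he₁ he₂) rfl
      · rw [← Set.image_sUnion, h𝒟gunion]
    -- hence f '' J = D ∆ f '' (S ∆ J) is a disjoint union of circuits of B
    have hJeq : J = S ∆ (S ∆ J) := (symmDiff_symmDiff_cancel_left S J).symm
    have hfJ : f '' J = D ∆ (f '' (S ∆ J)) := by
      conv_lhs => rw [hJeq]
      rw [himg S (S ∆ J) hSsub hXsub, hfS]
    have hJcyc : IsCycleM B (f '' J) := by
      rw [hfJ]
      exact cycleM_symmDiff hB hEfin (D.ncard + (f '' (S ∆ J)).ncard) _ _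
        (IsCircuitM.isCycleM hD) hXcyc le_rfl
    -- but f '' J is a nonempty proper subset of the circuit f '' C', contradiction
    have hBC' : B.IsCircuitM (f '' C') := hcircmap C' ⟨a, w', hcyc, hCeq⟩
    have hJpss : f '' J ⊂ f '' C' := by
      refine Set.ssubset_iff_subset_ne.2 ⟨Set.image_mono hJC', ?_⟩
      intro h
      exact hJneC ((hinj.image_eq_image_iff (hJC'.trans hC'sub) hC'sub).mp h)
    have hJimgne : (f '' J).Nonempty := hJne.image f
    obtain ⟨𝒟b, h𝒟bcirc, _, h𝒟bunion⟩ := hJcyc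
    obtain ⟨y, hy⟩ := hJimgne
    rw [← h𝒟bunion] at hy
    obtain ⟨D₀, hD₀mem, hyD₀⟩ := hy
    have hD₀circ := h𝒟bcirc D₀ hD₀mem
    have hD₀sub : D₀ ⊆ f '' J := h𝒟bunion ▸ Set.subset_sUnion_of_mem hD₀mem
    have hindep : B.Indep (f '' J) := hBC'.2 _ hJpss
    exact hD₀circ.1.1 (hindep.subset hD₀sub)
end

section
/- For the complete graph K_n with n ≥ 5, let M_n be the dual of its cycle matroid (the bond matroid), and let M_n' be the binary matroid on E(K_n) generated by the bonds of K_n together with the full edge set E(K_n) (circuits being the minimal nonempty sets in the symmetric-difference closure). Then the identity map is a nontrivial circuit injection from M_n to M_n': every bond of K_n is a circuit of M_n', but M_n' has a circuit that is not a bond. -/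
/-- `D` is an edge cut of `G`: a set of edges whose removal disconnects `G`. -/
def IsCut {V : Type*} (G : SimpleGraph V) (D : Set (Sym2 V)) : Prop :=
  D ⊆ G.edgeSet ∧ ¬ (G.deleteEdges D).Connected

/-- A *bond* of `G` is a minimal edge cut. -/
def IsBond {V : Type*} (G : SimpleGraph V) (D : Set (Sym2 V)) : Prop :=
  IsCut G D ∧ ∀ D', D' ⊂ D → ¬ IsCut G D'

/-- The closure of a collection `𝒞` of subsets under symmetric difference. -/
def sdClosure {α : Type*} (𝒞 : Set (Set α)) : Set (Set α) :=
  {A | ∃ l : List (Set α), l ≠ [] ∧ (∀ C ∈ l, C ∈ 𝒞) ∧ A = l.foldr symmDiff ∅}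

/-- The minimal nonempty elements of the symmetric-difference closure of `𝒞`;
these are the circuits of the binary matroid generated by `𝒞`. -/
def minSD {α : Type*} (𝒞 : Set (Set α)) : Set (Set α) :=
  {A | A ∈ sdClosure 𝒞 ∧ A ≠ ∅ ∧ ∀ B ∈ sdClosure 𝒞, B ≠ ∅ → B ⊆ A → B = A}

open SimpleGraph

namespace Stmt18

variable {V : Type*}

/-- The set of edges crossing `S`. -/
def cut (S : Set V) : Set (Sym2 V) := {e | ∃ u v, e = s(u,v) ∧ (u ∈ S ↔ v ∉ S)}

lemma mem_cut {S : Set V} {u v : V} : s(u,v) ∈ cut S ↔ (u ∈ S ↔ v ∉ S) := by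
  constructor
  · rintro ⟨a, b, hab, h⟩
    rw [Sym2.eq_iff] at hab
    rcases hab with ⟨rfl, rfl⟩ | ⟨rfl, rfl⟩ <;> tauto
  · intro h; exact ⟨u, v, rfl, h⟩

lemma cut_sub (S : Set V) : cut S ⊆ (⊤ : SimpleGraph V).edgeSet := by
  rintro e he
  induction e using Sym2.ind with
  | _ u v =>
    rw [mem_cut] at he
    rw [SimpleGraph.mem_edgeSet, top_adj]
    rintro rfl; tauto

lemma ne_of_mem_cut {S : Set V} {u v : V} (h : s(u,v) ∈ cut S) : u ≠ v := by
  rw [mem_cut] at h; rintro rfl; tauto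

lemma cut_empty : cut (∅ : Set V) = ∅ := by
  ext e
  induction e using Sym2.ind with
  | _ u v => simp [mem_cut]

lemma cut_symmDiff (S T : Set V) : symmDiff (cut S) (cut T) = cut (symmDiff S T) := by
  ext e
  induction e using Sym2.ind with
  | _ u v =>
    rw [Set.mem_symmDiff, mem_cut, mem_cut, mem_cut, Set.mem_symmDiff, Set.mem_symmDiff]
    tauto

lemma cut_compl (S : Set V) : cut Sᶜ = cut S := by
  ext e
  induction e using Sym2.ind with
  | _ u v => rw [mem_cut, mem_cut]; simp; tauto

/-- Reachability in `⊤.deleteEdges D'` with `D' ⊆ cut S` preserves side of `S`. -/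
lemma reachable_side {S : Set V} {D' : Set (Sym2 V)} (hD' : D' ⊇ cut S) {x y : V}
    (h : ((⊤ : SimpleGraph V).deleteEdges D').Reachable x y) : (x ∈ S ↔ y ∈ S) := by
  obtain ⟨w⟩ := h
  induction w with
  | nil => rfl
  | cons h p ih =>
    rename_i a b c
    have hab : (a ∈ S ↔ b ∈ S) := by
      rw [deleteEdges_adj] at h
      by_contra hc
      exact h.2 (hD' (mem_cut.mpr (by tauto)))
    exact hab.trans ih

lemma isCut_cut {S : Set V} (hS : S.Nonempty) (hS' : Sᶜ.Nonempty) :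
    IsCut (⊤ : SimpleGraph V) (cut S) := by
  refine ⟨cut_sub S, fun hc => ?_⟩
  obtain ⟨u, hu⟩ := hS
  obtain ⟨v, hv⟩ := hS'
  have := reachable_side (le_refl (cut S)) (hc.preconnected u v)
  exact hv (this.mp hu)

/-- If `D' ⊆ cut S` misses a crossing edge `s(a,b)`, then `⊤.deleteEdges D'` is connected. -/
lemma reach_aux {S : Set V} {D' : Set (Sym2 V)} (hD' : D' ⊆ cut S) {a b : V}
    (ha : a ∈ S) (hb : b ∉ S) (hab : s(a,b) ∉ D') (x : V) :
    ((⊤ : SimpleGraph V).deleteEdges D').Reachable a x := by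
  have hadj : ∀ u v : V, u ≠ v → (u ∈ S ↔ v ∈ S) →
      ((⊤ : SimpleGraph V).deleteEdges D').Adj u v := by
    intro u v huv hside
    rw [deleteEdges_adj, top_adj]
    refine ⟨huv, fun hmem => ?_⟩
    have := mem_cut.mp (hD' hmem)
    tauto
  have hne : a ≠ b := by rintro rfl; exact hb ha
  have hadjab : ((⊤ : SimpleGraph V).deleteEdges D').Adj a b := by
    rw [deleteEdges_adj, top_adj]; exact ⟨hne, hab⟩
  by_cases hx : x ∈ S
  · by_cases hax : a = x
    · exact hax ▸ Reachable.refl a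
    · exact (hadj a x hax (by tauto)).reachable
  · by_cases hbx : b = x
    · exact hadjab.reachable.trans (hbx ▸ Reachable.refl b)
    · exact hadjab.reachable.trans (hadj b x hbx (by tauto)).reachable

lemma isBond_cut {S : Set V} (hS : S.Nonempty) (hS' : Sᶜ.Nonempty) :
    IsBond (⊤ : SimpleGraph V) (cut S) := by
  refine ⟨isCut_cut hS hS', fun D' hss hcut => ?_⟩
  obtain ⟨hsub, hne⟩ := hss
  obtain ⟨e, he, heD⟩ := Set.exists_of_ssubset ⟨hsub, hne⟩
  induction e using Sym2.ind with
  | _ u v =>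
    apply hcut.2
    rw [connected_iff]
    rcases (mem_cut.mp he) with h
    have : ∃ p q : V, p ∈ S ∧ q ∉ S ∧ s(p,q) ∉ D' := by
      by_cases hu : u ∈ S
      · exact ⟨u, v, hu, by tauto, heD⟩
      · exact ⟨v, u, by tauto, hu, by rw [Sym2.eq_swap]; exact heD⟩
    obtain ⟨p, q, hp, hq, hpq⟩ := this
    refine ⟨fun x y => ?_, ⟨p⟩⟩
    exact (reach_aux hsub hp hq hpq x).symm.trans (reach_aux hsub hp hq hpq y)

lemma bond_eq_cut [Nonempty V] {D : Set (Sym2 V)}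
    (hD : IsBond (⊤ : SimpleGraph V) D) :
    ∃ S : Set V, S.Nonempty ∧ Sᶜ.Nonempty ∧ D = cut S := by
  have hnc := hD.1.2
  rw [connected_iff] at hnc
  have hpc : ¬ ((⊤ : SimpleGraph V).deleteEdges D).Preconnected :=
    fun h => hnc ⟨h, ‹Nonempty V›⟩
  simp only [SimpleGraph.Preconnected] at hpc
  push_neg at hpc
  obtain ⟨u, v, huv⟩ := hpc
  set G' := (⊤ : SimpleGraph V).deleteEdges D with hG'
  set S : Set V := {w | G'.Reachable u w} with hSdef
  have hu : u ∈ S := Reachable.refl u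
  have hv : v ∈ Sᶜ := huv
  have hsub : cut S ⊆ D := by
    intro e he
    induction e using Sym2.ind with
    | _ x y =>
      have hxy := mem_cut.mp he
      by_contra heD
      have key : ∀ p q : V, p ∈ S → q ∉ S → s(p,q) ∉ D → False := by
        intro p q hp hq hpq
        have hne : p ≠ q := by rintro rfl; exact hq hp
        have : G'.Adj p q := by rw [hG', deleteEdges_adj, top_adj]; exact ⟨hne, hpq⟩
        exact hq (hp.trans this.reachable)
      by_cases hx : x ∈ S
      · exact key x y hx (by tauto) heD
      · exact key y x (by tauto) hx (by rw [Sym2.eq_swap]; exact heD)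
  have hcut : IsCut (⊤ : SimpleGraph V) (cut S) := isCut_cut ⟨u, hu⟩ ⟨v, hv⟩
  rcases ssubset_or_eq_of_subset hsub with hss | heq
  · exact absurd hcut (hD.2 _ hss)
  · exact ⟨S, ⟨u, hu⟩, ⟨v, hv⟩, heq.symm⟩

lemma cut_nonempty_witness {T : Set V} (h : cut T ≠ ∅) :
    T.Nonempty ∧ Tᶜ.Nonempty := by
  obtain ⟨e, he⟩ := Set.nonempty_iff_ne_empty.mpr h
  induction e using Sym2.ind with
  | _ u v =>
    have := mem_cut.mp he
    by_cases hu : u ∈ T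
    · exact ⟨⟨u, hu⟩, ⟨v, by tauto⟩⟩
    · exact ⟨⟨v, by tauto⟩, ⟨u, hu⟩⟩

end Stmt18

namespace Stmt18

lemma sdClosure_structure {V : Type*} [Nonempty V] {A : Set (Sym2 V)}
    (hA : A ∈ sdClosure ({D' | IsBond (⊤ : SimpleGraph V) D'} ∪
      {(⊤ : SimpleGraph V).edgeSet})) :
    ∃ T : Set V, A = cut T ∨ A = symmDiff (⊤ : SimpleGraph V).edgeSet (cut T) := by
  obtain ⟨l, -, hl, rfl⟩ := hA
  induction l with
  | nil => exact ⟨∅, Or.inl cut_empty.symm⟩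
  | cons C l ih =>
    obtain ⟨T, hT⟩ := ih (fun C' hC' => hl C' (List.mem_cons_of_mem _ hC'))
    have hC := hl C List.mem_cons_self
    simp only [List.foldr_cons]
    rcases hC with hC | hC
    · obtain ⟨S, -, -, rfl⟩ := bond_eq_cut hC
      rcases hT with hT | hT <;> rw [hT]
      · exact ⟨symmDiff S T, Or.inl (cut_symmDiff S T)⟩
      · refine ⟨symmDiff S T, Or.inr ?_⟩
        rw [symmDiff_left_comm, cut_symmDiff]
    · rw [Set.mem_singleton_iff] at hC
      subst hC
      rcases hT with hT | hT <;> rw [hT]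
      · exact ⟨T, Or.inr rfl⟩
      · exact ⟨T, Or.inl (symmDiff_symmDiff_cancel_left _ _)⟩

lemma five_pigeon {n : ℕ} (hn : 5 ≤ n) (S T : Set (Fin n)) :
    ∃ u v : Fin n, u ≠ v ∧ (u ∈ S ↔ v ∈ S) ∧ (u ∈ T ↔ v ∈ T) := by
  classical
  let f : Fin 5 → Bool × Bool := fun i =>
    (decide ((Fin.castLE hn i) ∈ S), decide ((Fin.castLE hn i) ∈ T))
  obtain ⟨i, j, hij, hfij⟩ := Fintype.exists_ne_map_eq_of_card_lt f (by simp)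
  refine ⟨Fin.castLE hn i, Fin.castLE hn j,
    fun h => hij (Fin.castLE_injective hn h), ?_, ?_⟩
  · exact decide_eq_decide.mp (congrArg Prod.fst hfij)
  · exact decide_eq_decide.mp (congrArg Prod.snd hfij)

lemma disjoint_of_symmDiff_sub {V : Type*} {Z : Set V} {e : Sym2 V}
    (he : e ∈ symmDiff (⊤ : SimpleGraph V).edgeSet (cut Z)) : e ∉ cut Z := by
  rw [Set.mem_symmDiff] at he
  rcases he with ⟨-, h⟩ | ⟨hz, hE⟩
  · exact h
  · exact absurd (cut_sub Z hz) hE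

end Stmt18

lemma Stmt18.symmDiff_empty' {α : Type*} (A : Set α) : symmDiff A ∅ = A := by
  rw [show (∅ : Set α) = ⊥ from rfl, symmDiff_bot]

/-- For `K_n` with `n ≥ 5`, let `M_n'` be the binary matroid on
`E(K_n)` whose circuits are the minimal nonempty elements of the symmetric-difference
closure of the bonds of `K_n` together with the full edge set.  Then the identity is a
nontrivial circuit injection from the bond matroid of `K_n` to `M_n'`: every bond of
`K_n` is a circuit of `M_n'`, but some circuit of `M_n'` is not a bond. -/
theorem stmt_18 (n : ℕ) (hn : 5 ≤ n) :
    (∀ D, IsBond (⊤ : SimpleGraph (Fin n)) D →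
      D ∈ minSD ({D' | IsBond (⊤ : SimpleGraph (Fin n)) D'} ∪
        {(⊤ : SimpleGraph (Fin n)).edgeSet})) ∧
    ∃ C ∈ minSD ({D' | IsBond (⊤ : SimpleGraph (Fin n)) D'} ∪
        {(⊤ : SimpleGraph (Fin n)).edgeSet}),
      ¬ IsBond (⊤ : SimpleGraph (Fin n)) C := by
  haveI : Nonempty (Fin n) := ⟨⟨0, by omega⟩⟩
  constructor
  · -- Part 1
    intro D hD
    obtain ⟨S, hS, hS', rfl⟩ := Stmt18.bond_eq_cut hD
    refine ⟨⟨[Stmt18.cut S], by simp, ?_, (Stmt18.symmDiff_empty' _).symm⟩, ?_, ?_⟩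
    · intro C hC
      rw [List.mem_singleton] at hC
      subst hC
      exact Or.inl hD
    · obtain ⟨u, hu⟩ := hS
      obtain ⟨v, hv⟩ := hS'
      exact fun h => (h ▸ Stmt18.mem_cut.mpr (by tauto) :
        s(u,v) ∈ (∅ : Set (Sym2 (Fin n))))
    · intro B hB hBne hBsub
      obtain ⟨T, hT | hT⟩ := Stmt18.sdClosure_structure hB
      · subst hT
        obtain ⟨hTne, hTne'⟩ := Stmt18.cut_nonempty_witness hBne
        rcases ssubset_or_eq_of_subset hBsub with hss | heq
        · exact absurd (Stmt18.isCut_cut hTne hTne') (hD.2 _ hss)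
        · exact heq
      · exfalso
        obtain ⟨u, v, huv, hSuv, hTuv⟩ := Stmt18.five_pigeon hn S T
        have hmem : s(u,v) ∈ B := by
          rw [hT, Set.mem_symmDiff]
          left
          refine ⟨(SimpleGraph.mem_edgeSet _).mpr ((SimpleGraph.top_adj u v).mpr huv), ?_⟩
          rw [Stmt18.mem_cut]; tauto
        have := Stmt18.mem_cut.mp (hBsub hmem)
        tauto
  · -- Part 2
    set v0 : Fin n := ⟨0, by omega⟩ with hv0
    set v1 : Fin n := ⟨1, by omega⟩ with hv1
    set v2 : Fin n := ⟨2, by omega⟩ with hv2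
    have h01 : v0 ≠ v1 := by simp [hv0, hv1, Fin.ext_iff]
    have h12 : v1 ≠ v2 := by simp [hv1, hv2, Fin.ext_iff]
    have h02 : v0 ≠ v2 := by simp [hv0, hv2, Fin.ext_iff]
    set Z : Set (Fin n) := {v0} with hZ
    set C : Set (Sym2 (Fin n)) :=
      symmDiff (⊤ : SimpleGraph (Fin n)).edgeSet (Stmt18.cut Z) with hC
    have hZbond : IsBond (⊤ : SimpleGraph (Fin n)) (Stmt18.cut Z) :=
      Stmt18.isBond_cut ⟨v0, rfl⟩ ⟨v1, fun h => h01 (h.symm)⟩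
    have hcutZ_sub : ∀ e ∈ C, e ∉ Stmt18.cut Z :=
      fun e he => Stmt18.disjoint_of_symmDiff_sub he
    have hmemZ : ∀ w : Fin n, w ≠ v0 → s(v0, w) ∈ Stmt18.cut Z := by
      intro w hw
      rw [Stmt18.mem_cut]
      simp only [hZ, Set.mem_singleton_iff]
      tauto
    refine ⟨C, ⟨⟨[(⊤ : SimpleGraph (Fin n)).edgeSet, Stmt18.cut Z],
      by simp, ?_, ?_⟩, ?_, ?_⟩, ?_⟩
    · intro C' hC'
      simp only [List.mem_cons, List.mem_singleton, List.not_mem_nil, or_false] at hC'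
      rcases hC' with rfl | rfl
      · exact Or.inr rfl
      · exact Or.inl hZbond
    · simp only [List.foldr_cons, List.foldr_nil, Stmt18.symmDiff_empty']
      exact hC
    · -- C ≠ ∅
      intro hcontra
      have : s(v1, v2) ∈ C := by
        rw [hC, Set.mem_symmDiff]
        left
        refine ⟨(SimpleGraph.mem_edgeSet _).mpr ((SimpleGraph.top_adj v1 v2).mpr h12), ?_⟩
        rw [Stmt18.mem_cut]
        simp only [hZ, Set.mem_singleton_iff]
        have e1 : ¬ v1 = v0 := fun h => h01 h.symm
        have e2 : ¬ v2 = v0 := fun h => h02 h.symm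
        tauto
      rw [hcontra] at this
      exact this
    · -- minimality
      intro B hB hBne hBsub
      obtain ⟨T, hT | hT⟩ := Stmt18.sdClosure_structure hB
      · exfalso
        subst hT
        obtain ⟨e, he⟩ := Set.nonempty_iff_ne_empty.mpr hBne
        induction e using Sym2.ind with
        | _ a b =>
          have hab := Stmt18.mem_cut.mp he
          have key : ∀ p q : Fin n, p ∈ T → q ∉ T → False := by
            intro p q hp hq
            by_cases h0T : v0 ∈ T
            · have hq0 : q ≠ v0 := fun h => hq (h ▸ h0T)
              have h1 : s(v0, q) ∈ Stmt18.cut T := Stmt18.mem_cut.mpr (by tauto)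
              exact hcutZ_sub _ (hBsub h1) (hmemZ q hq0)
            · have hp0 : p ≠ v0 := fun h => h0T (h ▸ hp)
              have h1 : s(v0, p) ∈ Stmt18.cut T := Stmt18.mem_cut.mpr (by tauto)
              exact hcutZ_sub _ (hBsub h1) (hmemZ p hp0)
          by_cases ha : a ∈ T
          · exact key a b ha (by tauto)
          · exact key b a (by tauto) ha
      · -- B = E Δ cut T; show B = C
        have hZT : Stmt18.cut Z ⊆ Stmt18.cut T := by
          intro e heZ
          by_contra heT
          have heE : e ∈ (⊤ : SimpleGraph (Fin n)).edgeSet := Stmt18.cut_sub Z heZ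
          have : e ∈ B := by
            rw [hT, Set.mem_symmDiff]; exact Or.inl ⟨heE, heT⟩
          exact hcutZ_sub _ (hBsub this) heZ
        have hside : ∀ w : Fin n, w ≠ v0 → (v0 ∈ T ↔ w ∉ T) :=
          fun w hw => Stmt18.mem_cut.mp (hZT (hmemZ w hw))
        have hTZ : Stmt18.cut T = Stmt18.cut Z := by
          by_cases h0T : v0 ∈ T
          · have hTeq : T = Z := by
              ext w
              simp only [hZ, Set.mem_singleton_iff]
              constructor
              · intro hwT
                by_contra hw
                exact ((hside w hw).mp h0T) hwT
              · rintro rfl; exact h0T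
            rw [hTeq]
          · have hTeq : T = Zᶜ := by
              ext w
              simp only [hZ, Set.mem_compl_iff, Set.mem_singleton_iff]
              constructor
              · intro hwT hw0; exact h0T (hw0 ▸ hwT)
              · intro hw0
                by_contra hwT
                exact h0T ((hside w hw0).mpr hwT)
            rw [hTeq, Stmt18.cut_compl]
        rw [hT, hTZ]
    · -- not a bond
      rintro ⟨⟨-, hnc⟩, -⟩
      apply hnc
      rw [SimpleGraph.connected_iff]
      refine ⟨?_, ⟨v0⟩⟩
      have hreach : ∀ w : Fin n,
          ((⊤ : SimpleGraph (Fin n)).deleteEdges C).Reachable v0 w := by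
        intro w
        by_cases hw : w = v0
        · subst hw; exact SimpleGraph.Reachable.refl _
        · have hadj : ((⊤ : SimpleGraph (Fin n)).deleteEdges C).Adj v0 w := by
            rw [SimpleGraph.deleteEdges_adj, SimpleGraph.top_adj]
            exact ⟨fun h => hw h.symm, fun hmem => hcutZ_sub _ hmem (hmemZ w hw)⟩
          exact hadj.reachable
      exact fun x y => (hreach x).symm.trans (hreach y)
end

section
/- In a 2-connected graph G, for any circuit C₀ and any edge d not in C₀, there exists a path P in G, edge-disjoint from C₀, containing d, whose two endpoints are distinct vertices of C₀. -/
open SimpleGraph Walk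

section Helpers

variable {V : Type*} {G : SimpleGraph V}

lemma exists_third (h2 : TwoConnected G) (u v : V) : ∃ t, t ≠ u ∧ t ≠ v := by
  obtain ⟨⟨a, b, c, hab, hac, hbc⟩, -⟩ := h2
  by_cases h1 : a ≠ u ∧ a ≠ v
  · exact ⟨a, h1⟩
  by_cases h2' : b ≠ u ∧ b ≠ v
  · exact ⟨b, h2'⟩
  by_cases h3 : c ≠ u ∧ c ≠ v
  · exact ⟨c, h3⟩
  push_neg at h1 h2' h3
  rcases eq_or_ne a u with rfl | hau
  · rcases eq_or_ne b a with rfl | hbu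
    · exact absurd rfl hab
    · have hbv := h2' hbu
      rcases eq_or_ne c a with rfl | hcu
      · exact absurd rfl hac
      · have hcv := h3 hcu
        exact absurd (hbv.trans hcv.symm) hbc
  · have hav := h1 hau
    rcases eq_or_ne b u with rfl | hbu
    · rcases eq_or_ne c b with rfl | hcu
      · exact absurd rfl hbc
      · exact absurd (hav.trans (h3 hcu).symm) hac
    · exact absurd (hav.trans (h2' hbu).symm) hab

lemma lift_walk {s : Set V} {a b : V} (ha : a ∈ s) (hb : b ∈ s)
    (p : (G.induce s).Walk ⟨a, ha⟩ ⟨b, hb⟩) :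
    ∃ q : G.Walk a b, ∀ z ∈ q.support, z ∈ s := by
  refine ⟨(p.map (SimpleGraph.Embedding.induce s).toHom), ?_⟩
  intro z hz
  have hz : z ∈ (p.map (SimpleGraph.Embedding.induce s).toHom).support := hz
  rw [Walk.support_map] at hz
  obtain ⟨⟨z', hz'⟩, _, rfl⟩ := List.mem_map.mp hz
  exact hz'
lemma conn_avoid (h2 : TwoConnected G) (v : V) {a b : V} (ha : a ≠ v) (hb : b ≠ v) :
    ∃ q : G.Walk a b, ∀ z ∈ q.support, z ≠ v := by
  have hr := (h2.2 v).preconnected ⟨a, ha⟩ ⟨b, hb⟩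
  obtain ⟨p⟩ := hr
  exact lift_walk ha hb p

lemma preconn (h2 : TwoConnected G) : G.Preconnected := by
  intro u w'
  obtain ⟨t, htu, htw⟩ := exists_third h2 u w'
  obtain ⟨q, -⟩ := conn_avoid h2 t (Ne.symm htu) (Ne.symm htw)
  exact ⟨q⟩

lemma nbr (h2 : TwoConnected G) {x y : V} (hxy : x ≠ y) : ∃ z, G.Adj x z ∧ z ≠ y := by
  obtain ⟨t, htx, hty⟩ := exists_third h2 x y
  obtain ⟨q, hq⟩ := conn_avoid h2 y hxy hty
  cases q with
  | nil => exact absurd rfl htx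
  | cons h p =>
    refine ⟨_, h, hq _ ?_⟩
    simp [Walk.support_cons]

lemma base (h2 : TwoConnected G) {x y : V} (hxy : G.Adj x y) :
    ∃ R : G.Walk x y, R.IsPath ∧ s(x, y) ∉ R.edges := by
  classical
  obtain ⟨z, hxz, hzy⟩ := nbr h2 hxy.ne
  obtain ⟨q, hq⟩ := conn_avoid h2 x hxz.ne' hxy.ne'
  refine ⟨(Walk.cons hxz q).bypass, Walk.bypass_isPath _, fun hmem => ?_⟩
  have hmem' := Walk.edges_bypass_subset _ hmem
  rw [Walk.edges_cons] at hmem'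
  rcases List.mem_cons.mp hmem' with heq | hq'
  · rw [Sym2.congr_right] at heq
    exact hzy heq.symm
  · exact hq x (Walk.fst_mem_support_of_mem_edges q hq') rfl

lemma hit (P : V → Prop) :
    ∀ {a b : V} (W : G.Walk a b), (∃ u ∈ W.support, P u) →
    ∃ (u : V) (W₁ : G.Walk a u) (W₂ : G.Walk u b), W = W₁.append W₂ ∧ P u ∧
      ∀ z ∈ W₁.support, P z → z = u := by
  intro a b W
  induction W with
  | nil =>
    rintro ⟨u, hu, hPu⟩
    simp only [Walk.support_nil, List.mem_singleton] at hu
    subst hu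
    exact ⟨u, Walk.nil, Walk.nil, rfl, hPu, by simp⟩
  | @cons a c b h W' ih =>
    rintro ⟨u, hu, hPu⟩
    by_cases hPa : P a
    · exact ⟨a, Walk.nil, Walk.cons h W', rfl, hPa, by simp⟩
    · have hu' : u ∈ W'.support := by
        rcases List.mem_cons.mp (by simpa using hu) with rfl | h'
        · exact absurd hPu hPa
        · exact h'
      obtain ⟨u', W₁, W₂, hEq, hPu', hFirst⟩ := ih ⟨u, hu', hPu⟩
      refine ⟨u', Walk.cons h W₁, W₂, by rw [Walk.cons_append, ← hEq], hPu', ?_⟩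
      intro z hz hPz
      rcases List.mem_cons.mp (by simpa using hz) with rfl | h'
      · exact absurd hPz hPa
      · exact hFirst z h' hPz

lemma path_of_append_left {a m b : V} {P₁ : G.Walk a m} {P₂ : G.Walk m b}
    (h : (P₁.append P₂).IsPath) : P₁.IsPath := by
  rw [Walk.isPath_def] at h ⊢
  rw [Walk.support_append] at h
  exact h.of_append_left

lemma path_of_append_right {a m b : V} {P₁ : G.Walk a m} {P₂ : G.Walk m b}
    (h : (P₁.append P₂).IsPath) : P₂.IsPath := by
  rw [Walk.isPath_def] at h ⊢
  rw [Walk.support_append] at h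
  have h1 : P₂.support.tail.Nodup := h.of_append_right
  have h2 : m ∉ P₂.support.tail := fun hm =>
    (List.disjoint_of_nodup_append h) P₁.end_mem_support hm
  rw [P₂.support_eq_cons]
  exact List.nodup_cons.mpr ⟨h2, h1⟩

lemma mid_of_append {a m b : V} {P₁ : G.Walk a m} {P₂ : G.Walk m b}
    (h : (P₁.append P₂).IsPath) : ∀ z, z ∈ P₁.support → z ∈ P₂.support → z = m := by
  intro z hz1 hz2
  rw [Walk.isPath_def, Walk.support_append] at h
  by_contra hne
  have : z ∈ P₂.support.tail := by
    rw [P₂.support_eq_cons] at hz2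
    rcases List.mem_cons.mp hz2 with rfl | h'
    · exact absurd rfl hne
    · exact h'
  exact (List.disjoint_of_nodup_append h) hz1 this

lemma join_isPath {a m b : V} {P₁ : G.Walk a m} {P₂ : G.Walk m b}
    (h₁ : P₁.IsPath) (h₂ : P₂.IsPath)
    (hint : ∀ z ∈ P₁.support, z ∈ P₂.support → z = m) : (P₁.append P₂).IsPath := by
  rw [Walk.isPath_def, Walk.support_append]
  have h2' := (Walk.isPath_def _).mp h₂
  rw [P₂.support_eq_cons] at h2'
  refine List.nodup_append'.mpr ⟨(Walk.isPath_def _).mp h₁, h2'.of_cons, ?_⟩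
  intro z hz hz2
  have hz2' : z ∈ P₂.support := P₂.support_eq_cons ▸ List.mem_cons_of_mem _ hz2
  have hzm := hint z hz hz2'
  subst hzm
  exact (List.nodup_cons.mp h2').1 hz2

lemma core_isPath {x y u₁ u₂ : V} (hxy : G.Adj x y) {U : G.Walk x u₁} {W : G.Walk y u₂}
    (hU : U.IsPath) (hW : W.IsPath) (hdisj : ∀ z ∈ U.support, z ∉ W.support) :
    (U.reverse.append (Walk.cons hxy W)).IsPath := by
  refine join_isPath hU.reverse ?_ ?_
  · rw [Walk.cons_isPath_iff]
    exact ⟨hW, hdisj x U.start_mem_support⟩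
  · intro z hz hz2
    rw [Walk.support_reverse, List.mem_reverse] at hz
    rcases List.mem_cons.mp (by simpa using hz2) with rfl | h'
    · rfl
    · exact absurd h' (hdisj z hz)

lemma edgeok {a b vtx : V} {w : G.Walk vtx vtx} (W' : G.Walk a b) (u : V)
    (h : ∀ z ∈ W'.support, z ∈ w.support → z = u) : ∀ e ∈ W'.edges, e ∉ w.edges := by
  intro e he hew
  induction e with
  | _ a' b' =>
    have ha' := W'.fst_mem_support_of_mem_edges he
    have hb' := W'.snd_mem_support_of_mem_edges he
    have haw := w.fst_mem_support_of_mem_edges hew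
    have hbw := w.snd_mem_support_of_mem_edges hew
    have h1 := h _ ha' haw
    have h2 := h _ hb' hbw
    have hadj : G.Adj a' b' := W'.edges_subset_edgeSet he
    exact hadj.ne (h1.trans h2.symm)

lemma order {x y : V} (R : G.Walk x y) {u v₀ : V} (hu : u ∈ R.support) (hv : v₀ ∈ R.support)
    (huv : u ≠ v₀) :
    ∃ (a b : V) (Q₁ : G.Walk x a) (Q₂ : G.Walk a b) (Q₃ : G.Walk b y),
      R = (Q₁.append Q₂).append Q₃ ∧ ((a = u ∧ b = v₀) ∨ (a = v₀ ∧ b = u)) := by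
  classical
  by_cases h : v₀ ∈ (R.dropUntil u hu).support
  · refine ⟨u, v₀, R.takeUntil u hu, (R.dropUntil u hu).takeUntil v₀ h,
      (R.dropUntil u hu).dropUntil v₀ h, ?_, Or.inl ⟨rfl, rfl⟩⟩
    rw [← Walk.append_assoc, Walk.take_spec, Walk.take_spec]
  · have hv' : v₀ ∈ (R.takeUntil u hu).support := by
      have := R.take_spec hu
      have hsup : R.support = (R.takeUntil u hu).support ++ (R.dropUntil u hu).support.tail := by
        rw [← Walk.support_append, this]
      rw [hsup] at hv
      rcases List.mem_append.mp hv with h' | h'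
      · exact h'
      · exact absurd (List.mem_of_mem_tail h') h
    refine ⟨v₀, u, (R.takeUntil u hu).takeUntil v₀ hv', (R.takeUntil u hu).dropUntil v₀ hv',
      R.dropUntil u hu, ?_, Or.inr ⟨rfl, rfl⟩⟩
    rw [Walk.take_spec, Walk.take_spec]

lemma insert_isPath {x y p q : V} {Q₁ : G.Walk x p} {Q₂ : G.Walk p q} {Q₃ : G.Walk q y}
    {M : G.Walk p q}
    (hP : ((Q₁.append Q₂).append Q₃).IsPath) (hM : M.IsPath) (hpq : p ≠ q)
    (hint : ∀ t ∈ M.support, t ∈ ((Q₁.append Q₂).append Q₃).support → t = p ∨ t = q) :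
    ((Q₁.append M).append Q₃).IsPath := by
  have hsupP : ((Q₁.append Q₂).append Q₃).support
      = Q₁.support ++ (Q₂.support.tail ++ Q₃.support.tail) := by
    rw [Walk.support_append, Walk.support_append, List.append_assoc]
  have hnod := (Walk.isPath_def _).mp hP
  rw [hsupP] at hnod
  obtain ⟨h1, h23, h1d⟩ := List.nodup_append'.mp hnod
  obtain ⟨h2, h3, h23d⟩ := List.nodup_append'.mp h23
  have hMnod := (Walk.isPath_def _).mp hM
  have hMtail := M.support_eq_cons ▸ hMnod
  have hpM : p ∉ M.support.tail := (List.nodup_cons.mp hMtail).1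
  have hMt : M.support.tail.Nodup := (List.nodup_cons.mp hMtail).2
  have hq2 : q ∈ Q₂.support.tail := by
    have := Q₂.end_mem_support
    rw [Q₂.support_eq_cons] at this
    rcases List.mem_cons.mp this with h' | h'
    · exact absurd h'.symm hpq
    · exact h'
  have hsubP : ∀ t, t ∈ Q₁.support ∨ t ∈ Q₂.support.tail ∨ t ∈ Q₃.support.tail →
      t ∈ ((Q₁.append Q₂).append Q₃).support := by
    intro t ht
    rw [hsupP, List.mem_append, List.mem_append]
    tauto
  rw [Walk.isPath_def, Walk.support_append, Walk.support_append, List.append_assoc]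
  refine List.nodup_append'.mpr ⟨h1, List.nodup_append'.mpr ⟨hMt, h3, ?_⟩, ?_⟩
  · -- M.tail disjoint Q₃.tail
    intro t htM ht3
    have := hint t (List.mem_of_mem_tail htM) (hsubP t (Or.inr (Or.inr ht3)))
    rcases this with rfl | rfl
    · exact hpM htM
    · exact h23d hq2 ht3
  · -- Q₁ disjoint (M.tail ++ Q₃.tail)
    intro t ht1 htr
    rcases List.mem_append.mp htr with htM | ht3
    · have := hint t (List.mem_of_mem_tail htM) (hsubP t (Or.inl ht1))
      rcases this with rfl | rfl
      · exact hpM htM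
      · exact h1d ht1 (List.mem_append.mpr (Or.inl hq2))
    · exact h1d ht1 (List.mem_append.mpr (Or.inr ht3))

lemma whitney (h2 : TwoConnected G) {x y : V} (hxy : G.Adj x y) (c : V) :
    ∃ R : G.Walk x y, R.IsPath ∧ s(x, y) ∉ R.edges ∧ c ∈ R.support := by
  classical
  obtain ⟨q0⟩ := preconn h2 y c
  suffices H : ∀ (n : ℕ) (c : V) (q : G.Walk y c), q.length ≤ n →
      ∃ R : G.Walk x y, R.IsPath ∧ s(x, y) ∉ R.edges ∧ c ∈ R.support by
    exact H q0.length c q0 le_rfl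
  intro n
  induction n with
  | zero =>
    intro c q hq
    cases q with
    | nil =>
      obtain ⟨R, hR, hRd⟩ := base h2 hxy
      exact ⟨R, hR, hRd, R.end_mem_support⟩
    | cons h p => simp [Walk.length_cons] at hq
  | succ n ih =>
    intro c q hq
    cases hrev : q.reverse with
    | nil =>
      have : q.length = 0 := by
        have := congrArg Walk.length hrev
        simpa [Walk.length_reverse] using this
      cases q with
      | nil =>
        obtain ⟨R, hR, hRd⟩ := base h2 hxy
        exact ⟨R, hR, hRd, R.end_mem_support⟩
      | cons h p => simp [Walk.length_cons] at this
    | @cons _ c₁ _ hadj q' =>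
      -- hadj : G.Adj c c₁, q' : G.Walk c₁ y
      have hlen : q'.length ≤ n := by
        have := congrArg Walk.length hrev
        rw [Walk.length_reverse, Walk.length_cons] at this
        omega
      obtain ⟨R₁, hR₁p, hR₁d, hc₁⟩ := ih c₁ q'.reverse (by rwa [Walk.length_reverse])
      by_cases hcR : c ∈ R₁.support
      · exact ⟨R₁, hR₁p, hR₁d, hcR⟩
      · have hcne : c ≠ c₁ := hadj.ne
        have hxR : x ∈ R₁.support := R₁.start_mem_support
        have hyR : y ∈ R₁.support := R₁.end_mem_support
        have hcx : c ≠ x := fun h => hcR (h ▸ hxR)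
        have hcy : c ≠ y := fun h => hcR (h ▸ hyR)
        obtain ⟨t₀, ht₀R, ht₀ne⟩ : ∃ t₀, t₀ ∈ R₁.support ∧ t₀ ≠ c₁ := by
          by_cases h : c₁ = x
          · exact ⟨y, hyR, fun hy => hxy.ne (hy.trans h).symm⟩
          · exact ⟨x, hxR, fun hx => h hx.symm⟩
        obtain ⟨W0, hW0⟩ := conn_avoid h2 c₁ hcne ht₀ne
        have hWsub := W0.support_bypass_subset
        obtain ⟨z, W₁, W₂, hdec, hzR, hfirst⟩ := hit (· ∈ R₁.support) W0.bypass
          ⟨t₀, Walk.end_mem_support _, ht₀R⟩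
        have hW₁p : W₁.IsPath := path_of_append_left (hdec ▸ W0.bypass_isPath)
        have hW₁W : ∀ z' ∈ W₁.support, z' ≠ c₁ := by
          intro z' hz'
          apply hW0
          apply hWsub
          rw [hdec, Walk.mem_support_append_iff]
          exact Or.inl hz'
        have hzc₁ : z ≠ c₁ := hW₁W z W₁.end_mem_support
        have hc₁W : c₁ ∉ W₁.support := fun h => hW₁W c₁ h rfl
        have hcW₁ : c ∈ W₁.support := W₁.start_mem_support
        -- the bridging path M₀ : z → c₁ through c
        have hM₀p : (W₁.reverse.concat hadj.symm.symm).IsPath := by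
          rw [Walk.isPath_def, Walk.support_concat, List.nodup_append']
          refine ⟨by rw [Walk.support_reverse]; exact List.nodup_reverse.mpr ((Walk.isPath_def _).mp hW₁p), by simp, ?_⟩
          intro t ht ht2
          rw [List.mem_singleton] at ht2
          subst ht2
          rw [Walk.support_reverse, List.mem_reverse] at ht
          exact hc₁W ht
        set M₀ : G.Walk z c₁ := W₁.reverse.concat hadj.symm.symm with hM₀def
        have hM₀sup : ∀ t ∈ M₀.support, t ∈ W₁.support ∨ t = c₁ := by
          intro t ht
          rw [hM₀def, Walk.support_concat, List.mem_append,
            Walk.support_reverse, List.mem_reverse, List.mem_singleton] at ht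
          exact ht
        have hM₀d : s(x, y) ∉ M₀.edges := by
          intro hmem
          rw [hM₀def, Walk.edges_concat, List.concat_eq_append, List.mem_append,
            List.mem_singleton] at hmem
          rcases hmem with hmem | hmem
          · rw [Walk.edges_reverse, List.mem_reverse] at hmem
            have hx' := W₁.fst_mem_support_of_mem_edges hmem
            have hy' := W₁.snd_mem_support_of_mem_edges hmem
            have := (hfirst x hx' hxR).trans (hfirst y hy' hyR).symm
            exact hxy.ne this
          · rw [Sym2.eq_iff] at hmem
            rcases hmem with ⟨h1', h2'⟩ | ⟨h1', h2'⟩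
            · exact hcx h1'.symm
            · exact hcy h2'.symm
        have hcM₀ : c ∈ M₀.support := by
          rw [hM₀def, Walk.support_concat, List.mem_append,
            Walk.support_reverse, List.mem_reverse]
          exact Or.inl hcW₁
        have hM₀hint : ∀ t ∈ M₀.support, t ∈ R₁.support → t = z ∨ t = c₁ := by
          intro t ht htR
          rcases hM₀sup t ht with h' | h'
          · exact Or.inl (hfirst t h' htR)
          · exact Or.inr h'
        obtain ⟨a, b, Q₁, Q₂, Q₃, hEq, hab⟩ := order R₁ hzR hc₁ hzc₁
        rcases hab with ⟨ha, hb⟩ | ⟨ha, hb⟩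
        · subst ha; subst hb
          refine ⟨(Q₁.append M₀).append Q₃, ?_, ?_, ?_⟩
          · exact insert_isPath (hEq ▸ hR₁p) hM₀p hzc₁
              (fun t ht htP => hM₀hint t ht (hEq ▸ htP))
          · intro hmem
            rw [Walk.edges_append, Walk.edges_append, List.mem_append, List.mem_append] at hmem
            have hRedges : R₁.edges = (Q₁.append Q₂).edges ++ Q₃.edges := by
              rw [← Walk.edges_append, ← hEq]
            rcases hmem with (h' | h') | h'
            · exact hR₁d (by rw [hRedges, Walk.edges_append]; exact
                List.mem_append.mpr (Or.inl (List.mem_append.mpr (Or.inl h'))))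
            · exact hM₀d h'
            · exact hR₁d (by rw [hRedges]; exact List.mem_append.mpr (Or.inr h'))
          · rw [Walk.mem_support_append_iff, Walk.mem_support_append_iff]
            exact Or.inl (Or.inr hcM₀)
        · subst ha; subst hb
          refine ⟨(Q₁.append M₀.reverse).append Q₃, ?_, ?_, ?_⟩
          · refine insert_isPath (hEq ▸ hR₁p) hM₀p.reverse (Ne.symm hzc₁)
              (fun t ht htP => ?_)
            rw [Walk.support_reverse, List.mem_reverse] at ht
            exact (hM₀hint t ht (hEq ▸ htP)).symm
          · intro hmem
            rw [Walk.edges_append, Walk.edges_append, List.mem_append, List.mem_append] at hmem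
            have hRedges : R₁.edges = (Q₁.append Q₂).edges ++ Q₃.edges := by
              rw [← Walk.edges_append, ← hEq]
            rcases hmem with (h' | h') | h'
            · exact hR₁d (by rw [hRedges, Walk.edges_append]; exact
                List.mem_append.mpr (Or.inl (List.mem_append.mpr (Or.inl h'))))
            · rw [Walk.edges_reverse, List.mem_reverse] at h'
              exact hM₀d h'
            · exact hR₁d (by rw [hRedges]; exact List.mem_append.mpr (Or.inr h'))
          · rw [Walk.mem_support_append_iff, Walk.mem_support_append_iff,
              Walk.support_reverse, List.mem_reverse]
            exact Or.inl (Or.inr hcM₀)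

lemma phase {vtx : V} {w : G.Walk vtx vtx} {x y : V} (hxy : G.Adj x y)
    (hd : s(x, y) ∉ w.edges) (R : G.Walk x y) (hR : R.IsPath)
    {c : V} (hc : c ∈ R.support) (hcS : c ∈ w.support) :
    (∃ (u₁ u₂ : V) (p : G.Walk u₁ u₂), u₁ ≠ u₂ ∧ u₁ ∈ w.support ∧ u₂ ∈ w.support ∧
      p.IsPath ∧ s(x, y) ∈ p.edges ∧ ∀ e ∈ p.edges, e ∉ w.edges) ∨
    (∃ c₀, c₀ ∈ w.support ∧ c₀ ∈ R.support ∧ ∀ z ∈ R.support, z ∈ w.support → z = c₀) := by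
  obtain ⟨u₁, A, B, hdecomp, hu₁S, hfirstA⟩ := hit (· ∈ w.support) R ⟨c, hc, hcS⟩
  have hBp : B.IsPath := path_of_append_right (hdecomp ▸ hR)
  have hAp : A.IsPath := path_of_append_left (hdecomp ▸ hR)
  have hu₁B : u₁ ∈ B.reverse.support := by
    rw [Walk.support_reverse, List.mem_reverse]; exact B.start_mem_support
  obtain ⟨u₂, W₁, W₂, hdec2, hu₂S, hfirstW⟩ := hit (· ∈ w.support) B.reverse ⟨u₁, hu₁B, hu₁S⟩
  have hW₁p : W₁.IsPath := path_of_append_left (hdec2 ▸ hBp.reverse)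
  have hu₁A : u₁ ∈ A.support := A.end_mem_support
  have hu₁R : u₁ ∈ R.support := by
    rw [hdecomp, Walk.mem_support_append_iff]; exact Or.inl hu₁A
  by_cases h12 : u₂ = u₁
  · subst h12
    refine Or.inr ⟨u₂, hu₁S, hu₁R, ?_⟩
    have hW₂nil : ∀ z ∈ B.reverse.support, z ∈ w.support → z = u₂ := by
      cases W₂ with
      | nil =>
        rw [hdec2, Walk.append_nil]
        exact hfirstW
      | cons h' q' =>
        exfalso
        have h1 : u₂ ∈ q'.support := q'.end_mem_support
        have hBrev : B.reverse.IsPath := hBp.reverse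
        have := mid_of_append (hdec2 ▸ hBrev) u₂ W₁.end_mem_support
        have hu₂W₂ : u₂ ∈ (Walk.cons h' q').support := by
          rw [Walk.support_cons]; exact List.mem_cons_of_mem _ h1
        have heq := this hu₂W₂
        -- u₂ = u₂ gives no contradiction directly; need nodup argument
        have hnod := (Walk.isPath_def _).mp (hdec2 ▸ hBrev)
        rw [Walk.support_append] at hnod
        have hdisj := List.disjoint_of_nodup_append hnod
        have hu₂tail : u₂ ∈ (Walk.cons h' q').support.tail := by
          rw [Walk.support_cons]; exact h1
        exact hdisj W₁.end_mem_support hu₂tail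
    intro z hz hzS
    rw [hdecomp, Walk.mem_support_append_iff] at hz
    rcases hz with hz | hz
    · exact hfirstA z hz hzS
    · exact hW₂nil z (by rw [Walk.support_reverse, List.mem_reverse]; exact hz) hzS
  · -- two-hit case
    have hdisj : ∀ z ∈ A.support, z ∉ W₁.support := by
      intro z hzA hzW
      have hzB : z ∈ B.support := by
        have : z ∈ B.reverse.support := by
          rw [hdec2, Walk.mem_support_append_iff]; exact Or.inl hzW
        rwa [Walk.support_reverse, List.mem_reverse] at this
      have := mid_of_append (hdecomp ▸ hR) z hzA hzB
      subst this
      exact h12 (hfirstW z hzW hu₁S).symm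
    have hppath := core_isPath hxy hAp hW₁p hdisj
    refine Or.inl ⟨u₁, u₂, A.reverse.append (Walk.cons hxy W₁), Ne.symm h12, hu₁S, hu₂S,
      hppath, ?_, ?_⟩
    · rw [Walk.edges_append, Walk.edges_cons, List.mem_append]
      exact Or.inr (List.mem_cons_self)
    · intro e he
      rw [Walk.edges_append, Walk.edges_cons, Walk.edges_reverse, List.mem_append,
        List.mem_reverse, List.mem_cons] at he
      rcases he with he | he | he
      · exact edgeok A u₁ hfirstA e he
      · subst he; exact hd
      · exact edgeok W₁ u₂ hfirstW e he

lemma two_on_cycle {vtx : V} {w : G.Walk vtx vtx} (hw : w.IsCycle) (c₀ : V) :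
    ∃ s₂, s₂ ∈ w.support ∧ s₂ ≠ c₀ := by
  have hlen : 3 ≤ w.length := hw.three_le_length
  have hlsup : w.support.length = w.length + 1 := w.length_support
  have hmemtail : ∀ z ∈ w.support.tail, z ∈ w.support := by
    intro z hz
    rw [w.support_eq_cons]
    exact List.mem_cons_of_mem _ hz
  have hnd := hw.support_nodup
  rcases h : w.support.tail with _ | ⟨a, rest⟩
  · rw [w.support_eq_cons, h] at hlsup; simp at hlsup
    exact absurd (Walk.nil_iff_eq_nil.mp hlsup) hw.ne_nil
  · rcases h2 : rest with _ | ⟨b, rest'⟩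
    · rw [w.support_eq_cons, h, h2] at hlsup; simp at hlsup; omega
    · subst h2
      rw [h] at hnd
      have hab : a ≠ b := by
        rcases List.nodup_cons.mp hnd with ⟨ha, -⟩
        exact fun hab => ha (hab ▸ List.mem_cons_self)
      by_cases hac : a = c₀
      · refine ⟨b, hmemtail b ?_, fun hbc => hab (by rw [hac, hbc])⟩
        rw [h]; exact List.mem_cons_of_mem _ (List.mem_cons_self)
      · exact ⟨a, hmemtail a (h ▸ List.mem_cons_self), hac⟩

end Helpers

/-- In a 2-connected graph `G`, for any cycle `C₀` and any edge `d`
not on `C₀`, there is a path in `G`, edge-disjoint from `C₀`, containing `d`, whose two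
endpoints are distinct vertices of `C₀`. -/
theorem stmt_19 {V : Type*} (G : SimpleGraph V) (h2 : TwoConnected G)
    (v : V) (w : G.Walk v v) (hw : w.IsCycle)
    (d : Sym2 V) (hd : d ∈ G.edgeSet) (hdC : d ∉ w.edges) :
    ∃ (u₁ u₂ : V) (p : G.Walk u₁ u₂), u₁ ≠ u₂ ∧
      u₁ ∈ w.support ∧ u₂ ∈ w.support ∧
      p.IsPath ∧ d ∈ p.edges ∧ ∀ e ∈ p.edges, e ∉ w.edges := by
  classical
  induction d using Sym2.ind with
  | _ x y =>
  have hxy : G.Adj x y := hd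
  obtain ⟨R, hRp, hRd, hvR⟩ := whitney h2 hxy v
  rcases phase hxy hdC R hRp hvR w.start_mem_support with hgoal | ⟨c₀, hc₀S, hc₀R, hsingle⟩
  · exact hgoal
  obtain ⟨s₂, hs₂S, hs₂ne⟩ := two_on_cycle hw c₀
  obtain ⟨R', hR'p, hR'd, hs₂R'⟩ := whitney h2 hxy s₂
  rcases phase hxy hdC R' hR'p hs₂R' hs₂S with hgoal | ⟨c₀', hc₀'S, hc₀'R, hsingle'⟩
  · exact hgoal
  have hs2eq : s₂ = c₀' := hsingle' s₂ hs₂R' hs₂S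
  subst hs2eq
  -- tentacle phase
  have hs₂R : s₂ ∉ R.support := fun h => hs₂ne (hsingle s₂ h hs₂S)
  set V₀ : G.Walk s₂ x := (R'.takeUntil s₂ hs₂R').reverse with hV₀def
  have hV₀p : V₀.IsPath := (hR'p.takeUntil _).reverse
  have hV₀sub : ∀ z ∈ V₀.support, z ∈ R'.support := by
    intro z hz
    rw [hV₀def, Walk.support_reverse, List.mem_reverse] at hz
    exact R'.support_takeUntil_subset _ hz
  obtain ⟨t, T, T₂, hdecT, htR, hfirstT⟩ := hit (· ∈ R.support) V₀
    ⟨x, V₀.end_mem_support, R.start_mem_support⟩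
  have hTp : T.IsPath := path_of_append_left (hdecT ▸ hV₀p)
  have hTsub : ∀ z ∈ T.support, z ∈ R'.support := by
    intro z hz
    exact hV₀sub z (by rw [hdecT, Walk.mem_support_append_iff]; exact Or.inl hz)
  have htc₀ : t ≠ c₀ := by
    intro h
    subst h
    exact hs₂ne (hsingle' t (hTsub t T.end_mem_support) hc₀S).symm
  have hTedges : ∀ e ∈ T.edges, e ∉ w.edges :=
    edgeok T s₂ (fun z hz hzS => hsingle' z (hTsub z hz) hzS)
  obtain ⟨a, b, B₁, B₂, B₃, hEq, hab⟩ := order R hc₀R htR (fun h => htc₀ h.symm)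
  have hRp' := hEq ▸ hRp
  have hB₁p : B₁.IsPath := (hRp'.of_append_left).of_append_left
  have hB₃p : B₃.IsPath := hRp'.of_append_right
  have hB₁sub : ∀ z ∈ B₁.support, z ∈ R.support := by
    intro z hz
    rw [hEq, Walk.mem_support_append_iff, Walk.mem_support_append_iff]
    exact Or.inl (Or.inl hz)
  have hB₃sub : ∀ z ∈ B₃.support, z ∈ R.support := by
    intro z hz
    rw [hEq, Walk.mem_support_append_iff]
    exact Or.inr hz
  rcases hab with ⟨ha, hb⟩ | ⟨ha, hb⟩
  · subst ha; subst hb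
    -- now c₀ is named a, t is named b;  B₁ : x → a, B₂ : a → b, B₃ : b → y
    have htB₁ : b ∉ B₁.support := by
      intro h
      exact htc₀ (mid_of_append hRp'.of_append_left b h B₂.end_mem_support)
    have hW'p : (B₃.reverse.append T.reverse).IsPath := by
      refine join_isPath hB₃p.reverse hTp.reverse ?_
      intro z hz hz2
      rw [Walk.support_reverse, List.mem_reverse] at hz hz2
      exact hfirstT z hz2 (hB₃sub z hz)
    have hdisj : ∀ z ∈ B₁.support, z ∉ (B₃.reverse.append T.reverse).support := by
      intro z hz hz2
      rw [Walk.mem_support_append_iff, Walk.support_reverse, Walk.support_reverse,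
        List.mem_reverse, List.mem_reverse] at hz2
      rcases hz2 with hz2 | hz2
      · have : z = b := by
          refine mid_of_append hRp' z ?_ hz2
          rw [Walk.mem_support_append_iff]; exact Or.inl hz
        exact htB₁ (this ▸ hz)
      · have : z = b := hfirstT z hz2 (hB₁sub z hz)
        exact htB₁ (this ▸ hz)
    refine ⟨a, s₂, B₁.reverse.append (Walk.cons hxy (B₃.reverse.append T.reverse)),
      fun h => hs₂ne h.symm, hc₀S, hs₂S, core_isPath hxy hB₁p hW'p hdisj, ?_, ?_⟩
    · rw [Walk.edges_append, Walk.edges_cons, List.mem_append]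
      exact Or.inr (List.mem_cons_self)
    · intro e he
      rw [Walk.edges_append, Walk.edges_cons, Walk.edges_append, Walk.edges_reverse,
        Walk.edges_reverse, Walk.edges_reverse, List.mem_append, List.mem_cons,
        List.mem_append, List.mem_reverse, List.mem_reverse, List.mem_reverse] at he
      rcases he with he | he | he | he
      · exact edgeok B₁ a (fun z hz hzS => hsingle z (hB₁sub z hz) hzS) e he
      · subst he; exact hdC
      · exact edgeok B₃ a (fun z hz hzS => hsingle z (hB₃sub z hz) hzS) e he
      · exact hTedges e he
  · subst ha; subst hb
    -- now t is named a, c₀ is named b;  B₁ : x → a, B₂ : a → b, B₃ : b → y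
    have hc₀B₁ : b ∉ B₁.support := by
      intro h
      exact htc₀ (mid_of_append hRp'.of_append_left b h B₂.end_mem_support).symm
    have hdisj' : ∀ z ∈ B₁.support, z ∉ B₃.reverse.support := by
      intro z hz hz2
      rw [Walk.support_reverse, List.mem_reverse] at hz2
      have : z = b := by
        refine mid_of_append hRp' z ?_ hz2
        rw [Walk.mem_support_append_iff]; exact Or.inl hz
      exact hc₀B₁ (this ▸ hz)
    have hcore'p : (B₁.reverse.append (Walk.cons hxy B₃.reverse)).IsPath :=
      core_isPath hxy hB₁p hB₃p.reverse hdisj'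
    have hppath : (T.append (B₁.reverse.append (Walk.cons hxy B₃.reverse))).IsPath := by
      refine join_isPath hTp hcore'p ?_
      intro z hz hz2
      rw [Walk.mem_support_append_iff, Walk.support_reverse, List.mem_reverse,
        Walk.support_cons, Walk.support_reverse] at hz2
      rcases hz2 with hz2 | hz2
      · exact hfirstT z hz (hB₁sub z hz2)
      · rcases List.mem_cons.mp hz2 with rfl | hz2'
        · exact hfirstT z hz R.start_mem_support
        · rw [List.mem_reverse] at hz2'
          exact hfirstT z hz (hB₃sub z hz2')
    refine ⟨s₂, b, T.append (B₁.reverse.append (Walk.cons hxy B₃.reverse)),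
      hs₂ne, hs₂S, hc₀S, hppath, ?_, ?_⟩
    · rw [Walk.edges_append, Walk.edges_append, Walk.edges_cons, List.mem_append,
        List.mem_append]
      exact Or.inr (Or.inr (List.mem_cons_self))
    · intro e he
      rw [Walk.edges_append, Walk.edges_append, Walk.edges_cons, Walk.edges_reverse,
        Walk.edges_reverse, List.mem_append, List.mem_append, List.mem_cons,
        List.mem_reverse, List.mem_reverse] at he
      rcases he with he | he | he | he
      · exact hTedges e he
      · exact edgeok B₁ b (fun z hz hzS => hsingle z (hB₁sub z hz) hzS) e he
      · subst he; exact hdC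
      · exact edgeok B₃ b (fun z hz hzS => hsingle z (hB₃sub z hz) hzS) e he
end
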